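/- arXiv:1810.03353 — 8 statements merged into one kernel-verified Lean document; each statement's English description precedes it below -/
import Mathlib

section
/- Let m : 𝒳 → ℝ be any measurable function and t : {0,1} × 𝒳 → ℝ any measurable function with t(1,X) − t(0,X) ≠ 0 almost surely on {R=1}, such that the integrands below are integrable. Then E[ (−1)^{1−Z} · m(X) · t(Z,X) / ( λ(Z|X) · (t(1,X) − t(0,X)) ) | R = 1 ] = E[ m(X) | R = 1 ]. -/
open MeasureTheory ProbabilityTheory

/-- For any measurable `m : 𝒳 → ℝ` and measurable `t : {0,1} × 𝒳 → ℝ` with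
`t(1,X) - t(0,X) ≠ 0` a.s. on `{R = 1}`, provided the displayed integrands are integrable,
`E[ (−1)^{1−Z} · m(X) · t(Z,X) / ( λ(Z|X) · (t(1,X) − t(0,X)) ) | R = 1 ] = E[ m(X) | R = 1 ]`.
Here `lam x` is a version of `λ(1|x) = P(Z=1 | X=x, R=1)` and `λ(0|x) = 1 - lam x`. -/
theorem stmt_1
    {Ω 𝒳 : Type*} [MeasurableSpace Ω] [MeasurableSpace 𝒳] [StandardBorelSpace 𝒳]
    (P : Measure Ω) [IsProbabilityMeasure P]
    (R Z : Ω → Bool) (X : Ω → 𝒳)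
    (hR : Measurable R) (hZ : Measurable Z) (hX : Measurable X)
    -- q† := P(R=1) ∈ (0,1)
    (hq : 0 < P {ω | R ω = true} ∧ P {ω | R ω = true} < 1)
    -- λ(1|x) := P(Z=1 | X=x, R=1)
    (lam : 𝒳 → ℝ) (hlam_meas : Measurable lam)
    (hlam_ver : (fun ω => lam (X ω)) =ᵐ[P[|{ω | R ω = true}]]
      (P[|{ω | R ω = true}])[(fun ω => if Z ω then (1:ℝ) else 0) |
        MeasurableSpace.comap X inferInstance])
    -- 0 < λ(1|X) < 1 a.s. on {R=1}
    (hlam_pos : ∀ᵐ ω ∂(P[|{ω | R ω = true}]), 0 < lam (X ω) ∧ lam (X ω) < 1)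
    (m : 𝒳 → ℝ) (hm : Measurable m)
    (t : Bool → 𝒳 → ℝ) (ht : Measurable fun p : Bool × 𝒳 => t p.1 p.2)
    (ht_ne : ∀ᵐ ω ∂(P[|{ω | R ω = true}]), t true (X ω) - t false (X ω) ≠ 0)
    (hint : Integrable (fun ω => (if Z ω then (1:ℝ) else -1) * m (X ω) * t (Z ω) (X ω) /
        ((if Z ω then lam (X ω) else 1 - lam (X ω)) * (t true (X ω) - t false (X ω))))
      (P[|{ω | R ω = true}]))
    (hint_m : Integrable (fun ω => m (X ω)) (P[|{ω | R ω = true}])) :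
    ∫ ω, (if Z ω then (1:ℝ) else -1) * m (X ω) * t (Z ω) (X ω) /
        ((if Z ω then lam (X ω) else 1 - lam (X ω)) * (t true (X ω) - t false (X ω)))
      ∂(P[|{ω | R ω = true}])
      = ∫ ω, m (X ω) ∂(P[|{ω | R ω = true}]) := by
  set μ := P[|{ω | R ω = true}] with hμdef
  haveI : IsProbabilityMeasure μ := cond_isProbabilityMeasure hq.1.ne'
  have hle : MeasurableSpace.comap X inferInstance ≤ ‹MeasurableSpace Ω› := hX.comap_le
  haveI : SigmaFinite (μ.trim hle) := by
    haveI : IsFiniteMeasure (μ.trim hle) := isFiniteMeasure_trim hle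
    infer_instance
  have hXm : Measurable[MeasurableSpace.comap X inferInstance] X := Measurable.of_comap_le le_rfl
  -- measurability of components
  have ht1 : Measurable (t true) := ht.comp (measurable_const.prodMk measurable_id)
  have ht0 : Measurable (t false) := ht.comp (measurable_const.prodMk measurable_id)
  set Δ : 𝒳 → ℝ := fun x => t true x - t false x with hΔdef
  set a : 𝒳 → ℝ := fun x => (1:ℝ) * m x * t true x / (lam x * Δ x) with hadef
  set b : 𝒳 → ℝ := fun x => (-1:ℝ) * m x * t false x / ((1 - lam x) * Δ x) with hbdef
  have hΔmeas : Measurable Δ := ht1.sub ht0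
  have ha_meas : Measurable a := ((measurable_const.mul hm).mul ht1).div (hlam_meas.mul hΔmeas)
  have hb_meas : Measurable b := ((measurable_const.mul hm).mul ht0).div
    ((measurable_const.sub hlam_meas).mul hΔmeas)
  set I : Ω → ℝ := fun ω => if Z ω then (1:ℝ) else 0 with hIdef
  have hI_meas : Measurable I := Measurable.ite (hZ (measurableSet_singleton true))
    measurable_const measurable_const
  set φ : Ω → ℝ := fun ω => (if Z ω then (1:ℝ) else -1) * m (X ω) * t (Z ω) (X ω) /
        ((if Z ω then lam (X ω) else 1 - lam (X ω)) * (t true (X ω) - t false (X ω))) with hφdef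
  have hφ_split : ∀ ω, φ ω = I ω * a (X ω) + (1 - I ω) * b (X ω) := by
    intro ω
    by_cases hz : Z ω = true <;> simp [hφdef, hIdef, hadef, hbdef, hΔdef, hz,
      Bool.not_eq_true] at * <;> ring_nf <;> simp [hz]
  -- integrability of the two pieces
  have hIa_eq : ∀ ω, I ω * a (X ω) = I ω * φ ω := by
    intro ω
    by_cases hz : Z ω = true <;> simp [hφdef, hIdef, hadef, hΔdef, hz]
  have hIb_eq : ∀ ω, (1 - I ω) * b (X ω) = (1 - I ω) * φ ω := by
    intro ω
    by_cases hz : Z ω = true <;> simp [hφdef, hIdef, hbdef, hΔdef, hz]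
  have hφ_int : Integrable φ μ := hint
  have hIa_int : Integrable (fun ω => I ω * a (X ω)) μ := by
    have : Integrable (fun ω => I ω * φ ω) μ :=
      hφ_int.bdd_mul (c := 1) hI_meas.aestronglyMeasurable
        (ae_of_all _ fun ω => by by_cases hz : Z ω = true <;> simp [hIdef, hz])
    exact this.congr (ae_of_all _ fun ω => (hIa_eq ω).symm)
  have hIb_int : Integrable (fun ω => (1 - I ω) * b (X ω)) μ := by
    have : Integrable (fun ω => (1 - I ω) * φ ω) μ :=
      hφ_int.bdd_mul (c := 1) ((measurable_const.sub hI_meas)).aestronglyMeasurable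
        (ae_of_all _ fun ω => by by_cases hz : Z ω = true <;> simp [hIdef, hz])
    exact this.congr (ae_of_all _ fun ω => (hIb_eq ω).symm)
  -- key tower lemma
  have key : ∀ (g : 𝒳 → ℝ) (ℓ : 𝒳 → ℝ) (J : Ω → ℝ), Measurable g →
      Integrable J μ →
      (μ[J | MeasurableSpace.comap X inferInstance] =ᵐ[μ] fun ω => ℓ (X ω)) →
      Integrable (fun ω => g (X ω) * J ω) μ →
      (∫ ω, g (X ω) * J ω ∂μ = ∫ ω, g (X ω) * ℓ (X ω) ∂μ) ∧
        Integrable (fun ω => g (X ω) * ℓ (X ω)) μ := by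
    intro g ℓ J hg hJint hJce hgJ
    have hsm : StronglyMeasurable[MeasurableSpace.comap X inferInstance] (fun ω => g (X ω)) :=
      (hg.comp hXm).stronglyMeasurable
    have hgJ' : Integrable ((fun ω => g (X ω)) * J) μ := hgJ
    have h1 := condExp_mul_of_stronglyMeasurable_left hsm hgJ' hJint
    have h2 : μ[(fun ω => g (X ω)) * J | MeasurableSpace.comap X inferInstance] =ᵐ[μ] fun ω => g (X ω) * ℓ (X ω) := by
      refine h1.trans ?_
      filter_upwards [hJce] with ω hω
      simp [Pi.mul_apply, hω]
    constructor
    · calc ∫ ω, g (X ω) * J ω ∂μ = ∫ ω, ((fun ω => g (X ω)) * J) ω ∂μ := rfl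
        _ = ∫ ω, (μ[(fun ω => g (X ω)) * J | MeasurableSpace.comap X inferInstance]) ω ∂μ := (integral_condExp hle).symm
        _ = ∫ ω, g (X ω) * ℓ (X ω) ∂μ := integral_congr_ae h2
    · exact integrable_condExp.congr h2
  -- condexp of I and 1 - I
  have hceI : μ[I | MeasurableSpace.comap X inferInstance] =ᵐ[μ] fun ω => lam (X ω) := hlam_ver.symm
  have hI_int : Integrable I μ := by
    refine Integrable.mono' (integrable_const 1) hI_meas.aestronglyMeasurable ?_
    exact ae_of_all _ fun ω => by by_cases hz : Z ω = true <;> simp [hIdef, hz]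
  have hI1_int : Integrable (fun ω => 1 - I ω) μ := (integrable_const 1).sub hI_int
  have hceI1 : μ[(fun ω => 1 - I ω) | MeasurableSpace.comap X inferInstance] =ᵐ[μ] fun ω => 1 - lam (X ω) := by
    have h1 : μ[(fun ω => 1 - I ω) | MeasurableSpace.comap X inferInstance] =ᵐ[μ] μ[(fun _ => (1:ℝ)) | MeasurableSpace.comap X inferInstance] - μ[I | MeasurableSpace.comap X inferInstance] :=
      condExp_sub (integrable_const 1) hI_int _
    refine h1.trans ?_
    have h2 : μ[(fun _ => (1:ℝ)) | MeasurableSpace.comap X inferInstance] = fun _ => (1:ℝ) := condExp_const hle 1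
    filter_upwards [hceI] with ω hω
    simp [Pi.sub_apply, h2, hω]
  obtain ⟨keya, keya_int⟩ := key a lam I ha_meas hI_int hceI
    (hIa_int.congr (ae_of_all _ fun ω => mul_comm (I ω) (a (X ω))))
  obtain ⟨keyb, keyb_int⟩ := key b (fun x => 1 - lam x) (fun ω => 1 - I ω) hb_meas hI1_int hceI1
    (hIb_int.congr (ae_of_all _ fun ω => mul_comm (1 - I ω) (b (X ω))))
  -- final computation
  have hsum : ∫ ω, φ ω ∂μ = ∫ ω, a (X ω) * lam (X ω) ∂μ + ∫ ω, b (X ω) * (1 - lam (X ω)) ∂μ := by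
    calc ∫ ω, φ ω ∂μ = ∫ ω, (I ω * a (X ω) + (1 - I ω) * b (X ω)) ∂μ :=
          integral_congr_ae (ae_of_all _ hφ_split)
      _ = ∫ ω, I ω * a (X ω) ∂μ + ∫ ω, (1 - I ω) * b (X ω) ∂μ := integral_add hIa_int hIb_int
      _ = ∫ ω, a (X ω) * I ω ∂μ + ∫ ω, b (X ω) * (1 - I ω) ∂μ := by
          simp_rw [mul_comm]
      _ = ∫ ω, a (X ω) * lam (X ω) ∂μ + ∫ ω, b (X ω) * (1 - lam (X ω)) ∂μ := by
          rw [keya, keyb]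
  have hfinal : ∫ ω, a (X ω) * lam (X ω) ∂μ + ∫ ω, b (X ω) * (1 - lam (X ω)) ∂μ
      = ∫ ω, m (X ω) ∂μ := by
    rw [← integral_add keya_int keyb_int]
    refine integral_congr_ae ?_
    filter_upwards [hlam_pos, ht_ne] with ω ⟨h0, h1⟩ hΔ
    have hl0 : lam (X ω) ≠ 0 := ne_of_gt h0
    have hl1 : (1:ℝ) - lam (X ω) ≠ 0 := sub_ne_zero.mpr h1.ne'
    simp only [hadef, hbdef, hΔdef]
    field_simp
    ring
  exact hsum.trans hfinal
end

section
/- (Mean-zero property of the efficient influence function of Theorem 2, evaluated at the truth.) Suppose E(Y | Z, X, R=1) = 𝓗(X)·τ(Z,X) + ω(X) a.s. for measurable functions 𝓗, ω, that P(D=1 | Z,X,R=0) = τ(Z,X) a.s. (propensity score equality), and set Δ := E[𝓗(X) | R=1]. Then E[ μ_eff(O; Δ) ] = 0, where μ_eff(O; Δ) := (−1)^{1−Z} · { (R/q†)·[Y − 𝓗(X)·τ(Z,X) − ω(X)] − ((1−R)/q†)·(π(Z,X)/(1−π(Z,X)))·𝓗(X)·[D − τ(Z,X)] } / ( λ(Z|X)·[τ(1,X)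 − τ(0,X)] ) + (R/q†)·(𝓗(X) − Δ). -/
open MeasureTheory ProbabilityTheory


private lemma aux_mul_zero {Ω : Type*} {m m0 : MeasurableSpace Ω} (μ : Measure Ω)
    [IsProbabilityMeasure μ] (hm : m ≤ m0) {f h : Ω → ℝ} (hf : StronglyMeasurable[m] f)
    (hh : Integrable h μ) (hfh : Integrable (fun ω => f ω * h ω) μ)
    (hcond : μ[h|m] =ᵐ[μ] 0) : ∫ ω, f ω * h ω ∂μ = 0 := by
  have h2 : μ[f * h|m] =ᵐ[μ] 0 := by
    refine (condExp_mul_of_stronglyMeasurable_left hf hfh hh).trans ?_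
    filter_upwards [hcond] with ω hω
    simp [Pi.mul_apply, hω, Pi.zero_apply]
  calc ∫ ω, f ω * h ω ∂μ = ∫ ω, (μ[f * h|m]) ω ∂μ := (integral_condExp hm).symm
    _ = ∫ _ω, (0:ℝ) ∂μ := integral_congr_ae h2
    _ = 0 := integral_zero _ _

/-- Mean-zero property of the efficient influence function at the truth:
If `E(Y | Z, X, R=1) = 𝓗(X)·τ(Z,X) + ω(X)` a.s., `P(D=1 | Z,X,R=0) = τ(Z,X)` a.s.,
and `Δ := E[𝓗(X) | R=1]`, then `E[μ_eff(O; Δ)] = 0`. -/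
theorem stmt_7
    {Ω 𝒳 : Type*} [MeasurableSpace Ω] [MeasurableSpace 𝒳] [StandardBorelSpace 𝒳]
    (P : Measure Ω) [IsProbabilityMeasure P]
    (R Z D : Ω → Bool) (X : Ω → 𝒳) (Y : Ω → ℝ)
    (hR : Measurable R) (hZ : Measurable Z) (hD : Measurable D)
    (hX : Measurable X) (hY : Measurable Y) (hYint : Integrable Y P)
    -- q† := P(R=1) ∈ (0,1)
    (hq : 0 < P {ω | R ω = true} ∧ P {ω | R ω = true} < 1)
    -- λ(1|x) := P(Z=1 | X=x, R=1), with 0 < λ(1|X) < 1 a.s. on {R=1}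
    (lam : 𝒳 → ℝ) (hlam_meas : Measurable lam)
    (hlam_ver : (fun ω => lam (X ω)) =ᵐ[P[|{ω | R ω = true}]]
      (P[|{ω | R ω = true}])[(fun ω => if Z ω then (1:ℝ) else 0) |
        MeasurableSpace.comap X inferInstance])
    (hlam_pos : ∀ᵐ ω ∂(P[|{ω | R ω = true}]), 0 < lam (X ω) ∧ lam (X ω) < 1)
    -- τ(z,x) := P(D=1 | Z=z, X=x, R=1), with τ(1,X) − τ(0,X) ≠ 0 a.s. on {R=1}
    (tau : Bool → 𝒳 → ℝ) (htau_meas : Measurable fun p : Bool × 𝒳 => tau p.1 p.2)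
    (htau_ver : (fun ω => tau (Z ω) (X ω)) =ᵐ[P[|{ω | R ω = true}]]
      (P[|{ω | R ω = true}])[(fun ω => if D ω then (1:ℝ) else 0) |
        MeasurableSpace.comap (fun ω => (Z ω, X ω)) inferInstance])
    (htau_ne : ∀ᵐ ω ∂(P[|{ω | R ω = true}]), tau true (X ω) - tau false (X ω) ≠ 0)
    -- π(z,x) := P(R=1 | Z=z, X=x), with 0 < π(Z,X) < 1 a.s.
    (pi : Bool → 𝒳 → ℝ) (hpi_meas : Measurable fun p : Bool × 𝒳 => pi p.1 p.2)
    (hpi_ver : (fun ω => pi (Z ω) (X ω)) =ᵐ[P]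
      P[(fun ω => if R ω then (1:ℝ) else 0) |
        MeasurableSpace.comap (fun ω => (Z ω, X ω)) inferInstance])
    (hpi_pos : ∀ᵐ ω ∂P, 0 < pi (Z ω) (X ω) ∧ pi (Z ω) (X ω) < 1)
    -- outcome decomposition: E(Y | Z, X, R=1) = 𝓗(X)·τ(Z,X) + ω(X) a.s.
    (Hfun wfun : 𝒳 → ℝ) (hHfun_meas : Measurable Hfun) (hwfun_meas : Measurable wfun)
    (hout : (P[|{ω | R ω = true}])[Y |
        MeasurableSpace.comap (fun ω => (Z ω, X ω)) inferInstance]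
      =ᵐ[P[|{ω | R ω = true}]]
        fun ω => Hfun (X ω) * tau (Z ω) (X ω) + wfun (X ω))
    -- propensity score equality: P(D=1 | Z, X, R=0) = τ(Z,X) a.s.
    (hpse : (fun ω => tau (Z ω) (X ω)) =ᵐ[P[|{ω | R ω = false}]]
      (P[|{ω | R ω = false}])[(fun ω => if D ω then (1:ℝ) else 0) |
        MeasurableSpace.comap (fun ω => (Z ω, X ω)) inferInstance])
    -- integrability of the displayed integrands
    (hHint : Integrable (fun ω => Hfun (X ω)) (P[|{ω | R ω = true}]))
    (hint : Integrable (fun ω =>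
        (if Z ω then (1:ℝ) else -1) *
            ((if R ω then (1:ℝ) else 0) / (P {ω | R ω = true}).toReal *
                (Y ω - Hfun (X ω) * tau (Z ω) (X ω) - wfun (X ω)) -
              (if R ω then (0:ℝ) else 1) / (P {ω | R ω = true}).toReal *
                (pi (Z ω) (X ω) / (1 - pi (Z ω) (X ω))) * Hfun (X ω) *
                ((if D ω then (1:ℝ) else 0) - tau (Z ω) (X ω))) /
            ((if Z ω then lam (X ω) else 1 - lam (X ω)) *
              (tau true (X ω) - tau false (X ω))) +
          (if R ω then (1:ℝ) else 0) / (P {ω | R ω = true}).toReal *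
            (Hfun (X ω) - ∫ ω', Hfun (X ω') ∂(P[|{ω | R ω = true}]))) P) :
    -- conclusion: E[μ_eff(O; Δ)] = 0 with Δ := E[𝓗(X) | R=1]
    ∫ ω,
        ((if Z ω then (1:ℝ) else -1) *
            ((if R ω then (1:ℝ) else 0) / (P {ω | R ω = true}).toReal *
                (Y ω - Hfun (X ω) * tau (Z ω) (X ω) - wfun (X ω)) -
              (if R ω then (0:ℝ) else 1) / (P {ω | R ω = true}).toReal *
                (pi (Z ω) (X ω) / (1 - pi (Z ω) (X ω))) * Hfun (X ω) *
                ((if D ω then (1:ℝ) else 0) - tau (Z ω) (X ω))) /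
            ((if Z ω then lam (X ω) else 1 - lam (X ω)) *
              (tau true (X ω) - tau false (X ω))) +
          (if R ω then (1:ℝ) else 0) / (P {ω | R ω = true}).toReal *
            (Hfun (X ω) - ∫ ω', Hfun (X ω') ∂(P[|{ω | R ω = true}]))) ∂P = 0 := by
  classical
  set s : Set Ω := {ω | R ω = true} with hs_def
  set Δ : ℝ := ∫ ω', Hfun (X ω') ∂(P[|s]) with hΔ_def
  set Φ : Ω → ℝ := fun ω =>
      (if Z ω then (1:ℝ) else -1) *
          ((if R ω then (1:ℝ) else 0) / (P s).toReal *
              (Y ω - Hfun (X ω) * tau (Z ω) (X ω) - wfun (X ω)) -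
            (if R ω then (0:ℝ) else 1) / (P s).toReal *
              (pi (Z ω) (X ω) / (1 - pi (Z ω) (X ω))) * Hfun (X ω) *
              ((if D ω then (1:ℝ) else 0) - tau (Z ω) (X ω))) /
          ((if Z ω then lam (X ω) else 1 - lam (X ω)) *
            (tau true (X ω) - tau false (X ω))) +
        (if R ω then (1:ℝ) else 0) / (P s).toReal * (Hfun (X ω) - Δ) with hΦ_def
  show ∫ ω, Φ ω ∂P = 0
  have hs : MeasurableSet s := hR (measurableSet_singleton true)
  have hs0 : {ω | R ω = false} = sᶜ := by ext ω; simp [hs_def]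
  rw [hs0] at hpse
  have hq0 : P s ≠ 0 := hq.1.ne'
  have hqc0 : P sᶜ ≠ 0 := by
    rw [prob_compl_eq_one_sub hs]
    simp only [ne_eq, tsub_eq_zero_iff_le, not_le]
    exact hq.2
  haveI i1 : IsProbabilityMeasure (P[|s]) := cond_isProbabilityMeasure hq0
  haveI i0 : IsProbabilityMeasure (P[|sᶜ]) := cond_isProbabilityMeasure hqc0
  have hm : MeasurableSpace.comap (fun ω : Ω => (Z ω, X ω)) inferInstance ≤ _ :=
    (hZ.prodMk hX).comap_le
  -- helper: strong measurability w.r.t. the comap σ-algebra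
  have hSM : ∀ {F : Bool × 𝒳 → ℝ}, Measurable F →
      StronglyMeasurable[MeasurableSpace.comap (fun ω : Ω => (Z ω, X ω)) inferInstance]
        (fun ω => F (Z ω, X ω)) := fun {F} hF =>
    (hF.comp (Measurable.of_comap_le le_rfl)).stronglyMeasurable
  -- helper: transfer integrability to conditional measures
  have hcondInt : ∀ {t : Set Ω}, P t ≠ 0 → ∀ {f : Ω → ℝ}, Integrable f P →
      Integrable f (P[|t]) := by
    intro t ht f hf
    show Integrable f ((P t)⁻¹ • P.restrict t)
    exact (hf.restrict).smul_measure (ENNReal.inv_ne_top.mpr ht)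
  -- helper: set integrals vs conditional measures
  have hcondIntegral : ∀ (t : Set Ω), P t ≠ 0 → ∀ (f : Ω → ℝ),
      ∫ ω in t, f ω ∂P = (P t).toReal * ∫ ω, f ω ∂(P[|t]) := by
    intro t ht f
    have h1 : (P t).toReal ≠ 0 := ENNReal.toReal_ne_zero.mpr ⟨ht, measure_ne_top _ _⟩
    rw [show P[|t] = (P t)⁻¹ • P.restrict t from rfl, integral_smul_measure,
      ENNReal.toReal_inv, smul_eq_mul, ← mul_assoc, mul_inv_cancel₀ h1, one_mul]
  -- a.e. membership
  have hae1 : ∀ᵐ ω ∂(P[|s]), R ω = true := Measure.ae_smul_measure (ae_restrict_mem hs) _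
  have hae0 : ∀ᵐ ω ∂(P[|sᶜ]), R ω = false := by
    have h : ∀ᵐ ω ∂(P[|sᶜ]), ω ∈ sᶜ := Measure.ae_smul_measure (ae_restrict_mem hs.compl) _
    filter_upwards [h] with ω hω
    simpa [hs_def] using hω
  -- measurability of building blocks
  have hb : MeasurableSet {p : Bool × 𝒳 | p.1 = true} :=
    measurable_fst (measurableSet_singleton true)
  have htaub : ∀ b : Bool, Measurable fun p : Bool × 𝒳 => tau b p.2 := fun b =>
    htau_meas.comp (measurable_const.prodMk measurable_snd)
  have hdenom : Measurable fun p : Bool × 𝒳 =>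
      (if p.1 then lam p.2 else 1 - lam p.2) * (tau true p.2 - tau false p.2) :=
    (Measurable.ite hb (hlam_meas.comp measurable_snd)
        (measurable_const.sub (hlam_meas.comp measurable_snd))).mul
        ((htaub true).sub (htaub false))
  ------------------------------------------------------------------
  -- Part 1 : the integral over the conditional measure P[|s] is 0
  ------------------------------------------------------------------
  have hΦint1 : Integrable Φ (P[|s]) := hcondInt hq0 hint
  have hYint1 : Integrable Y (P[|s]) := hcondInt hq0 hYint
  have hreg1 : Integrable (fun ω => Hfun (X ω) * tau (Z ω) (X ω) + wfun (X ω)) (P[|s]) :=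
    integrable_condExp.congr hout
  have hh1int : Integrable
      (fun ω => Y ω - (Hfun (X ω) * tau (Z ω) (X ω) + wfun (X ω))) (P[|s]) :=
    hYint1.sub hreg1
  have hcond1 : (P[|s])[(fun ω => Y ω - (Hfun (X ω) * tau (Z ω) (X ω) + wfun (X ω)))|
      MeasurableSpace.comap (fun ω => (Z ω, X ω)) inferInstance] =ᵐ[P[|s]] 0 := by
    have hself : (P[|s])[(fun ω => Hfun (X ω) * tau (Z ω) (X ω) + wfun (X ω))|
        MeasurableSpace.comap (fun ω => (Z ω, X ω)) inferInstance]
        = fun ω => Hfun (X ω) * tau (Z ω) (X ω) + wfun (X ω) :=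
      condExp_of_stronglyMeasurable hm
        (hSM (((hHfun_meas.comp measurable_snd).mul htau_meas).add
          (hwfun_meas.comp measurable_snd))) hreg1
    calc (P[|s])[(fun ω => Y ω - (Hfun (X ω) * tau (Z ω) (X ω) + wfun (X ω)))|
          MeasurableSpace.comap (fun ω => (Z ω, X ω)) inferInstance]
        =ᵐ[P[|s]] (P[|s])[Y|MeasurableSpace.comap (fun ω => (Z ω, X ω)) inferInstance]
            - (P[|s])[(fun ω => Hfun (X ω) * tau (Z ω) (X ω) + wfun (X ω))|
              MeasurableSpace.comap (fun ω => (Z ω, X ω)) inferInstance] :=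
          condExp_sub hYint1 hreg1 _
      _ =ᵐ[P[|s]] 0 := by
          rw [hself]
          filter_upwards [hout] with ω hω
          simp [Pi.sub_apply, hω]
  have hg1SM : StronglyMeasurable[MeasurableSpace.comap (fun ω : Ω => (Z ω, X ω)) inferInstance]
      (fun ω => (if Z ω then (1:ℝ) else -1) / (P s).toReal /
        ((if Z ω then lam (X ω) else 1 - lam (X ω)) *
          (tau true (X ω) - tau false (X ω)))) :=
    hSM (((Measurable.ite hb measurable_const measurable_const).div measurable_const).div hdenom)
  have hc1int : Integrable (fun ω => (Hfun (X ω) - Δ) / (P s).toReal) (P[|s]) :=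
    (hHint.sub (integrable_const Δ)).div_const _
  have hΦeq1 : Φ =ᵐ[P[|s]] fun ω =>
      ((if Z ω then (1:ℝ) else -1) / (P s).toReal /
          ((if Z ω then lam (X ω) else 1 - lam (X ω)) *
            (tau true (X ω) - tau false (X ω)))) *
        (Y ω - (Hfun (X ω) * tau (Z ω) (X ω) + wfun (X ω))) +
      (Hfun (X ω) - Δ) / (P s).toReal := by
    filter_upwards [hae1] with ω hω
    cases hz : Z ω <;> simp [hΦ_def, hω, hz] <;> ring
  have hg1h1int : Integrable (fun ω =>
      ((if Z ω then (1:ℝ) else -1) / (P s).toReal /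
          ((if Z ω then lam (X ω) else 1 - lam (X ω)) *
            (tau true (X ω) - tau false (X ω)))) *
        (Y ω - (Hfun (X ω) * tau (Z ω) (X ω) + wfun (X ω)))) (P[|s]) := by
    refine (hΦint1.sub hc1int).congr ?_
    filter_upwards [hΦeq1] with ω hω
    simp only [Pi.sub_apply]
    rw [hω]
    ring
  have int1 : ∫ ω, Φ ω ∂(P[|s]) = 0 := by
    have hA := aux_mul_zero (P[|s]) hm hg1SM hh1int hg1h1int hcond1
    have hC : ∫ ω, (Hfun (X ω) - Δ) / (P s).toReal ∂(P[|s]) = 0 := by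
      rw [integral_div, integral_sub hHint (integrable_const Δ), integral_const]
      simp [hΔ_def]
    rw [integral_congr_ae hΦeq1, integral_add hg1h1int hc1int, hA, hC, add_zero]
  ------------------------------------------------------------------
  -- Part 0 : the integral over the conditional measure P[|sᶜ] is 0
  ------------------------------------------------------------------
  have hDint0 : Integrable (fun ω => if D ω then (1:ℝ) else 0) (P[|sᶜ]) := by
    refine Integrable.mono' (integrable_const (1:ℝ))
      ((Measurable.ite (hD (measurableSet_singleton true)) measurable_const
        measurable_const).aestronglyMeasurable) ?_
    filter_upwards with ω
    by_cases h : D ω <;> simp [h]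
  have htauint0 : Integrable (fun ω => tau (Z ω) (X ω)) (P[|sᶜ]) :=
    integrable_condExp.congr hpse.symm
  have hh0int : Integrable
      (fun ω => (if D ω then (1:ℝ) else 0) - tau (Z ω) (X ω)) (P[|sᶜ]) :=
    hDint0.sub htauint0
  have hcond0 : (P[|sᶜ])[(fun ω => (if D ω then (1:ℝ) else 0) - tau (Z ω) (X ω))|
      MeasurableSpace.comap (fun ω => (Z ω, X ω)) inferInstance] =ᵐ[P[|sᶜ]] 0 := by
    have hself : (P[|sᶜ])[(fun ω => tau (Z ω) (X ω))|
        MeasurableSpace.comap (fun ω => (Z ω, X ω)) inferInstance]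
        = fun ω => tau (Z ω) (X ω) :=
      condExp_of_stronglyMeasurable hm (hSM htau_meas) htauint0
    calc (P[|sᶜ])[(fun ω => (if D ω then (1:ℝ) else 0) - tau (Z ω) (X ω))|
          MeasurableSpace.comap (fun ω => (Z ω, X ω)) inferInstance]
        =ᵐ[P[|sᶜ]] (P[|sᶜ])[(fun ω => if D ω then (1:ℝ) else 0)|
            MeasurableSpace.comap (fun ω => (Z ω, X ω)) inferInstance]
            - (P[|sᶜ])[(fun ω => tau (Z ω) (X ω))|
              MeasurableSpace.comap (fun ω => (Z ω, X ω)) inferInstance] :=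
          condExp_sub hDint0 htauint0 _
      _ =ᵐ[P[|sᶜ]] 0 := by
          rw [hself]
          filter_upwards [hpse] with ω hω
          simp [Pi.sub_apply, ← hω]
  have hg0SM : StronglyMeasurable[MeasurableSpace.comap (fun ω : Ω => (Z ω, X ω)) inferInstance]
      (fun ω => -((if Z ω then (1:ℝ) else -1) / (P s).toReal *
          (pi (Z ω) (X ω) / (1 - pi (Z ω) (X ω))) * Hfun (X ω) /
        ((if Z ω then lam (X ω) else 1 - lam (X ω)) *
          (tau true (X ω) - tau false (X ω))))) :=
    hSM ((((((Measurable.ite hb measurable_const measurable_const).div measurable_const).mul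
      (hpi_meas.div (measurable_const.sub hpi_meas))).mul
      (hHfun_meas.comp measurable_snd)).div hdenom).neg)
  have hΦeq0 : Φ =ᵐ[P[|sᶜ]] fun ω =>
      (-((if Z ω then (1:ℝ) else -1) / (P s).toReal *
          (pi (Z ω) (X ω) / (1 - pi (Z ω) (X ω))) * Hfun (X ω) /
        ((if Z ω then lam (X ω) else 1 - lam (X ω)) *
          (tau true (X ω) - tau false (X ω))))) *
        ((if D ω then (1:ℝ) else 0) - tau (Z ω) (X ω)) := by
    filter_upwards [hae0] with ω hω
    cases hz : Z ω <;> simp [hΦ_def, hω, hz] <;> ring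
  have hg0h0int : Integrable (fun ω =>
      (-((if Z ω then (1:ℝ) else -1) / (P s).toReal *
          (pi (Z ω) (X ω) / (1 - pi (Z ω) (X ω))) * Hfun (X ω) /
        ((if Z ω then lam (X ω) else 1 - lam (X ω)) *
          (tau true (X ω) - tau false (X ω))))) *
        ((if D ω then (1:ℝ) else 0) - tau (Z ω) (X ω))) (P[|sᶜ]) :=
    (hcondInt hqc0 hint).congr hΦeq0
  have int0 : ∫ ω, Φ ω ∂(P[|sᶜ]) = 0 := by
    rw [integral_congr_ae hΦeq0]
    exact aux_mul_zero (P[|sᶜ]) hm hg0SM hh0int hg0h0int hcond0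
  ------------------------------------------------------------------
  -- combine
  ------------------------------------------------------------------
  rw [← integral_add_compl hs hint, hcondIntegral s hq0 Φ, hcondIntegral sᶜ hqc0 Φ,
    int1, int0, mul_zero, mul_zero, add_zero]
end

section
/- (Multiple robustness of the efficient influence function, case 𝓜₁: instrument density and treatment propensity score correct, all other working models arbitrary.) Suppose E(Y | Z, X, R=1) = 𝓗(X)·τ(Z,X) + ω(X) a.s. for some measurable functions 𝓗, ω, that P(D=1 | Z,X,R=0) = τ(Z,X) a.s. (propensity score equality), and set Δ := E[𝓗(X) | R=1]. Let H̄, ω̄ : 𝒳 → ℝ be arbitrary measurable functions and π̄ : {0,1}×𝒳 → (0,1) an arbitrary measurable function (all displayed integrands integrable). Then E[ (−1)^{1−Z} · { (R/q†)·[Y − H̄(X)·τ(Z,X) − ω̄(X)] − ((1−R)/q†)·(π̄(Z,X)/(1−π̄(Z,X)))·H̄(X)·[D − τ(Z,X)] } / ( λ(Z|X)·[τ(1,X) − τ(0,X)] ) + (R/q†)·(H̄(X) − Δ) ] = 0. -/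
open MeasureTheory ProbabilityTheory

lemma meas_bool_prod {𝒳 : Type*} [MeasurableSpace 𝒳] {f : Bool → 𝒳 → ℝ}
    (hf : ∀ b, Measurable (f b)) :
    Measurable fun p : Bool × 𝒳 => f p.1 p.2 := by
  have h : (fun p : Bool × 𝒳 => f p.1 p.2) =
      fun p : Bool × 𝒳 => if p.1 = true then f true p.2 else f false p.2 := by
    funext p; rcases p with ⟨b, x⟩; cases b <;> rfl
  rw [h]
  exact Measurable.ite (measurable_fst (measurableSet_singleton true))
    ((hf true).comp measurable_snd) ((hf false).comp measurable_snd)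

/-- Generalized pull-out property: `E[a·Y₀ + d | m] = a·E[Y₀|m] + d` for `m`-measurable
`a`, `d`, assuming only integrability of `Y₀` and of the full combination. -/
lemma pull_out {Ω : Type*} {m m0 : MeasurableSpace Ω} (hm : m ≤ m0) {μ : Measure Ω}
    [IsFiniteMeasure μ] {a d Y₀ : Ω → ℝ}
    (ha : Measurable[m] a) (hd : Measurable[m] d) (hY : Integrable Y₀ μ)
    (hf : Integrable (fun ω => a ω * Y₀ ω + d ω) μ) :
    μ[fun ω => a ω * Y₀ ω + d ω | m] =ᵐ[μ]
      fun ω => a ω * (μ[Y₀ | m]) ω + d ω := by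
  classical
  have key : ∀ n : ℕ, ∀ᵐ ω ∂μ,
      ω ∈ (a ⁻¹' Set.Icc (-(n : ℝ)) n ∩ d ⁻¹' Set.Icc (-(n : ℝ)) n) →
      (μ[fun ω => a ω * Y₀ ω + d ω | m]) ω = a ω * (μ[Y₀ | m]) ω + d ω := by
    intro n
    set s : Set Ω := a ⁻¹' Set.Icc (-(n : ℝ)) n ∩ d ⁻¹' Set.Icc (-(n : ℝ)) n with hs_def
    have hs1 : MeasurableSet[m] (a ⁻¹' Set.Icc (-(n : ℝ)) n) := ha measurableSet_Icc
    have hs2 : MeasurableSet[m] (d ⁻¹' Set.Icc (-(n : ℝ)) n) := hd measurableSet_Icc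
    have hs : MeasurableSet[m] s := @MeasurableSet.inter Ω m _ _ hs1 hs2
    set χ : Ω → ℝ := s.indicator (fun _ => (1 : ℝ)) with hχdef
    have hχm : StronglyMeasurable[m] χ := stronglyMeasurable_const.indicator hs
    have hχ01 : ∀ ω, χ ω = if ω ∈ s then (1 : ℝ) else 0 := fun ω => Set.indicator_apply _ _ _
    have hmeasχ : Measurable χ := hχm.measurable.mono hm le_rfl
    -- integrability of the pieces
    have hint1 : Integrable ((χ * a) * Y₀) μ := by
      refine Integrable.bdd_mul (c := (n : ℝ)) hY
        ((hmeasχ.mul (ha.mono hm le_rfl)).aestronglyMeasurable) (ae_of_all _ fun ω => ?_)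
      rw [Pi.mul_apply, Real.norm_eq_abs, abs_mul, hχ01]
      by_cases hmem : ω ∈ s
      · simp only [hmem, if_pos, abs_one, one_mul]; exact abs_le.mpr hmem.1
      · simp [hmem]
    have hint2 : Integrable (χ * d) μ := by
      refine (integrable_const ((n : ℝ))).mono'
        ((hmeasχ.mul (hd.mono hm le_rfl)).aestronglyMeasurable) (ae_of_all _ fun ω => ?_)
      rw [Pi.mul_apply, Real.norm_eq_abs, abs_mul, hχ01]
      by_cases hmem : ω ∈ s
      · simp only [hmem, if_pos, abs_one, one_mul]; exact abs_le.mpr hmem.2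
      · simp [hmem]
    have hintχF : Integrable (χ * fun ω => a ω * Y₀ ω + d ω) μ := by
      have heq : (χ * fun ω => a ω * Y₀ ω + d ω)
          = s.indicator (fun ω => a ω * Y₀ ω + d ω) := by
        funext ω
        by_cases hmem : ω ∈ s
        · simp [Pi.mul_apply, hχ01, hmem, Set.indicator_of_mem hmem]
        · simp [Pi.mul_apply, hχ01, hmem, Set.indicator_of_notMem hmem]
      rw [heq]
      exact hf.indicator (hm s hs)
    -- conditional expectation identities
    have e1 := condExp_mul_of_stronglyMeasurable_left hχm hintχF hf
    have ebridge : μ[χ * fun ω => a ω * Y₀ ω + d ω | m]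
        =ᵐ[μ] μ[(χ * a) * Y₀ + χ * d | m] := by
      refine condExp_congr_ae (ae_of_all _ fun ω => ?_)
      simp only [Pi.mul_apply, Pi.add_apply]
      ring
    have e3 := condExp_add (μ := μ) (m := m) hint1 hint2
    have e4 := condExp_mul_of_stronglyMeasurable_left (hχm.mul ha.stronglyMeasurable) hint1 hY
    have e5 := condExp_of_stronglyMeasurable hm (hχm.mul hd.stronglyMeasurable) hint2
    filter_upwards [e1, ebridge, e3, e4] with ω h1 hb h3 h4
    intro hmem
    have hχ1 : χ ω = 1 := by rw [hχ01]; simp [hmem]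
    have heq := (h1.symm.trans (hb.trans h3))
    rw [Pi.add_apply, h4, e5] at heq
    simp only [Pi.mul_apply] at heq
    rw [hχ1] at heq
    simpa using heq
  have hall := ae_all_iff.mpr key
  filter_upwards [hall] with ω hω
  have h1 : |a ω| ≤ ((⌈max |a ω| |d ω|⌉₊ : ℕ) : ℝ) := le_trans (le_max_left _ _) (Nat.le_ceil _)
  have h2 : |d ω| ≤ ((⌈max |a ω| |d ω|⌉₊ : ℕ) : ℝ) := le_trans (le_max_right _ _) (Nat.le_ceil _)
  exact hω _ ⟨abs_le.mp h1, abs_le.mp h2⟩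

set_option maxHeartbeats 1600000 in
/-- Multiple robustness, case 𝓜₁: instrument density and treatment propensity
score are correct, while the working models `H̄`, `ω̄`, `π̄` are arbitrary. Then the efficient
influence function evaluated at these working models has mean zero. -/
theorem stmt_8
    {Ω 𝒳 : Type*} [MeasurableSpace Ω] [MeasurableSpace 𝒳] [StandardBorelSpace 𝒳]
    (P : Measure Ω) [IsProbabilityMeasure P]
    (R Z D : Ω → Bool) (X : Ω → 𝒳) (Y : Ω → ℝ)
    (hR : Measurable R) (hZ : Measurable Z) (hD : Measurable D)
    (hX : Measurable X) (hY : Measurable Y) (hYint : Integrable Y P)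
    -- q† := P(R=1) ∈ (0,1)
    (hq : 0 < P {ω | R ω = true} ∧ P {ω | R ω = true} < 1)
    -- λ(1|x) := P(Z=1 | X=x, R=1), with 0 < λ(1|X) < 1 a.s. on {R=1}
    (lam : 𝒳 → ℝ) (hlam_meas : Measurable lam)
    (hlam_ver : (fun ω => lam (X ω)) =ᵐ[P[|{ω | R ω = true}]]
      (P[|{ω | R ω = true}])[(fun ω => if Z ω then (1:ℝ) else 0) |
        MeasurableSpace.comap X inferInstance])
    (hlam_pos : ∀ᵐ ω ∂(P[|{ω | R ω = true}]), 0 < lam (X ω) ∧ lam (X ω) < 1)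
    -- τ(z,x) := P(D=1 | Z=z, X=x, R=1), with τ(1,X) − τ(0,X) ≠ 0 a.s. on {R=1}
    (tau : Bool → 𝒳 → ℝ) (htau_meas : Measurable fun p : Bool × 𝒳 => tau p.1 p.2)
    (htau_ver : (fun ω => tau (Z ω) (X ω)) =ᵐ[P[|{ω | R ω = true}]]
      (P[|{ω | R ω = true}])[(fun ω => if D ω then (1:ℝ) else 0) |
        MeasurableSpace.comap (fun ω => (Z ω, X ω)) inferInstance])
    (htau_ne : ∀ᵐ ω ∂(P[|{ω | R ω = true}]), tau true (X ω) - tau false (X ω) ≠ 0)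
    -- true outcome decomposition: E(Y | Z, X, R=1) = 𝓗(X)·τ(Z,X) + ω(X) a.s.
    (Hfun wfun : 𝒳 → ℝ) (hHfun_meas : Measurable Hfun) (hwfun_meas : Measurable wfun)
    (hout : (P[|{ω | R ω = true}])[Y |
        MeasurableSpace.comap (fun ω => (Z ω, X ω)) inferInstance]
      =ᵐ[P[|{ω | R ω = true}]]
        fun ω => Hfun (X ω) * tau (Z ω) (X ω) + wfun (X ω))
    -- propensity score equality: P(D=1 | Z, X, R=0) = τ(Z,X) a.s.
    (hpse : (fun ω => tau (Z ω) (X ω)) =ᵐ[P[|{ω | R ω = false}]]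
      (P[|{ω | R ω = false}])[(fun ω => if D ω then (1:ℝ) else 0) |
        MeasurableSpace.comap (fun ω => (Z ω, X ω)) inferInstance])
    -- arbitrary measurable working models H̄, ω̄ : 𝒳 → ℝ and π̄ : {0,1}×𝒳 → (0,1)
    (Hbar wbar : 𝒳 → ℝ) (hHbar_meas : Measurable Hbar) (hwbar_meas : Measurable wbar)
    (pibar : Bool → 𝒳 → ℝ) (hpibar_meas : Measurable fun p : Bool × 𝒳 => pibar p.1 p.2)
    (hpibar_range : ∀ z x, 0 < pibar z x ∧ pibar z x < 1)
    -- integrability of the displayed integrands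
    (hHint : Integrable (fun ω => Hfun (X ω)) (P[|{ω | R ω = true}]))
    (hint : Integrable (fun ω =>
        (if Z ω then (1:ℝ) else -1) *
            ((if R ω then (1:ℝ) else 0) / (P {ω | R ω = true}).toReal *
                (Y ω - Hbar (X ω) * tau (Z ω) (X ω) - wbar (X ω)) -
              (if R ω then (0:ℝ) else 1) / (P {ω | R ω = true}).toReal *
                (pibar (Z ω) (X ω) / (1 - pibar (Z ω) (X ω))) * Hbar (X ω) *
                ((if D ω then (1:ℝ) else 0) - tau (Z ω) (X ω))) /
            ((if Z ω then lam (X ω) else 1 - lam (X ω)) *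
              (tau true (X ω) - tau false (X ω))) +
          (if R ω then (1:ℝ) else 0) / (P {ω | R ω = true}).toReal *
            (Hbar (X ω) - ∫ ω', Hfun (X ω') ∂(P[|{ω | R ω = true}]))) P) :
    -- conclusion: mean zero, with Δ := E[𝓗(X) | R=1]
    ∫ ω,
        ((if Z ω then (1:ℝ) else -1) *
            ((if R ω then (1:ℝ) else 0) / (P {ω | R ω = true}).toReal *
                (Y ω - Hbar (X ω) * tau (Z ω) (X ω) - wbar (X ω)) -
              (if R ω then (0:ℝ) else 1) / (P {ω | R ω = true}).toReal *
                (pibar (Z ω) (X ω) / (1 - pibar (Z ω) (X ω))) * Hbar (X ω) *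
                ((if D ω then (1:ℝ) else 0) - tau (Z ω) (X ω))) /
            ((if Z ω then lam (X ω) else 1 - lam (X ω)) *
              (tau true (X ω) - tau false (X ω))) +
          (if R ω then (1:ℝ) else 0) / (P {ω | R ω = true}).toReal *
            (Hbar (X ω) - ∫ ω', Hfun (X ω') ∂(P[|{ω | R ω = true}]))) ∂P = 0 := by
  classical
  set A : Set Ω := {ω | R ω = true} with hA_def
  set B : Set Ω := {ω | R ω = false} with hB_def
  set μ1 : Measure Ω := P[|A] with hμ1_def
  set μ0 : Measure Ω := P[|B] with hμ0_def
  set q : ℝ := (P A).toReal with hq_def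
  set Δ : ℝ := ∫ ω', Hfun (X ω') ∂μ1 with hΔ_def
  have hA : MeasurableSet A := hR (measurableSet_singleton true)
  have hB : MeasurableSet B := hR (measurableSet_singleton false)
  have hBA : B = Aᶜ := by
    ext ω; simp [hA_def, hB_def]
  have hPA0 : P A ≠ 0 := hq.1.ne'
  have hPAtop : P A ≠ ⊤ := measure_ne_top P A
  have hq_pos : 0 < q := ENNReal.toReal_pos hPA0 hPAtop
  have hq_ne : q ≠ 0 := hq_pos.ne'
  have hPB0 : P B ≠ 0 := by
    rw [hBA, prob_compl_eq_one_sub hA]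
    exact (tsub_pos_of_lt hq.2).ne'
  have hPBtop : P B ≠ ⊤ := measure_ne_top P B
  haveI hpm1 : IsProbabilityMeasure μ1 := by
    rw [hμ1_def]; exact cond_isProbabilityMeasure hPA0
  haveI hpm0 : IsProbabilityMeasure μ0 := by
    rw [hμ0_def]; exact cond_isProbabilityMeasure hPB0
  have hae1 : ∀ᵐ ω ∂μ1, R ω = true := by
    rw [hμ1_def]
    refine ae_iff.mpr ?_
    have h : {ω | ¬ R ω = true} = Aᶜ := by ext ω; simp [hA_def]
    rw [h, cond_apply hA, Set.inter_compl_self, measure_empty, mul_zero]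
  have hae0 : ∀ᵐ ω ∂μ0, R ω = false := by
    rw [hμ0_def]
    refine ae_iff.mpr ?_
    have h : {ω | ¬ R ω = false} = Bᶜ := by ext ω; simp [hB_def]
    rw [h, cond_apply hB, Set.inter_compl_self, measure_empty, mul_zero]
  have htrans1 : ∀ {f : Ω → ℝ}, Integrable f P → Integrable f μ1 := by
    intro f hf
    rw [hμ1_def]
    exact (hf.restrict).smul_measure (ENNReal.inv_ne_top.mpr hPA0)
  have htrans0 : ∀ {f : Ω → ℝ}, Integrable f P → Integrable f μ0 := by
    intro f hf
    rw [hμ0_def]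
    exact (hf.restrict).smul_measure (ENNReal.inv_ne_top.mpr hPB0)
  -- the integrand
  set Fn : Ω → ℝ := fun ω =>
      (if Z ω then (1:ℝ) else -1) *
          ((if R ω then (1:ℝ) else 0) / q * (Y ω - Hbar (X ω) * tau (Z ω) (X ω) - wbar (X ω)) -
            (if R ω then (0:ℝ) else 1) / q * (pibar (Z ω) (X ω) / (1 - pibar (Z ω) (X ω))) *
              Hbar (X ω) * ((if D ω then (1:ℝ) else 0) - tau (Z ω) (X ω))) /
          ((if Z ω then lam (X ω) else 1 - lam (X ω)) * (tau true (X ω) - tau false (X ω))) +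
        (if R ω then (1:ℝ) else 0) / q * (Hbar (X ω) - Δ) with hFn_def
  -- σ-algebras
  have hm := Measurable.comap_le (hZ.prodMk hX)
  have hm' := Measurable.comap_le hX
  have hpairm : Measurable[(MeasurableSpace.comap (fun ω => (Z ω, X ω)) inferInstance)] (fun ω => (Z ω, X ω)) := Measurable.of_comap_le le_rfl
  have hXm' : Measurable[(MeasurableSpace.comap X inferInstance)] X := Measurable.of_comap_le le_rfl
  have htau_b : ∀ b : Bool, Measurable (tau b) :=
    fun b => htau_meas.comp (measurable_const.prodMk measurable_id)
  have hpibar_b : ∀ b : Bool, Measurable (pibar b) :=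
    fun b => hpibar_meas.comp (measurable_const.prodMk measurable_id)
  -- auxiliary functions for the R = 1 part
  set A1 : Bool → 𝒳 → ℝ := fun z x =>
    (if z then (1:ℝ) else -1) /
      (q * ((if z then lam x else 1 - lam x) * (tau true x - tau false x))) with hA1_def
  set D1 : Bool → 𝒳 → ℝ := fun z x =>
    -(A1 z x) * (Hbar x * tau z x + wbar x) + (Hbar x - Δ) / q with hD1_def
  set ψ : Bool → 𝒳 → ℝ := fun z x =>
    ((Hfun x - Hbar x) * tau z x + (wfun x - wbar x)) / (tau true x - tau false x) / q
    with hψ_def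
  set u : 𝒳 → ℝ := fun x => ψ true x / lam x + ψ false x / (1 - lam x) with hu_def
  set v : 𝒳 → ℝ := fun x => -(ψ false x) / (1 - lam x) + (Hbar x - Δ) / q with hv_def
  -- auxiliary functions for the R = 0 part
  set A0 : Bool → 𝒳 → ℝ := fun z x =>
    (if z then (1:ℝ) else -1) * (-(1 / q * (pibar z x / (1 - pibar z x)) * Hbar x)) /
      ((if z then lam x else 1 - lam x) * (tau true x - tau false x)) with hA0_def
  set D0 : Bool → 𝒳 → ℝ := fun z x => -(A0 z x) * tau z x with hD0_def
  -- measurability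
  have hA1m : ∀ b, Measurable (A1 b) := by
    intro b; rw [hA1_def]; cases b <;> simp only [Bool.false_eq_true, if_true, if_false] <;>
      fun_prop
  have hD1m : ∀ b, Measurable (D1 b) := by
    intro b; rw [hD1_def]
    exact ((hA1m b).neg.mul ((hHbar_meas.mul (htau_b b)).add hwbar_meas)).add
      ((hHbar_meas.sub measurable_const).div_const q)
  have hψm : ∀ b, Measurable (ψ b) := by
    intro b; rw [hψ_def]
    exact (((((hHfun_meas.sub hHbar_meas).mul (htau_b b)).add
      (hwfun_meas.sub hwbar_meas)).div ((htau_b true).sub (htau_b false))).div_const q)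
  have hum : Measurable u := by
    rw [hu_def]
    exact ((hψm true).div hlam_meas).add ((hψm false).div (measurable_const.sub hlam_meas))
  have hvm : Measurable v := by
    rw [hv_def]
    exact ((hψm false).neg.div (measurable_const.sub hlam_meas)).add
      ((hHbar_meas.sub measurable_const).div_const q)
  have hA0m : ∀ b, Measurable (A0 b) := by
    intro b; rw [hA0_def]; cases b <;> simp only [Bool.false_eq_true, if_true, if_false] <;>
      fun_prop
  have hD0m : ∀ b, Measurable (D0 b) := by
    intro b; rw [hD0_def]
    exact (hA0m b).neg.mul (htau_b b)
  have ha1m : Measurable[(MeasurableSpace.comap (fun ω => (Z ω, X ω)) inferInstance)] fun ω => A1 (Z ω) (X ω) := (meas_bool_prod hA1m).comp hpairm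
  have hd1m : Measurable[(MeasurableSpace.comap (fun ω => (Z ω, X ω)) inferInstance)] fun ω => D1 (Z ω) (X ω) := (meas_bool_prod hD1m).comp hpairm
  have ha0m : Measurable[(MeasurableSpace.comap (fun ω => (Z ω, X ω)) inferInstance)] fun ω => A0 (Z ω) (X ω) := (meas_bool_prod hA0m).comp hpairm
  have hd0m : Measurable[(MeasurableSpace.comap (fun ω => (Z ω, X ω)) inferInstance)] fun ω => D0 (Z ω) (X ω) := (meas_bool_prod hD0m).comp hpairm
  have hum' : Measurable[(MeasurableSpace.comap X inferInstance)] fun ω => u (X ω) := hum.comp hXm'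
  have hvm' : Measurable[(MeasurableSpace.comap X inferInstance)] fun ω => v (X ω) := hvm.comp hXm'
  -- ### the R = 1 part
  have hzero1 : ∫ ω, Fn ω ∂μ1 = 0 := by
    have hYμ1 : Integrable Y μ1 := htrans1 hYint
    have hFμ1 : Integrable Fn μ1 := htrans1 hint
    have hFeq1 : Fn =ᵐ[μ1] fun ω => A1 (Z ω) (X ω) * Y ω + D1 (Z ω) (X ω) := by
      filter_upwards [hae1] with ω hω
      simp only [hFn_def, hA1_def, hD1_def, hω, if_true]
      cases hz : Z ω <;> simp [hz, div_eq_mul_inv, mul_inv] <;> ring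
    have hIa : Integrable (fun ω => A1 (Z ω) (X ω) * Y ω + D1 (Z ω) (X ω)) μ1 :=
      hFμ1.congr hFeq1
    have hce1 : μ1[Fn | (MeasurableSpace.comap (fun ω => (Z ω, X ω)) inferInstance)] =ᵐ[μ1]
        fun ω => A1 (Z ω) (X ω) * (μ1[Y | (MeasurableSpace.comap (fun ω => (Z ω, X ω)) inferInstance)]) ω + D1 (Z ω) (X ω) :=
      (condExp_congr_ae hFeq1).trans (pull_out hm ha1m hd1m hYμ1 hIa)
    have hφeq : μ1[Fn | (MeasurableSpace.comap (fun ω => (Z ω, X ω)) inferInstance)] =ᵐ[μ1]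
        fun ω => u (X ω) * (if Z ω then (1:ℝ) else 0) + v (X ω) := by
      refine hce1.trans ?_
      filter_upwards [hout] with ω hω
      rw [hω]
      simp only [hA1_def, hD1_def, hu_def, hv_def, hψ_def]
      cases hz : Z ω <;> simp [hz, div_eq_mul_inv, mul_inv] <;> ring
    have hφint : Integrable (fun ω => u (X ω) * (if Z ω then (1:ℝ) else 0) + v (X ω)) μ1 :=
      (integrable_condExp).congr hφeq
    have hZind_int : Integrable (fun ω => if Z ω then (1:ℝ) else 0) μ1 := by
      refine (integrable_const (1:ℝ)).mono' ?_ (ae_of_all _ fun ω => ?_)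
      · exact (Measurable.ite (hZ (measurableSet_singleton true)) measurable_const
          measurable_const).aestronglyMeasurable
      · split_ifs <;> simp
    have hceφ := pull_out hm' hum' hvm' hZind_int hφint
    have hfinal : μ1[fun ω => u (X ω) * (if Z ω then (1:ℝ) else 0) + v (X ω) | (MeasurableSpace.comap X inferInstance)]
        =ᵐ[μ1] fun ω => (Hfun (X ω) - Δ) / q := by
      refine hceφ.trans ?_
      filter_upwards [hlam_ver, hlam_pos, htau_ne] with ω h1 h2 h3
      rw [← h1]
      have hl0 : lam (X ω) ≠ 0 := ne_of_gt h2.1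
      have hl1 : 1 - lam (X ω) ≠ 0 := (sub_pos.mpr h2.2).ne'
      simp only [hu_def, hv_def, hψ_def]
      field_simp
      ring
    calc ∫ ω, Fn ω ∂μ1 = ∫ ω, (μ1[Fn | (MeasurableSpace.comap (fun ω => (Z ω, X ω)) inferInstance)]) ω ∂μ1 := (integral_condExp hm).symm
      _ = ∫ ω, (u (X ω) * (if Z ω then (1:ℝ) else 0) + v (X ω)) ∂μ1 :=
          integral_congr_ae hφeq
      _ = ∫ ω, (μ1[fun ω => u (X ω) * (if Z ω then (1:ℝ) else 0) + v (X ω) | (MeasurableSpace.comap X inferInstance)]) ω ∂μ1 :=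
          (integral_condExp hm').symm
      _ = ∫ ω, (Hfun (X ω) - Δ) / q ∂μ1 := integral_congr_ae hfinal
      _ = 0 := by
          rw [integral_div, integral_sub hHint (integrable_const Δ), integral_const,
            probReal_univ]
          rw [← hΔ_def]
          simp
  -- ### the R = 0 part
  have hzero0 : ∫ ω, Fn ω ∂μ0 = 0 := by
    have hFμ0 : Integrable Fn μ0 := htrans0 hint
    have hFeq0 : Fn =ᵐ[μ0]
        fun ω => A0 (Z ω) (X ω) * (if D ω then (1:ℝ) else 0) + D0 (Z ω) (X ω) := by
      filter_upwards [hae0] with ω hω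
      simp only [hFn_def, hA0_def, hD0_def, hω]
      cases hz : Z ω <;> cases hd : D ω <;> simp [hz, hd, div_eq_mul_inv, mul_inv] <;> ring
    have hIa0 : Integrable
        (fun ω => A0 (Z ω) (X ω) * (if D ω then (1:ℝ) else 0) + D0 (Z ω) (X ω)) μ0 :=
      hFμ0.congr hFeq0
    have hDind_int : Integrable (fun ω => if D ω then (1:ℝ) else 0) μ0 := by
      refine (integrable_const (1:ℝ)).mono' ?_ (ae_of_all _ fun ω => ?_)
      · exact (Measurable.ite (hD (measurableSet_singleton true)) measurable_const
          measurable_const).aestronglyMeasurable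
      · split_ifs <;> simp
    have hce0 : μ0[Fn | (MeasurableSpace.comap (fun ω => (Z ω, X ω)) inferInstance)] =ᵐ[μ0]
        fun ω => A0 (Z ω) (X ω) * (μ0[fun ω => if D ω then (1:ℝ) else 0 | (MeasurableSpace.comap (fun ω => (Z ω, X ω)) inferInstance)]) ω
          + D0 (Z ω) (X ω) :=
      (condExp_congr_ae hFeq0).trans (pull_out hm ha0m hd0m hDind_int hIa0)
    have hzero : μ0[Fn | (MeasurableSpace.comap (fun ω => (Z ω, X ω)) inferInstance)] =ᵐ[μ0] fun _ => (0:ℝ) := by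
      refine hce0.trans ?_
      filter_upwards [hpse] with ω hω
      rw [← hω]
      simp only [hD0_def]
      ring
    calc ∫ ω, Fn ω ∂μ0 = ∫ ω, (μ0[Fn | (MeasurableSpace.comap (fun ω => (Z ω, X ω)) inferInstance)]) ω ∂μ0 := (integral_condExp hm).symm
      _ = ∫ ω, (0:ℝ) ∂μ0 := integral_congr_ae hzero
      _ = 0 := integral_zero _ _
  -- ### combine
  have h1 : ∫ ω, Fn ω ∂μ1 = ((P A)⁻¹).toReal • ∫ ω in A, Fn ω ∂P := by
    rw [hμ1_def]
    exact integral_smul_measure _ _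
  have h0 : ∫ ω, Fn ω ∂μ0 = ((P B)⁻¹).toReal • ∫ ω in B, Fn ω ∂P := by
    rw [hμ0_def]
    exact integral_smul_measure _ _
  have hIA : ∫ ω in A, Fn ω ∂P = 0 := by
    have hh := h1
    rw [hzero1] at hh
    have hc : ((P A)⁻¹).toReal ≠ 0 := by
      rw [ENNReal.toReal_inv]
      exact inv_ne_zero hq_ne
    have := hh.symm
    rw [smul_eq_mul] at this
    exact (mul_eq_zero.mp this).resolve_left hc
  have hIB : ∫ ω in Aᶜ, Fn ω ∂P = 0 := by
    rw [← hBA]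
    have hh := h0
    rw [hzero0] at hh
    have hc : ((P B)⁻¹).toReal ≠ 0 := by
      rw [ENNReal.toReal_inv]
      exact inv_ne_zero (ENNReal.toReal_pos hPB0 hPBtop).ne'
    have := hh.symm
    rw [smul_eq_mul] at this
    exact (mul_eq_zero.mp this).resolve_left hc
  calc ∫ ω, Fn ω ∂P = (∫ ω in A, Fn ω ∂P) + ∫ ω in Aᶜ, Fn ω ∂P :=
        (integral_add_compl hA hint).symm
    _ = 0 := by rw [hIA, hIB, add_zero]
end

section
/- (Multiple robustness of the efficient influence function, case 𝓜₂: outcome decomposition and treatment propensity score correct, instrument density and data-source propensity arbitrary.) Suppose E(Y | Z, X, R=1) = 𝓗(X)·τ(Z,X) + ω(X) a.s. for measurable functions 𝓗, ω, that P(D=1 | Z,X,R=0) = τ(Z,X) a.s. (propensity score equality), and set Δ := E[𝓗(X) | R=1]. Let λ̄ : {0,1}×𝒳 → ℝ∖{0} and π̄ : {0,1}×𝒳 → (0,1) be arbitrary measurable functions (all displayed integrands integrable). Then E[ (−1)^{1−Z} · { (R/q†)·[Y − 𝓗(X)·τ(Z,X) − ω(X)] − ((1−R)/q†)·(π̄(Z,X)/(1−π̄(Z,X)))·𝓗(X)·[D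 − τ(Z,X)] } / ( λ̄(Z|X)·[τ(1,X) − τ(0,X)] ) + (R/q†)·(𝓗(X) − Δ) ] = 0. -/
open MeasureTheory ProbabilityTheory


/-- If `f` is `m`-strongly measurable, `f*e` and `e` are integrable, and `μ[e|m] = 0` a.e.,
then `∫ f*e = 0`. -/
lemma aux_int_zero {Ω : Type*} [inst : MeasurableSpace Ω] {μ : Measure Ω}
    [IsFiniteMeasure μ] {m : MeasurableSpace Ω} (hm : m ≤ inst)
    {f e : Ω → ℝ} (hf : StronglyMeasurable[m] f)
    (hfe : Integrable (fun ω => f ω * e ω) μ) (he : Integrable e μ)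
    (h0 : μ[e|m] =ᵐ[μ] 0) : ∫ ω, f ω * e ω ∂μ = 0 := by
  have h1 : ∫ ω, (μ[fun ω => f ω * e ω|m]) ω ∂μ = ∫ ω, f ω * e ω ∂μ :=
    integral_condExp hm
  have h2 : μ[fun ω => f ω * e ω|m] =ᵐ[μ] fun _ => (0:ℝ) := by
    have hmul : μ[fun ω => f ω * e ω|m] =ᵐ[μ] f * μ[e|m] :=
      condExp_mul_of_stronglyMeasurable_left hf (by simpa [Pi.mul_def] using hfe) he
    filter_upwards [hmul, h0] with ω hω h0ω
    simpa [Pi.mul_apply, h0ω] using hω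
  rw [← h1, integral_congr_ae h2, integral_const, smul_zero]

/-- Multiple robustness, case 𝓜₂: outcome decomposition and treatment
propensity score are correct, while the instrument density `λ̄` and data-source propensity
`π̄` working models are arbitrary. Then the efficient influence function has mean zero. -/
theorem stmt_9
    {Ω 𝒳 : Type*} [MeasurableSpace Ω] [MeasurableSpace 𝒳] [StandardBorelSpace 𝒳]
    (P : Measure Ω) [IsProbabilityMeasure P]
    (R Z D : Ω → Bool) (X : Ω → 𝒳) (Y : Ω → ℝ)
    (hR : Measurable R) (hZ : Measurable Z) (hD : Measurable D)
    (hX : Measurable X) (hY : Measurable Y) (hYint : Integrable Y P)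
    -- q† := P(R=1) ∈ (0,1)
    (hq : 0 < P {ω | R ω = true} ∧ P {ω | R ω = true} < 1)
    -- τ(z,x) := P(D=1 | Z=z, X=x, R=1), with τ(1,X) − τ(0,X) ≠ 0 a.s. on {R=1}
    (tau : Bool → 𝒳 → ℝ) (htau_meas : Measurable fun p : Bool × 𝒳 => tau p.1 p.2)
    (htau_ver : (fun ω => tau (Z ω) (X ω)) =ᵐ[P[|{ω | R ω = true}]]
      (P[|{ω | R ω = true}])[(fun ω => if D ω then (1:ℝ) else 0) |
        MeasurableSpace.comap (fun ω => (Z ω, X ω)) inferInstance])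
    (htau_ne : ∀ᵐ ω ∂(P[|{ω | R ω = true}]), tau true (X ω) - tau false (X ω) ≠ 0)
    -- true outcome decomposition: E(Y | Z, X, R=1) = 𝓗(X)·τ(Z,X) + ω(X) a.s.
    (Hfun wfun : 𝒳 → ℝ) (hHfun_meas : Measurable Hfun) (hwfun_meas : Measurable wfun)
    (hout : (P[|{ω | R ω = true}])[Y |
        MeasurableSpace.comap (fun ω => (Z ω, X ω)) inferInstance]
      =ᵐ[P[|{ω | R ω = true}]]
        fun ω => Hfun (X ω) * tau (Z ω) (X ω) + wfun (X ω))
    -- propensity score equality: P(D=1 | Z, X, R=0) = τ(Z,X) a.s.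
    (hpse : (fun ω => tau (Z ω) (X ω)) =ᵐ[P[|{ω | R ω = false}]]
      (P[|{ω | R ω = false}])[(fun ω => if D ω then (1:ℝ) else 0) |
        MeasurableSpace.comap (fun ω => (Z ω, X ω)) inferInstance])
    -- arbitrary measurable working models λ̄ : {0,1}×𝒳 → ℝ∖{0}, π̄ : {0,1}×𝒳 → (0,1)
    (lambar : Bool → 𝒳 → ℝ) (hlambar_meas : Measurable fun p : Bool × 𝒳 => lambar p.1 p.2)
    (hlambar_ne : ∀ z x, lambar z x ≠ 0)
    (pibar : Bool → 𝒳 → ℝ) (hpibar_meas : Measurable fun p : Bool × 𝒳 => pibar p.1 p.2)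
    (hpibar_range : ∀ z x, 0 < pibar z x ∧ pibar z x < 1)
    -- integrability of the displayed integrands
    (hHint : Integrable (fun ω => Hfun (X ω)) (P[|{ω | R ω = true}]))
    (hint : Integrable (fun ω =>
        (if Z ω then (1:ℝ) else -1) *
            ((if R ω then (1:ℝ) else 0) / (P {ω | R ω = true}).toReal *
                (Y ω - Hfun (X ω) * tau (Z ω) (X ω) - wfun (X ω)) -
              (if R ω then (0:ℝ) else 1) / (P {ω | R ω = true}).toReal *
                (pibar (Z ω) (X ω) / (1 - pibar (Z ω) (X ω))) * Hfun (X ω) *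
                ((if D ω then (1:ℝ) else 0) - tau (Z ω) (X ω))) /
            (lambar (Z ω) (X ω) * (tau true (X ω) - tau false (X ω))) +
          (if R ω then (1:ℝ) else 0) / (P {ω | R ω = true}).toReal *
            (Hfun (X ω) - ∫ ω', Hfun (X ω') ∂(P[|{ω | R ω = true}]))) P) :
    -- conclusion: mean zero, with Δ := E[𝓗(X) | R=1]
    ∫ ω,
        ((if Z ω then (1:ℝ) else -1) *
            ((if R ω then (1:ℝ) else 0) / (P {ω | R ω = true}).toReal *
                (Y ω - Hfun (X ω) * tau (Z ω) (X ω) - wfun (X ω)) -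
              (if R ω then (0:ℝ) else 1) / (P {ω | R ω = true}).toReal *
                (pibar (Z ω) (X ω) / (1 - pibar (Z ω) (X ω))) * Hfun (X ω) *
                ((if D ω then (1:ℝ) else 0) - tau (Z ω) (X ω))) /
            (lambar (Z ω) (X ω) * (tau true (X ω) - tau false (X ω))) +
          (if R ω then (1:ℝ) else 0) / (P {ω | R ω = true}).toReal *
            (Hfun (X ω) - ∫ ω', Hfun (X ω') ∂(P[|{ω | R ω = true}]))) ∂P = 0 := by
  classical
  set S : Set Ω := {ω | R ω = true} with hSdef
  have hS : MeasurableSet S := hR (measurableSet_singleton true)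
  have hS0 : P S ≠ 0 := hq.1.ne'
  have hST : P S ≠ ⊤ := measure_ne_top P S
  set q : ℝ := (P S).toReal with hqdef
  have hq0 : q ≠ 0 := ENNReal.toReal_ne_zero.mpr ⟨hS0, hST⟩
  set Δ : ℝ := ∫ ω', Hfun (X ω') ∂(P[|S]) with hΔdef
  have hm := (hZ.prodMk hX).comap_le

  set T : Set Ω := {ω | R ω = false} with hTdef
  have hTS : Sᶜ = T := by
    ext ω; simp [hSdef, hTdef]
  have hT : MeasurableSet T := hR (measurableSet_singleton false)
  have hT0 : P T ≠ 0 := by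
    rw [← hTS, measure_compl hS hST, measure_univ]
    simp only [ne_eq, tsub_eq_zero_iff_le, not_le]
    exact hq.2
  have hTT : P T ≠ ⊤ := measure_ne_top P T
  haveI hP1 : IsProbabilityMeasure (P[|S]) := cond_isProbabilityMeasure hS0
  haveI hP0 : IsProbabilityMeasure (P[|T]) := cond_isProbabilityMeasure hT0
  -- composition with (Z, X) is m-strongly measurable
  have hpair : @Measurable Ω (Bool × 𝒳)
      (MeasurableSpace.comap (fun ω => (Z ω, X ω)) inferInstance) _
      (fun ω => (Z ω, X ω)) := Measurable.of_comap_le le_rfl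
  have hcomp : ∀ {F : Bool × 𝒳 → ℝ}, Measurable F →
      StronglyMeasurable[MeasurableSpace.comap (fun ω => (Z ω, X ω)) inferInstance]
        fun ω => F (Z ω, X ω) :=
    fun hF => (hF.comp hpair).stronglyMeasurable
  -- measure transfer lemmas
  have hrc : ∀ (U : Set Ω), P U ≠ 0 → P U ≠ ⊤ → ∀ f : Ω → ℝ,
      ∫ ω in U, f ω ∂P = (P U).toReal * ∫ ω, f ω ∂(P[|U]) := by
    intro U hU0 hUT f
    rw [show P[|U] = (P U)⁻¹ • P.restrict U from rfl, integral_smul_measure,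
      ENNReal.toReal_inv, smul_eq_mul, ← mul_assoc,
      mul_inv_cancel₀ (ENNReal.toReal_ne_zero.mpr ⟨hU0, hUT⟩), one_mul]
  have hint_cond : ∀ (U : Set Ω), P U ≠ 0 → ∀ f : Ω → ℝ,
      Integrable f (P.restrict U) → Integrable f (P[|U]) := by
    intro U hU0 f hf
    rw [show P[|U] = (P U)⁻¹ • P.restrict U from rfl]
    exact hf.smul_measure (ENNReal.inv_ne_top.mpr hU0)
  have hint_restr : ∀ (U : Set Ω), P U ≠ 0 → P U ≠ ⊤ → ∀ f : Ω → ℝ,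
      Integrable f (P[|U]) → Integrable f (P.restrict U) := by
    intro U hU0 hUT f hf
    have hre : P.restrict U = (P U) • (P[|U]) := by
      rw [show P[|U] = (P U)⁻¹ • P.restrict U from rfl, smul_smul,
        ENNReal.mul_inv_cancel hU0 hUT, one_smul]
    rw [hre]; exact hf.smul_measure hUT

  -- working-model functions
  set F1 : Bool × 𝒳 → ℝ := fun p =>
    (if p.1 then (1:ℝ) else -1) / q /
      (lambar p.1 p.2 * (tau true p.2 - tau false p.2)) with hF1def
  set F0 : Bool × 𝒳 → ℝ := fun p =>
    -((if p.1 then (1:ℝ) else -1) * (pibar p.1 p.2 / (1 - pibar p.1 p.2)) * Hfun p.2) / q /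
      (lambar p.1 p.2 * (tau true p.2 - tau false p.2)) with hF0def
  have hsgn : Measurable fun p : Bool × 𝒳 => (if p.1 then (1:ℝ) else -1) :=
    Measurable.ite (measurable_fst (measurableSet_singleton true))
      measurable_const measurable_const
  have htauT : Measurable fun p : Bool × 𝒳 => tau true p.2 :=
    htau_meas.comp (measurable_const.prodMk measurable_snd)
  have htauF : Measurable fun p : Bool × 𝒳 => tau false p.2 :=
    htau_meas.comp (measurable_const.prodMk measurable_snd)
  have hden : Measurable fun p : Bool × 𝒳 =>
      lambar p.1 p.2 * (tau true p.2 - tau false p.2) :=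
    hlambar_meas.mul (htauT.sub htauF)
  have hF1m : Measurable F1 := (hsgn.div measurable_const).div hden
  have hF0m : Measurable F0 :=
    ((((hsgn.mul (hpibar_meas.div (measurable_const.sub hpibar_meas))).mul
      (hHfun_meas.comp measurable_snd)).neg).div measurable_const).div hden

  -- integrability of the second ("augmentation") term
  have hHr : Integrable (fun ω => Hfun (X ω)) (P.restrict S) := hint_restr S hS0 hST _ hHint
  have hBr : Integrable (fun ω => 1 / q * (Hfun (X ω) - Δ)) (P.restrict S) :=
    (hHr.sub (integrable_const Δ)).const_mul _
  have hBint : Integrable (fun ω => (if R ω then (1:ℝ) else 0) / q * (Hfun (X ω) - Δ)) P := by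
    have hi := (integrable_indicator_iff hS).mpr hBr
    refine hi.congr (Filter.Eventually.of_forall fun ω => ?_)
    by_cases h : R ω = true
    · have hω : ω ∈ S := h
      simp [Set.indicator_of_mem hω, h]
    · have hω : ω ∉ S := h
      simp [Set.indicator_of_notMem hω, h]
  -- integrability of the first (influence-function) term
  have hAint : Integrable (fun ω =>
      (if Z ω then (1:ℝ) else -1) *
          ((if R ω then (1:ℝ) else 0) / q *
              (Y ω - Hfun (X ω) * tau (Z ω) (X ω) - wfun (X ω)) -
            (if R ω then (0:ℝ) else 1) / q *
              (pibar (Z ω) (X ω) / (1 - pibar (Z ω) (X ω))) * Hfun (X ω) *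
              ((if D ω then (1:ℝ) else 0) - tau (Z ω) (X ω))) /
          (lambar (Z ω) (X ω) * (tau true (X ω) - tau false (X ω)))) P := by
    refine (hint.sub hBint).congr (Filter.Eventually.of_forall fun ω => ?_)
    simp only [Pi.sub_apply]
    ring

  -- S side: conditional-mean-zero of the outcome residual
  have hYc : Integrable Y (P[|S]) := hint_cond S hS0 Y hYint.restrict
  have hc_int : Integrable (fun ω => Hfun (X ω) * tau (Z ω) (X ω) + wfun (X ω)) (P[|S]) :=
    integrable_condExp.congr hout
  have he1 : Integrable (fun ω => Y ω - (Hfun (X ω) * tau (Z ω) (X ω) + wfun (X ω))) (P[|S]) :=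
    hYc.sub hc_int
  have hc_sm : StronglyMeasurable[MeasurableSpace.comap (fun ω => (Z ω, X ω)) inferInstance]
      (fun ω => Hfun (X ω) * tau (Z ω) (X ω) + wfun (X ω)) :=
    hcomp (((hHfun_meas.comp measurable_snd).mul htau_meas).add
      (hwfun_meas.comp measurable_snd))
  have h01 : (P[|S])[(fun ω => Y ω - (Hfun (X ω) * tau (Z ω) (X ω) + wfun (X ω)))|
      MeasurableSpace.comap (fun ω => (Z ω, X ω)) inferInstance] =ᵐ[P[|S]] 0 := by
    have hsub : (P[|S])[(fun ω => Y ω - (Hfun (X ω) * tau (Z ω) (X ω) + wfun (X ω)))|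
        MeasurableSpace.comap (fun ω => (Z ω, X ω)) inferInstance] =ᵐ[P[|S]]
        (P[|S])[Y|MeasurableSpace.comap (fun ω => (Z ω, X ω)) inferInstance] -
        (P[|S])[(fun ω => Hfun (X ω) * tau (Z ω) (X ω) + wfun (X ω))|
          MeasurableSpace.comap (fun ω => (Z ω, X ω)) inferInstance] :=
      condExp_sub hYc hc_int _
    refine hsub.trans ?_
    rw [condExp_of_stronglyMeasurable hm hc_sm hc_int]
    filter_upwards [hout] with ω h2
    simp [Pi.sub_apply, h2]
  have hA1 : ∀ ω, R ω = true →
      ((if Z ω then (1:ℝ) else -1) *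
          ((if R ω then (1:ℝ) else 0) / q *
              (Y ω - Hfun (X ω) * tau (Z ω) (X ω) - wfun (X ω)) -
            (if R ω then (0:ℝ) else 1) / q *
              (pibar (Z ω) (X ω) / (1 - pibar (Z ω) (X ω))) * Hfun (X ω) *
              ((if D ω then (1:ℝ) else 0) - tau (Z ω) (X ω))) /
          (lambar (Z ω) (X ω) * (tau true (X ω) - tau false (X ω)))) =
      F1 (Z ω, X ω) * (Y ω - (Hfun (X ω) * tau (Z ω) (X ω) + wfun (X ω))) := by
    intro ω h
    rw [hF1def]
    simp only [h, if_true]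
    ring
  have hA1r : (fun ω =>
      (if Z ω then (1:ℝ) else -1) *
          ((if R ω then (1:ℝ) else 0) / q *
              (Y ω - Hfun (X ω) * tau (Z ω) (X ω) - wfun (X ω)) -
            (if R ω then (0:ℝ) else 1) / q *
              (pibar (Z ω) (X ω) / (1 - pibar (Z ω) (X ω))) * Hfun (X ω) *
              ((if D ω then (1:ℝ) else 0) - tau (Z ω) (X ω))) /
          (lambar (Z ω) (X ω) * (tau true (X ω) - tau false (X ω)))) =ᵐ[P.restrict S]
      fun ω => F1 (Z ω, X ω) * (Y ω - (Hfun (X ω) * tau (Z ω) (X ω) + wfun (X ω))) := by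
    filter_upwards [ae_restrict_mem hS] with ω hω
    exact hA1 ω hω
  have hfe1r : Integrable (fun ω =>
      F1 (Z ω, X ω) * (Y ω - (Hfun (X ω) * tau (Z ω) (X ω) + wfun (X ω)))) (P.restrict S) :=
    hAint.restrict.congr hA1r
  have hfe1 : Integrable (fun ω =>
      F1 (Z ω, X ω) * (Y ω - (Hfun (X ω) * tau (Z ω) (X ω) + wfun (X ω)))) (P[|S]) :=
    hint_cond S hS0 _ hfe1r
  have r1 : ∫ ω, F1 (Z ω, X ω) *
      (Y ω - (Hfun (X ω) * tau (Z ω) (X ω) + wfun (X ω))) ∂(P[|S]) = 0 :=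
    aux_int_zero hm (hcomp hF1m) hfe1 he1 h01

  -- T side: conditional-mean-zero of the treatment residual
  have hD0 : Integrable (fun ω => if D ω then (1:ℝ) else 0) (P[|T]) := by
    refine (integrable_const (1:ℝ)).mono' ?_ ?_
    · exact (Measurable.ite (hD (measurableSet_singleton true)) measurable_const
        measurable_const).aestronglyMeasurable
    · refine Filter.Eventually.of_forall fun ω => ?_
      by_cases h : D ω = true <;> simp [h]
  have htau0 : Integrable (fun ω => tau (Z ω) (X ω)) (P[|T]) :=
    integrable_condExp.congr hpse.symm
  have he0 : Integrable (fun ω => (if D ω then (1:ℝ) else 0) - tau (Z ω) (X ω)) (P[|T]) :=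
    hD0.sub htau0
  have htau_sm : StronglyMeasurable[MeasurableSpace.comap (fun ω => (Z ω, X ω)) inferInstance]
      (fun ω => tau (Z ω) (X ω)) := hcomp htau_meas
  have h00 : (P[|T])[(fun ω => (if D ω then (1:ℝ) else 0) - tau (Z ω) (X ω))|
      MeasurableSpace.comap (fun ω => (Z ω, X ω)) inferInstance] =ᵐ[P[|T]] 0 := by
    have hsub : (P[|T])[(fun ω => (if D ω then (1:ℝ) else 0) - tau (Z ω) (X ω))|
        MeasurableSpace.comap (fun ω => (Z ω, X ω)) inferInstance] =ᵐ[P[|T]]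
        (P[|T])[(fun ω => if D ω then (1:ℝ) else 0)|
          MeasurableSpace.comap (fun ω => (Z ω, X ω)) inferInstance] -
        (P[|T])[(fun ω => tau (Z ω) (X ω))|
          MeasurableSpace.comap (fun ω => (Z ω, X ω)) inferInstance] :=
      condExp_sub hD0 htau0 _
    refine hsub.trans ?_
    rw [condExp_of_stronglyMeasurable hm htau_sm htau0]
    filter_upwards [hpse] with ω h2
    simp only [Pi.sub_apply, Pi.zero_apply, h2, sub_self]
  have hA0 : ∀ ω, R ω = false →
      ((if Z ω then (1:ℝ) else -1) *
          ((if R ω then (1:ℝ) else 0) / q *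
              (Y ω - Hfun (X ω) * tau (Z ω) (X ω) - wfun (X ω)) -
            (if R ω then (0:ℝ) else 1) / q *
              (pibar (Z ω) (X ω) / (1 - pibar (Z ω) (X ω))) * Hfun (X ω) *
              ((if D ω then (1:ℝ) else 0) - tau (Z ω) (X ω))) /
          (lambar (Z ω) (X ω) * (tau true (X ω) - tau false (X ω)))) =
      F0 (Z ω, X ω) * ((if D ω then (1:ℝ) else 0) - tau (Z ω) (X ω)) := by
    intro ω h
    rw [hF0def]
    simp only [h, Bool.false_eq_true, if_false]
    ring
  have hA0r : (fun ω =>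
      (if Z ω then (1:ℝ) else -1) *
          ((if R ω then (1:ℝ) else 0) / q *
              (Y ω - Hfun (X ω) * tau (Z ω) (X ω) - wfun (X ω)) -
            (if R ω then (0:ℝ) else 1) / q *
              (pibar (Z ω) (X ω) / (1 - pibar (Z ω) (X ω))) * Hfun (X ω) *
              ((if D ω then (1:ℝ) else 0) - tau (Z ω) (X ω))) /
          (lambar (Z ω) (X ω) * (tau true (X ω) - tau false (X ω)))) =ᵐ[P.restrict T]
      fun ω => F0 (Z ω, X ω) * ((if D ω then (1:ℝ) else 0) - tau (Z ω) (X ω)) := by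
    filter_upwards [ae_restrict_mem hT] with ω hω
    exact hA0 ω hω
  have hfe0r : Integrable (fun ω =>
      F0 (Z ω, X ω) * ((if D ω then (1:ℝ) else 0) - tau (Z ω) (X ω))) (P.restrict T) :=
    hAint.restrict.congr hA0r
  have hfe0 : Integrable (fun ω =>
      F0 (Z ω, X ω) * ((if D ω then (1:ℝ) else 0) - tau (Z ω) (X ω))) (P[|T]) :=
    hint_cond T hT0 _ hfe0r
  have r0 : ∫ ω, F0 (Z ω, X ω) *
      ((if D ω then (1:ℝ) else 0) - tau (Z ω) (X ω)) ∂(P[|T]) = 0 :=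
    aux_int_zero hm (hcomp hF0m) hfe0 he0 h00
  -- assembly
  rw [← integral_add_compl hS hint, hTS]
  have hIS : ∫ ω in S,
      ((if Z ω then (1:ℝ) else -1) *
          ((if R ω then (1:ℝ) else 0) / q *
              (Y ω - Hfun (X ω) * tau (Z ω) (X ω) - wfun (X ω)) -
            (if R ω then (0:ℝ) else 1) / q *
              (pibar (Z ω) (X ω) / (1 - pibar (Z ω) (X ω))) * Hfun (X ω) *
              ((if D ω then (1:ℝ) else 0) - tau (Z ω) (X ω))) /
          (lambar (Z ω) (X ω) * (tau true (X ω) - tau false (X ω))) +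
        (if R ω then (1:ℝ) else 0) / q * (Hfun (X ω) - Δ)) ∂P = 0 := by
    have hcongr : (fun ω =>
        (if Z ω then (1:ℝ) else -1) *
            ((if R ω then (1:ℝ) else 0) / q *
                (Y ω - Hfun (X ω) * tau (Z ω) (X ω) - wfun (X ω)) -
              (if R ω then (0:ℝ) else 1) / q *
                (pibar (Z ω) (X ω) / (1 - pibar (Z ω) (X ω))) * Hfun (X ω) *
                ((if D ω then (1:ℝ) else 0) - tau (Z ω) (X ω))) /
            (lambar (Z ω) (X ω) * (tau true (X ω) - tau false (X ω))) +
          (if R ω then (1:ℝ) else 0) / q * (Hfun (X ω) - Δ)) =ᵐ[P.restrict S]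
        fun ω => F1 (Z ω, X ω) * (Y ω - (Hfun (X ω) * tau (Z ω) (X ω) + wfun (X ω))) +
          1 / q * (Hfun (X ω) - Δ) := by
      filter_upwards [ae_restrict_mem hS] with ω hω
      have h : R ω = true := hω
      rw [hA1 ω h, h]
      norm_num
    rw [integral_congr_ae hcongr, integral_add hfe1r hBr, hrc S hS0 hST _, hrc S hS0 hST _, r1]
    have hz : ∫ ω, 1 / q * (Hfun (X ω) - Δ) ∂(P[|S]) = 0 := by
      rw [integral_const_mul, integral_sub hHint (integrable_const _), integral_const]
      simp only [probReal_univ, one_smul]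
      rw [← hΔdef]
      simp
    rw [hz]
    simp
  have hIT : ∫ ω in T,
      ((if Z ω then (1:ℝ) else -1) *
          ((if R ω then (1:ℝ) else 0) / q *
              (Y ω - Hfun (X ω) * tau (Z ω) (X ω) - wfun (X ω)) -
            (if R ω then (0:ℝ) else 1) / q *
              (pibar (Z ω) (X ω) / (1 - pibar (Z ω) (X ω))) * Hfun (X ω) *
              ((if D ω then (1:ℝ) else 0) - tau (Z ω) (X ω))) /
          (lambar (Z ω) (X ω) * (tau true (X ω) - tau false (X ω))) +
        (if R ω then (1:ℝ) else 0) / q * (Hfun (X ω) - Δ)) ∂P = 0 := by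
    have hcongr : (fun ω =>
        (if Z ω then (1:ℝ) else -1) *
            ((if R ω then (1:ℝ) else 0) / q *
                (Y ω - Hfun (X ω) * tau (Z ω) (X ω) - wfun (X ω)) -
              (if R ω then (0:ℝ) else 1) / q *
                (pibar (Z ω) (X ω) / (1 - pibar (Z ω) (X ω))) * Hfun (X ω) *
                ((if D ω then (1:ℝ) else 0) - tau (Z ω) (X ω))) /
            (lambar (Z ω) (X ω) * (tau true (X ω) - tau false (X ω))) +
          (if R ω then (1:ℝ) else 0) / q * (Hfun (X ω) - Δ)) =ᵐ[P.restrict T]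
        fun ω => F0 (Z ω, X ω) * ((if D ω then (1:ℝ) else 0) - tau (Z ω) (X ω)) := by
      filter_upwards [ae_restrict_mem hT] with ω hω
      have h : R ω = false := hω
      rw [hA0 ω h, h]
      simp
    rw [integral_congr_ae hcongr, hrc T hT0 hTT _, r0, mul_zero]
  rw [hIS, hIT, add_zero]
end

section
/- (Multiple robustness of the efficient influence function, case 𝓜₃: outcome decomposition and data-source propensity correct, instrument density and treatment propensity arbitrary.) Suppose E(Y | Z, X, R=1) = 𝓗(X)·τ(Z,X) + ω(X) a.s. for measurable functions 𝓗, ω, that P(D=1 | Z,X,R=0) = τ(Z,X) a.s. (propensity score equality), and set Δ := E[𝓗(X) | R=1]. Let λ̄ : {0,1}×𝒳 → ℝ∖{0} and τ̄ : {0,1}×𝒳 → ℝ be arbitrary measurable functions with τ̄(1,X) − τ̄(0,X) ≠ 0 a.s. (all displayed integrands integrable). Then E[ (−1)^{1−Z} · { (R/q†)·[Y − 𝓗(X)·τ̄(Z,X) − ω(X)] − ((1−R)/q†)·(π(Z,X)/(1−π(Z,X)))·𝓗(X)·[D − τ̄(Z,X)] } / ( λ̄(Z|X)·[τ̄(1,X)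 − τ̄(0,X)] ) + (R/q†)·(𝓗(X) − Δ) ] = 0. -/
open MeasureTheory ProbabilityTheory

lemma aux_int_of_bdd {Ω : Type*} [MeasurableSpace Ω] {μ : Measure Ω} [IsFiniteMeasure μ]
    {f : Ω → ℝ} (hf : AEStronglyMeasurable f μ) {C : ℝ} (h : ∀ᵐ ω ∂μ, |f ω| ≤ C) :
    Integrable f μ :=
  Integrable.mono' (integrable_const C) hf (by filter_upwards [h] with ω hω; simpa using hω)

lemma aux_pullout {Ω : Type*} {m0 : MeasurableSpace Ω} {μ : Measure Ω} [IsProbabilityMeasure μ]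
    {m : MeasurableSpace Ω} (hm : m ≤ m0)
    {f g τg : Ω → ℝ} (hf : StronglyMeasurable[m] f)
    (hg : Integrable g μ) (hfg : Integrable (fun ω => f ω * g ω) μ)
    (hver : μ[g|m] =ᵐ[μ] τg) :
    ∫ ω, f ω * g ω ∂μ = ∫ ω, f ω * τg ω ∂μ := by
  have h1 : μ[fun ω => f ω * g ω|m] =ᵐ[μ] fun ω => f ω * τg ω := by
    have := condExp_mul_of_stronglyMeasurable_left (μ := μ) hf (by exact hfg) hg
    refine this.trans ?_
    filter_upwards [hver] with ω hω
    simp [hω]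
  calc ∫ ω, f ω * g ω ∂μ = ∫ ω, (μ[fun ω => f ω * g ω|m]) ω ∂μ := (integral_condExp hm).symm
    _ = ∫ ω, f ω * τg ω ∂μ := integral_congr_ae h1

lemma aux_alg1 {e y q L c x h d : ℝ} (hq : q ≠ 0) :
    e * (1 / q * y - 0 / q * x * h * d) / L * c = y * (e / (q * L) * c) := by
  rcases eq_or_ne L 0 with hL | hL
  · simp [hL]
  · field_simp
    ring

lemma aux_alg2 {e y q L c x h di tb : ℝ} (hq : q ≠ 0) :
    e * (0 / q * y - 1 / q * x * h * (di - tb)) / L * c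
      = -((di - tb) * (e / (q * L) * h * x * c)) := by
  rcases eq_or_ne L 0 with hL | hL
  · simp [hL]
  · field_simp
    ring

set_option maxHeartbeats 1000000 in
/-- Multiple robustness, case 𝓜₃: outcome decomposition and data-source
propensity are correct, while the instrument density `λ̄` and treatment propensity `τ̄`
working models are arbitrary. Then the efficient influence function has mean zero. -/
theorem stmt_10
    {Ω 𝒳 : Type*} [MeasurableSpace Ω] [MeasurableSpace 𝒳] [StandardBorelSpace 𝒳]
    (P : Measure Ω) [IsProbabilityMeasure P]
    (R Z D : Ω → Bool) (X : Ω → 𝒳) (Y : Ω → ℝ)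
    (hR : Measurable R) (hZ : Measurable Z) (hD : Measurable D)
    (hX : Measurable X) (hY : Measurable Y) (hYint : Integrable Y P)
    -- q† := P(R=1) ∈ (0,1)
    (hq : 0 < P {ω | R ω = true} ∧ P {ω | R ω = true} < 1)
    -- τ(z,x) := P(D=1 | Z=z, X=x, R=1)
    (tau : Bool → 𝒳 → ℝ) (htau_meas : Measurable fun p : Bool × 𝒳 => tau p.1 p.2)
    (htau_ver : (fun ω => tau (Z ω) (X ω)) =ᵐ[P[|{ω | R ω = true}]]
      (P[|{ω | R ω = true}])[(fun ω => if D ω then (1:ℝ) else 0) |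
        MeasurableSpace.comap (fun ω => (Z ω, X ω)) inferInstance])
    -- π(z,x) := P(R=1 | Z=z, X=x), with 0 < π(Z,X) < 1 a.s.
    (pi : Bool → 𝒳 → ℝ) (hpi_meas : Measurable fun p : Bool × 𝒳 => pi p.1 p.2)
    (hpi_ver : (fun ω => pi (Z ω) (X ω)) =ᵐ[P]
      P[(fun ω => if R ω then (1:ℝ) else 0) |
        MeasurableSpace.comap (fun ω => (Z ω, X ω)) inferInstance])
    (hpi_pos : ∀ᵐ ω ∂P, 0 < pi (Z ω) (X ω) ∧ pi (Z ω) (X ω) < 1)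
    -- true outcome decomposition: E(Y | Z, X, R=1) = 𝓗(X)·τ(Z,X) + ω(X) a.s.
    (Hfun wfun : 𝒳 → ℝ) (hHfun_meas : Measurable Hfun) (hwfun_meas : Measurable wfun)
    (hout : (P[|{ω | R ω = true}])[Y |
        MeasurableSpace.comap (fun ω => (Z ω, X ω)) inferInstance]
      =ᵐ[P[|{ω | R ω = true}]]
        fun ω => Hfun (X ω) * tau (Z ω) (X ω) + wfun (X ω))
    -- propensity score equality: P(D=1 | Z, X, R=0) = τ(Z,X) a.s.
    (hpse : (fun ω => tau (Z ω) (X ω)) =ᵐ[P[|{ω | R ω = false}]]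
      (P[|{ω | R ω = false}])[(fun ω => if D ω then (1:ℝ) else 0) |
        MeasurableSpace.comap (fun ω => (Z ω, X ω)) inferInstance])
    -- arbitrary measurable working models λ̄ : {0,1}×𝒳 → ℝ∖{0} and τ̄ : {0,1}×𝒳 → ℝ
    -- with τ̄(1,X) − τ̄(0,X) ≠ 0 a.s.
    (lambar : Bool → 𝒳 → ℝ) (hlambar_meas : Measurable fun p : Bool × 𝒳 => lambar p.1 p.2)
    (hlambar_ne : ∀ z x, lambar z x ≠ 0)
    (taubar : Bool → 𝒳 → ℝ) (htaubar_meas : Measurable fun p : Bool × 𝒳 => taubar p.1 p.2)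
    (htaubar_ne : ∀ᵐ ω ∂P, taubar true (X ω) - taubar false (X ω) ≠ 0)
    -- integrability of the displayed integrands
    (hHint : Integrable (fun ω => Hfun (X ω)) (P[|{ω | R ω = true}]))
    (hint : Integrable (fun ω =>
        (if Z ω then (1:ℝ) else -1) *
            ((if R ω then (1:ℝ) else 0) / (P {ω | R ω = true}).toReal *
                (Y ω - Hfun (X ω) * taubar (Z ω) (X ω) - wfun (X ω)) -
              (if R ω then (0:ℝ) else 1) / (P {ω | R ω = true}).toReal *
                (pi (Z ω) (X ω) / (1 - pi (Z ω) (X ω))) * Hfun (X ω) *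
                ((if D ω then (1:ℝ) else 0) - taubar (Z ω) (X ω))) /
            (lambar (Z ω) (X ω) * (taubar true (X ω) - taubar false (X ω))) +
          (if R ω then (1:ℝ) else 0) / (P {ω | R ω = true}).toReal *
            (Hfun (X ω) - ∫ ω', Hfun (X ω') ∂(P[|{ω | R ω = true}]))) P) :
    -- conclusion: mean zero, with Δ := E[𝓗(X) | R=1]
    ∫ ω,
        ((if Z ω then (1:ℝ) else -1) *
            ((if R ω then (1:ℝ) else 0) / (P {ω | R ω = true}).toReal *
                (Y ω - Hfun (X ω) * taubar (Z ω) (X ω) - wfun (X ω)) -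
              (if R ω then (0:ℝ) else 1) / (P {ω | R ω = true}).toReal *
                (pi (Z ω) (X ω) / (1 - pi (Z ω) (X ω))) * Hfun (X ω) *
                ((if D ω then (1:ℝ) else 0) - taubar (Z ω) (X ω))) /
            (lambar (Z ω) (X ω) * (taubar true (X ω) - taubar false (X ω))) +
          (if R ω then (1:ℝ) else 0) / (P {ω | R ω = true}).toReal *
            (Hfun (X ω) - ∫ ω', Hfun (X ω') ∂(P[|{ω | R ω = true}]))) ∂P = 0 := by
  -- basic sets and measures
  set s : Set Ω := {ω | R ω = true} with hs_def
  have hs : MeasurableSet s := hR (measurableSet_singleton true)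
  set t : Set Ω := {ω | R ω = false} with ht_def
  have hts : t = sᶜ := by
    ext ω; simp [hs_def, ht_def]
  have ht : MeasurableSet t := hts ▸ hs.compl
  have hPs0 : P s ≠ 0 := hq.1.ne'
  have hPs_top : P s ≠ ⊤ := measure_ne_top _ _
  have hPt0 : P t ≠ 0 := by
    rw [hts, measure_compl hs hPs_top, measure_univ]
    intro h
    have := tsub_eq_zero_iff_le.mp h
    exact absurd this (not_le.mpr hq.2)
  have hPt_top : P t ≠ ⊤ := measure_ne_top _ _
  haveI hP1 : IsProbabilityMeasure (P[|s]) := cond_isProbabilityMeasure hPs0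
  haveI hP0 : IsProbabilityMeasure (P[|t]) := cond_isProbabilityMeasure hPt0
  set qr : ℝ := (P s).toReal with hqr_def
  have hqr_pos : 0 < qr := ENNReal.toReal_pos hPs0 hPs_top
  set tr : ℝ := (P t).toReal with htr_def
  have htr_pos : 0 < tr := ENNReal.toReal_pos hPt0 hPt_top
  -- integral conversions
  have hI1 : ∀ f : Ω → ℝ, ∫ ω, f ω ∂(P[|s]) = qr⁻¹ * ∫ ω in s, f ω ∂P := by
    intro f
    rw [ProbabilityTheory.cond, integral_smul_measure, smul_eq_mul, ENNReal.toReal_inv]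
  have hI0 : ∀ f : Ω → ℝ, ∫ ω, f ω ∂(P[|t]) = tr⁻¹ * ∫ ω in t, f ω ∂P := by
    intro f
    rw [ProbabilityTheory.cond, integral_smul_measure, smul_eq_mul, ENNReal.toReal_inv]
  have hIntTo1 : ∀ f : Ω → ℝ, Integrable f P → Integrable f (P[|s]) := by
    intro f hf
    exact (hf.restrict (s := s)).smul_measure (by simp [hPs0])
  have hIntOf : ∀ (u : Set Ω), MeasurableSet u → P u ≠ 0 → ∀ f : Ω → ℝ,
      Integrable f (P[|u]) → IntegrableOn f u P := by
    intro u hu hu0 f hf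
    have := hf.smul_measure (c := P u) (measure_ne_top _ _)
    rwa [ProbabilityTheory.cond, smul_smul, ENNReal.mul_inv_cancel hu0 (measure_ne_top _ _), one_smul] at this
  have hae1 : ∀ {p : Ω → Prop}, (∀ᵐ ω ∂P, p ω) → (∀ᵐ ω ∂(P[|s]), p ω) := by
    intro p hp
    exact hp.filter_mono (cond_absolutelyContinuous).ae_le
  have hae0 : ∀ {p : Ω → Prop}, (∀ᵐ ω ∂P, p ω) → (∀ᵐ ω ∂(P[|t]), p ω) := by
    intro p hp
    exact hp.filter_mono (cond_absolutelyContinuous).ae_le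
  have haeC : ∀ {p : Ω → Prop}, (∀ᵐ ω ∂(P[|s]), p ω) → (∀ᵐ ω ∂(P[|t]), p ω) →
      ∀ᵐ ω ∂P, p ω := by
    intro p h1 h0
    rw [ae_iff] at h1 h0 ⊢
    have e1 : P.restrict s {a | ¬ p a} = 0 := by
      rw [ProbabilityTheory.cond, Measure.smul_apply, smul_eq_mul] at h1
      rcases mul_eq_zero.mp h1 with h | h
      · exact absurd h (by simp [hPs_top])
      · exact h
    have e0 : P.restrict t {a | ¬ p a} = 0 := by
      rw [ProbabilityTheory.cond, Measure.smul_apply, smul_eq_mul] at h0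
      rcases mul_eq_zero.mp h0 with h | h
      · exact absurd h (by simp [hPt_top])
      · exact h
    have := Measure.restrict_add_restrict_compl (μ := P) hs
    calc P {a | ¬ p a} = (P.restrict s + P.restrict sᶜ) {a | ¬ p a} := by rw [this]
      _ = 0 := by rw [Measure.add_apply, e1, ← hts, e0, add_zero]
  -- sigma-algebra m and measurability helpers
  have hZX : Measurable fun ω => (Z ω, X ω) := hZ.prodMk hX
  have hm : MeasurableSpace.comap (fun ω => (Z ω, X ω)) inferInstance
      ≤ ‹MeasurableSpace Ω› := measurable_iff_comap_le.mp hZX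
  have hmm : ∀ F : Bool × 𝒳 → ℝ, Measurable F →
      StronglyMeasurable[MeasurableSpace.comap (fun ω => (Z ω, X ω)) inferInstance]
        fun ω => F (Z ω, X ω) := by
    intro F hF
    exact (hF.comp (Measurable.of_comap_le le_rfl)).stronglyMeasurable
  have hamb : ∀ F : Bool × 𝒳 → ℝ, Measurable F → Measurable fun ω => F (Z ω, X ω) :=
    fun F hF => hF.comp hZX
  -- the two summands
  set Del : ℝ := ∫ ω', Hfun (X ω') ∂(P[|s]) with hDel_def
  set A : Ω → ℝ := fun ω =>
      (if Z ω then (1:ℝ) else -1) *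
          ((if R ω then (1:ℝ) else 0) / qr *
              (Y ω - Hfun (X ω) * taubar (Z ω) (X ω) - wfun (X ω)) -
            (if R ω then (0:ℝ) else 1) / qr *
              (pi (Z ω) (X ω) / (1 - pi (Z ω) (X ω))) * Hfun (X ω) *
              ((if D ω then (1:ℝ) else 0) - taubar (Z ω) (X ω))) /
          (lambar (Z ω) (X ω) * (taubar true (X ω) - taubar false (X ω))) with hA_def
  set B : Ω → ℝ := fun ω =>
      (if R ω then (1:ℝ) else 0) / qr * (Hfun (X ω) - Del) with hB_def
  -- B is integrable with mean zero
  have hBind : B = s.indicator (fun ω => (Hfun (X ω) - Del) * qr⁻¹) := by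
    funext ω
    rw [Set.indicator_apply]
    by_cases h : R ω = true
    · have hω : ω ∈ s := h
      rw [if_pos hω]
      simp only [hB_def, h, if_true]
      ring
    · have hω : ω ∉ s := h
      rw [if_neg hω]
      simp only [hB_def, if_neg h]
      ring
  have hHon : IntegrableOn (fun ω => Hfun (X ω)) s P := hIntOf s hs hPs0 _ hHint
  have hB_int : Integrable B P := by
    rw [hBind, integrable_indicator_iff hs]
    exact (hHon.sub (integrableOn_const (measure_ne_top _ _))).mul_const _
  have hB0 : ∫ ω, B ω ∂P = 0 := by
    rw [hBind, integral_indicator hs, integral_mul_const]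
    have h1 : ∫ ω in s, (Hfun (X ω) - Del) ∂P = qr * ∫ ω, (Hfun (X ω) - Del) ∂(P[|s]) := by
      rw [hI1]
      field_simp
    have h2 : ∫ ω, (Hfun (X ω) - Del) ∂(P[|s]) = 0 := by
      rw [integral_sub hHint (integrable_const _), integral_const]
      simp [hDel_def]
    rw [h1, h2, mul_zero, zero_mul]
  -- reduce the goal to the first summand
  show ∫ ω, (A ω + B ω) ∂P = 0
  have hint' : Integrable (fun ω => A ω + B ω) P := hint
  have hA_int : Integrable A P := by
    have h := hint'.sub hB_int
    exact h.congr (ae_of_all _ fun ω => by simp)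
  rw [integral_add (hint'.sub hB_int |>.congr (ae_of_all _ fun ω => by simp)) hB_int, hB0,
    add_zero]
  -- ambient measurability of the building blocks
  have h_tauZX : Measurable fun ω => tau (Z ω) (X ω) := htau_meas.comp hZX
  have h_tbZX : Measurable fun ω => taubar (Z ω) (X ω) := htaubar_meas.comp hZX
  have h_piZX : Measurable fun ω => pi (Z ω) (X ω) := hpi_meas.comp hZX
  have h_lamZX : Measurable fun ω => lambar (Z ω) (X ω) := hlambar_meas.comp hZX
  have h_tbt : Measurable fun ω => taubar true (X ω) :=
    htaubar_meas.comp (measurable_const.prodMk hX)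
  have h_tbf : Measurable fun ω => taubar false (X ω) :=
    htaubar_meas.comp (measurable_const.prodMk hX)
  have h_HX : Measurable fun ω => Hfun (X ω) := hHfun_meas.comp hX
  have h_wX : Measurable fun ω => wfun (X ω) := hwfun_meas.comp hX
  have hRind_meas : Measurable fun ω => if R ω then (1:ℝ) else 0 :=
    Measurable.ite (hR (measurableSet_singleton true)) measurable_const measurable_const
  have hRcind_meas : Measurable fun ω => if R ω then (0:ℝ) else 1 :=
    Measurable.ite (hR (measurableSet_singleton true)) measurable_const measurable_const
  have hDind_meas : Measurable fun ω => if D ω then (1:ℝ) else 0 :=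
    Measurable.ite (hD (measurableSet_singleton true)) measurable_const measurable_const
  have hZind_meas : Measurable fun ω => if Z ω then (1:ℝ) else -1 :=
    Measurable.ite (hZ (measurableSet_singleton true)) measurable_const measurable_const
  have hA_meas : Measurable A := by
    rw [hA_def]
    exact (hZind_meas.mul
      (((hRind_meas.div_const qr).mul ((hY.sub (h_HX.mul h_tbZX)).sub h_wX)).sub
        ((((hRcind_meas.div_const qr).mul
            (h_piZX.div (measurable_const.sub h_piZX))).mul h_HX).mul
          (hDind_meas.sub h_tbZX)))).div (h_lamZX.mul (h_tbt.sub h_tbf))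
  -- the working-model functions on Bool × 𝒳 and the truncation
  set G1 : Bool × 𝒳 → ℝ := fun p =>
    (if p.1 then (1:ℝ) else -1) /
      (qr * (lambar p.1 p.2 * (taubar true p.2 - taubar false p.2))) with hG1_def
  set G2 : Bool × 𝒳 → ℝ := fun p => G1 p * Hfun p.2 with hG2_def
  set G3 : Bool × 𝒳 → ℝ := fun p => G2 p * taubar p.1 p.2 with hG3_def
  set G4 : Bool × 𝒳 → ℝ := fun p => G1 p * wfun p.2 with hG4_def
  set G5 : Bool × 𝒳 → ℝ := fun p => G2 p * (pi p.1 p.2 / (1 - pi p.1 p.2)) with hG5_def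
  set G6 : Bool × 𝒳 → ℝ := fun p => G5 p * taubar p.1 p.2 with hG6_def
  set Bnd : Bool × 𝒳 → ℝ := fun p =>
    |G1 p| + |G2 p| + |G3 p| + |G4 p| + |G5 p| + |G6 p| with hBnd_def
  set chi : ℕ → Bool × 𝒳 → ℝ := fun n p => if Bnd p ≤ n then 1 else 0 with hchi_def
  have hEzm : Measurable fun p : Bool × 𝒳 => if p.1 then (1:ℝ) else -1 :=
    Measurable.ite (measurable_fst (measurableSet_singleton true))
      measurable_const measurable_const
  have h_ptbt : Measurable fun p : Bool × 𝒳 => taubar true p.2 :=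
    htaubar_meas.comp (measurable_const.prodMk measurable_snd)
  have h_ptbf : Measurable fun p : Bool × 𝒳 => taubar false p.2 :=
    htaubar_meas.comp (measurable_const.prodMk measurable_snd)
  have hG1m : Measurable G1 := by
    rw [hG1_def]
    exact hEzm.div (measurable_const.mul (hlambar_meas.mul (h_ptbt.sub h_ptbf)))
  have hG2m : Measurable G2 := by
    rw [hG2_def]; exact hG1m.mul (hHfun_meas.comp measurable_snd)
  have hG3m : Measurable G3 := by rw [hG3_def]; exact hG2m.mul htaubar_meas
  have hG4m : Measurable G4 := by
    rw [hG4_def]; exact hG1m.mul (hwfun_meas.comp measurable_snd)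
  have hG5m : Measurable G5 := by
    rw [hG5_def]; exact hG2m.mul (hpi_meas.div (measurable_const.sub hpi_meas))
  have hG6m : Measurable G6 := by rw [hG6_def]; exact hG5m.mul htaubar_meas
  have hBndm : Measurable Bnd := by
    rw [hBnd_def]
    exact ((((hG1m.abs.add hG2m.abs).add hG3m.abs).add hG4m.abs).add hG5m.abs).add hG6m.abs
  have hchim : ∀ n : ℕ, Measurable (chi n) := by
    intro n
    rw [hchi_def]
    exact Measurable.ite (measurableSet_le hBndm measurable_const)
      measurable_const measurable_const
  have hchi_le : ∀ (n : ℕ) (p : Bool × 𝒳), |chi n p| ≤ 1 := by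
    intro n p
    rw [hchi_def]
    by_cases h : Bnd p ≤ (n:ℝ) <;> simp [h]
  have hmul_le : ∀ (n : ℕ) (G : Bool × 𝒳 → ℝ), (∀ p, |G p| ≤ Bnd p) →
      ∀ p, |G p * chi n p| ≤ (n:ℝ) := by
    intro n G hG p
    rw [hchi_def]
    by_cases h : Bnd p ≤ (n:ℝ)
    · simpa [h] using (hG p).trans h
    · simp [h]
  have hG1le : ∀ p, |G1 p| ≤ Bnd p := by
    intro p; simp only [hBnd_def]
    have := abs_nonneg (G2 p); have := abs_nonneg (G3 p); have := abs_nonneg (G4 p)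
    have := abs_nonneg (G5 p); have := abs_nonneg (G6 p); linarith
  have hG2le : ∀ p, |G2 p| ≤ Bnd p := by
    intro p; simp only [hBnd_def]
    have := abs_nonneg (G1 p); have := abs_nonneg (G3 p); have := abs_nonneg (G4 p)
    have := abs_nonneg (G5 p); have := abs_nonneg (G6 p); linarith
  have hG3le : ∀ p, |G3 p| ≤ Bnd p := by
    intro p; simp only [hBnd_def]
    have := abs_nonneg (G1 p); have := abs_nonneg (G2 p); have := abs_nonneg (G4 p)
    have := abs_nonneg (G5 p); have := abs_nonneg (G6 p); linarith
  have hG4le : ∀ p, |G4 p| ≤ Bnd p := by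
    intro p; simp only [hBnd_def]
    have := abs_nonneg (G1 p); have := abs_nonneg (G2 p); have := abs_nonneg (G3 p)
    have := abs_nonneg (G5 p); have := abs_nonneg (G6 p); linarith
  have hG5le : ∀ p, |G5 p| ≤ Bnd p := by
    intro p; simp only [hBnd_def]
    have := abs_nonneg (G1 p); have := abs_nonneg (G2 p); have := abs_nonneg (G3 p)
    have := abs_nonneg (G4 p); have := abs_nonneg (G6 p); linarith
  have hG6le : ∀ p, |G6 p| ≤ Bnd p := by
    intro p; simp only [hBnd_def]
    have := abs_nonneg (G1 p); have := abs_nonneg (G2 p); have := abs_nonneg (G3 p)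
    have := abs_nonneg (G4 p); have := abs_nonneg (G5 p); linarith
  -- a.e. bound on tau
  have htau_bdd1 : ∀ᵐ ω ∂(P[|s]), |tau (Z ω) (X ω)| ≤ 1 := by
    have hb := ae_bdd_condExp_of_ae_bdd (μ := P[|s])
      (m := MeasurableSpace.comap (fun ω => (Z ω, X ω)) inferInstance) (R := 1)
      (f := fun ω => if D ω then (1:ℝ) else 0)
      (ae_of_all _ fun ω => by by_cases h : D ω = true <;> simp [h])
    filter_upwards [htau_ver, hb] with ω h1 h2
    rw [h1]; simpa using h2
  have htau_bdd0 : ∀ᵐ ω ∂(P[|t]), |tau (Z ω) (X ω)| ≤ 1 := by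
    have hb := ae_bdd_condExp_of_ae_bdd (μ := P[|t])
      (m := MeasurableSpace.comap (fun ω => (Z ω, X ω)) inferInstance) (R := 1)
      (f := fun ω => if D ω then (1:ℝ) else 0)
      (ae_of_all _ fun ω => by by_cases h : D ω = true <;> simp [h])
    filter_upwards [hpse, hb] with ω h1 h2
    rw [h1]; simpa using h2
  have htau_bddP : ∀ᵐ ω ∂P, |tau (Z ω) (X ω)| ≤ 1 := haeC htau_bdd1 htau_bdd0
  -- the truncated integrals all vanish
  have hRind_int : Integrable (fun ω => if R ω then (1:ℝ) else 0) P :=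
    aux_int_of_bdd hRind_meas.aestronglyMeasurable (C := 1)
      (ae_of_all _ fun ω => by by_cases h : R ω = true <;> simp [h])
  have hRcind_int : Integrable (fun ω => if R ω then (0:ℝ) else 1) P :=
    aux_int_of_bdd hRcind_meas.aestronglyMeasurable (C := 1)
      (ae_of_all _ fun ω => by by_cases h : R ω = true <;> simp [h])
  have hRc_ver : P[(fun ω => if R ω then (0:ℝ) else 1)|
      MeasurableSpace.comap (fun ω => (Z ω, X ω)) inferInstance]
      =ᵐ[P] fun ω => 1 - pi (Z ω) (X ω) := by
    have heq : (fun ω => if R ω then (0:ℝ) else 1)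
        = (fun _ => (1:ℝ)) - fun ω => if R ω then (1:ℝ) else 0 := by
      funext ω; by_cases h : R ω = true <;> simp [h]
    rw [heq]
    have h1 := condExp_sub (μ := P)
      (m := MeasurableSpace.comap (fun ω => (Z ω, X ω)) inferInstance)
      (integrable_const (1:ℝ)) hRind_int
    refine h1.trans ?_
    have h2 : P[(fun _ : Ω => (1:ℝ))|
        MeasurableSpace.comap (fun ω => (Z ω, X ω)) inferInstance] = fun _ => 1 :=
      condExp_const hm 1
    filter_upwards [hpi_ver] with ω hω
    simp [h2, Pi.sub_apply, ← hω]
  have hFn0 : ∀ n : ℕ, ∫ ω, A ω * chi n (Z ω, X ω) ∂P = 0 := by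
    intro n
    have hchiZX_meas : Measurable fun ω => chi n (Z ω, X ω) := (hchim n).comp hZX
    have hGchi_meas : ∀ (G : Bool × 𝒳 → ℝ), Measurable G →
        Measurable fun ω => G (Z ω, X ω) * chi n (Z ω, X ω) := fun G hG =>
      (hG.comp hZX).mul hchiZX_meas
    set u1 : Ω → ℝ := fun ω =>
      (Y ω - Hfun (X ω) * taubar (Z ω) (X ω) - wfun (X ω)) *
        (G1 (Z ω, X ω) * chi n (Z ω, X ω)) with hu1_def
    set u2 : Ω → ℝ := fun ω =>
      ((if D ω then (1:ℝ) else 0) - taubar (Z ω) (X ω)) *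
        (G5 (Z ω, X ω) * chi n (Z ω, X ω)) with hu2_def
    set phi1 : Ω → ℝ := fun ω =>
      (G2 (Z ω, X ω) * chi n (Z ω, X ω)) * (tau (Z ω) (X ω) - taubar (Z ω) (X ω))
      with hphi1_def
    set phi0 : Ω → ℝ := fun ω =>
      (G5 (Z ω, X ω) * chi n (Z ω, X ω)) * (tau (Z ω) (X ω) - taubar (Z ω) (X ω))
      with hphi0_def
    have hsplit : ∀ ω, A ω * chi n (Z ω, X ω) =
        (if R ω = true then u1 ω else 0) - (if R ω = true then 0 else u2 ω) := by
      intro ω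
      by_cases h : R ω = true
      · rw [if_pos h, if_pos h, sub_zero]
        simp only [hA_def, hu1_def, hG1_def, h, if_true]
        exact aux_alg1 hqr_pos.ne'
      · rw [if_neg h, if_neg h, zero_sub]
        simp only [hA_def, hu2_def, hG5_def, hG2_def, hG1_def, if_neg h]
        exact aux_alg2 hqr_pos.ne'
    have hFn_int : Integrable (fun ω => A ω * chi n (Z ω, X ω)) P := by
      have h := hA_int.bdd_mul hchiZX_meas.aestronglyMeasurable
        (c := 1) (ae_of_all _ fun ω => by rw [Real.norm_eq_abs]; exact hchi_le n _)
      exact h.congr (ae_of_all _ fun ω => mul_comm _ _)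
    have he1 : (fun ω => if R ω = true then u1 ω else 0)
        = s.indicator (fun ω => A ω * chi n (Z ω, X ω)) := by
      funext ω
      rw [Set.indicator_apply]
      by_cases h : R ω = true
      · rw [if_pos h, if_pos (show ω ∈ s from h), hsplit ω, if_pos h, if_pos h, sub_zero]
      · rw [if_neg h, if_neg (show ω ∉ s from h)]
    have he2 : (fun ω => if R ω = true then 0 else u2 ω)
        = fun ω => - t.indicator (fun ω => A ω * chi n (Z ω, X ω)) ω := by
      funext ω
      rw [Set.indicator_apply]
      by_cases h : R ω = true
      · have hω : ω ∉ t := by simp [ht_def, h]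
        rw [if_pos h, if_neg hω, neg_zero]
      · have hω : ω ∈ t := by
          have : R ω = false := Bool.eq_false_iff.mpr h
          simpa [ht_def] using this
        rw [if_neg h, if_pos hω, hsplit ω, if_neg h, if_neg h, zero_sub, neg_neg]
    have hu1_int : Integrable (fun ω => if R ω = true then u1 ω else 0) P := by
      rw [he1]; exact hFn_int.indicator hs
    have hu2_int : Integrable (fun ω => if R ω = true then 0 else u2 ω) P := by
      rw [he2]; exact (hFn_int.indicator ht).neg
    have he1' : (fun ω => if R ω = true then u1 ω else 0) = s.indicator u1 := by
      funext ω
      rw [Set.indicator_apply]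
      by_cases h : R ω = true
      · rw [if_pos h, if_pos (show ω ∈ s from h)]
      · rw [if_neg h, if_neg (show ω ∉ s from h)]
    have he2' : (fun ω => if R ω = true then 0 else u2 ω) = t.indicator u2 := by
      funext ω
      rw [Set.indicator_apply]
      by_cases h : R ω = true
      · have hω : ω ∉ t := by simp [ht_def, h]
        rw [if_pos h, if_neg hω]
      · have hω : ω ∈ t := by
          have : R ω = false := Bool.eq_false_iff.mpr h
          simpa [ht_def] using this
        rw [if_neg h, if_pos hω]
    have hstep : ∫ ω, A ω * chi n (Z ω, X ω) ∂P
        = (∫ ω, (if R ω = true then u1 ω else 0) ∂P)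
          - ∫ ω, (if R ω = true then 0 else u2 ω) ∂P := by
      rw [← integral_sub hu1_int hu2_int]
      exact integral_congr_ae (ae_of_all _ hsplit)
    have hi1 : ∫ ω, (if R ω = true then u1 ω else 0) ∂P = qr * ∫ ω, u1 ω ∂(P[|s]) := by
      rw [he1', integral_indicator hs, hI1, ← mul_assoc, mul_inv_cancel₀ hqr_pos.ne',
        one_mul]
    have hi2 : ∫ ω, (if R ω = true then 0 else u2 ω) ∂P = tr * ∫ ω, u2 ω ∂(P[|t]) := by
      rw [he2', integral_indicator ht, hI0, ← mul_assoc, mul_inv_cancel₀ htr_pos.ne',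
        one_mul]
    -- the P[|s] side
    have hu1_eq : ∀ ω, u1 ω = (G1 (Z ω, X ω) * chi n (Z ω, X ω)) * Y ω
        - (G3 (Z ω, X ω) * chi n (Z ω, X ω) + G4 (Z ω, X ω) * chi n (Z ω, X ω)) := by
      intro ω; simp only [hu1_def, hG3_def, hG4_def, hG2_def]; ring
    have haY_int : Integrable (fun ω => (G1 (Z ω, X ω) * chi n (Z ω, X ω)) * Y ω)
        (P[|s]) :=
      (hIntTo1 Y hYint).bdd_mul (hGchi_meas G1 hG1m).aestronglyMeasurable
        (c := (n:ℝ)) (ae_of_all _ fun ω => by rw [Real.norm_eq_abs]; exact hmul_le n G1 hG1le _)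
    have hb1_int : Integrable (fun ω => G3 (Z ω, X ω) * chi n (Z ω, X ω)
        + G4 (Z ω, X ω) * chi n (Z ω, X ω)) (P[|s]) :=
      aux_int_of_bdd ((hGchi_meas G3 hG3m).add (hGchi_meas G4 hG4m)).aestronglyMeasurable
        (C := (n:ℝ) + n)
        (ae_of_all _ fun ω => (abs_add_le _ _).trans
          (add_le_add (hmul_le n G3 hG3le _) (hmul_le n G4 hG4le _)))
    have hmid_int : Integrable (fun ω =>
        (G1 (Z ω, X ω) * chi n (Z ω, X ω)) *
          (Hfun (X ω) * tau (Z ω) (X ω) + wfun (X ω))) (P[|s]) := by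
      refine aux_int_of_bdd
        (((hGchi_meas G1 hG1m).mul ((h_HX.mul h_tauZX).add h_wX)).aestronglyMeasurable)
        (C := (n:ℝ) * 1 + n) ?_
      filter_upwards [htau_bdd1] with ω hτ
      have heq : (G1 (Z ω, X ω) * chi n (Z ω, X ω)) *
            (Hfun (X ω) * tau (Z ω) (X ω) + wfun (X ω))
          = (G2 (Z ω, X ω) * chi n (Z ω, X ω)) * tau (Z ω) (X ω)
            + G4 (Z ω, X ω) * chi n (Z ω, X ω) := by
        simp only [hG2_def, hG4_def]; ring
      rw [heq]
      refine (abs_add_le _ _).trans (add_le_add ?_ (hmul_le n G4 hG4le _))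
      rw [abs_mul]
      exact mul_le_mul (hmul_le n G2 hG2le _) hτ (abs_nonneg _) (Nat.cast_nonneg n)
    have hpull1 : ∫ ω, (G1 (Z ω, X ω) * chi n (Z ω, X ω)) * Y ω ∂(P[|s])
        = ∫ ω, (G1 (Z ω, X ω) * chi n (Z ω, X ω)) *
            (Hfun (X ω) * tau (Z ω) (X ω) + wfun (X ω)) ∂(P[|s]) := by
      exact aux_pullout hm (by exact hmm (fun p => G1 p * chi n p) (hG1m.mul (hchim n)))
        (hIntTo1 Y hYint) haY_int hout
    have hP1 : ∫ ω, u1 ω ∂(P[|s]) = ∫ ω, phi1 ω ∂(P[|s]) := by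
      calc ∫ ω, u1 ω ∂(P[|s])
          = ∫ ω, ((G1 (Z ω, X ω) * chi n (Z ω, X ω)) * Y ω
            - (G3 (Z ω, X ω) * chi n (Z ω, X ω) + G4 (Z ω, X ω) * chi n (Z ω, X ω)))
              ∂(P[|s]) := integral_congr_ae (ae_of_all _ hu1_eq)
        _ = (∫ ω, (G1 (Z ω, X ω) * chi n (Z ω, X ω)) * Y ω ∂(P[|s]))
            - ∫ ω, (G3 (Z ω, X ω) * chi n (Z ω, X ω)
              + G4 (Z ω, X ω) * chi n (Z ω, X ω)) ∂(P[|s]) :=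
            integral_sub haY_int hb1_int
        _ = (∫ ω, (G1 (Z ω, X ω) * chi n (Z ω, X ω)) *
              (Hfun (X ω) * tau (Z ω) (X ω) + wfun (X ω)) ∂(P[|s]))
            - ∫ ω, (G3 (Z ω, X ω) * chi n (Z ω, X ω)
              + G4 (Z ω, X ω) * chi n (Z ω, X ω)) ∂(P[|s]) := by rw [hpull1]
        _ = ∫ ω, ((G1 (Z ω, X ω) * chi n (Z ω, X ω)) *
              (Hfun (X ω) * tau (Z ω) (X ω) + wfun (X ω))
            - (G3 (Z ω, X ω) * chi n (Z ω, X ω)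
              + G4 (Z ω, X ω) * chi n (Z ω, X ω))) ∂(P[|s]) :=
            (integral_sub hmid_int hb1_int).symm
        _ = ∫ ω, phi1 ω ∂(P[|s]) := integral_congr_ae (ae_of_all _ fun ω => by
            simp only [hphi1_def, hG2_def, hG3_def, hG4_def]; ring)
    -- the P[|t] side
    have hu2_eq : ∀ ω, u2 ω = (G5 (Z ω, X ω) * chi n (Z ω, X ω)) *
        (if D ω then (1:ℝ) else 0) - G6 (Z ω, X ω) * chi n (Z ω, X ω) := by
      intro ω; simp only [hu2_def, hG6_def]; ring
    have hDint0 : Integrable (fun ω => if D ω then (1:ℝ) else 0) (P[|t]) :=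
      aux_int_of_bdd hDind_meas.aestronglyMeasurable (C := 1)
        (ae_of_all _ fun ω => by by_cases h : D ω = true <;> simp [h])
    have haD_int : Integrable (fun ω => (G5 (Z ω, X ω) * chi n (Z ω, X ω)) *
        (if D ω then (1:ℝ) else 0)) (P[|t]) :=
      hDint0.bdd_mul (hGchi_meas G5 hG5m).aestronglyMeasurable
        (c := (n:ℝ)) (ae_of_all _ fun ω => by rw [Real.norm_eq_abs]; exact hmul_le n G5 hG5le _)
    have hb0_int : Integrable (fun ω => G6 (Z ω, X ω) * chi n (Z ω, X ω)) (P[|t]) :=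
      aux_int_of_bdd (hGchi_meas G6 hG6m).aestronglyMeasurable (C := (n:ℝ))
        (ae_of_all _ fun ω => hmul_le n G6 hG6le _)
    have hmid0_int : Integrable (fun ω =>
        (G5 (Z ω, X ω) * chi n (Z ω, X ω)) * tau (Z ω) (X ω)) (P[|t]) := by
      refine aux_int_of_bdd ((hGchi_meas G5 hG5m).mul h_tauZX).aestronglyMeasurable
        (C := (n:ℝ) * 1) ?_
      filter_upwards [htau_bdd0] with ω hτ
      rw [abs_mul]
      exact mul_le_mul (hmul_le n G5 hG5le _) hτ (abs_nonneg _) (Nat.cast_nonneg n)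
    have hpull0 : ∫ ω, (G5 (Z ω, X ω) * chi n (Z ω, X ω)) *
          (if D ω then (1:ℝ) else 0) ∂(P[|t])
        = ∫ ω, (G5 (Z ω, X ω) * chi n (Z ω, X ω)) * tau (Z ω) (X ω) ∂(P[|t]) := by
      exact aux_pullout hm (by exact hmm (fun p => G5 p * chi n p) (hG5m.mul (hchim n)))
        hDint0 haD_int hpse.symm
    have hP0' : ∫ ω, u2 ω ∂(P[|t]) = ∫ ω, phi0 ω ∂(P[|t]) := by
      calc ∫ ω, u2 ω ∂(P[|t])
          = ∫ ω, ((G5 (Z ω, X ω) * chi n (Z ω, X ω)) * (if D ω then (1:ℝ) else 0)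
            - G6 (Z ω, X ω) * chi n (Z ω, X ω)) ∂(P[|t]) :=
            integral_congr_ae (ae_of_all _ hu2_eq)
        _ = (∫ ω, (G5 (Z ω, X ω) * chi n (Z ω, X ω)) * (if D ω then (1:ℝ) else 0) ∂(P[|t]))
            - ∫ ω, G6 (Z ω, X ω) * chi n (Z ω, X ω) ∂(P[|t]) :=
            integral_sub haD_int hb0_int
        _ = (∫ ω, (G5 (Z ω, X ω) * chi n (Z ω, X ω)) * tau (Z ω) (X ω) ∂(P[|t]))
            - ∫ ω, G6 (Z ω, X ω) * chi n (Z ω, X ω) ∂(P[|t]) := by rw [hpull0]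
        _ = ∫ ω, ((G5 (Z ω, X ω) * chi n (Z ω, X ω)) * tau (Z ω) (X ω)
            - G6 (Z ω, X ω) * chi n (Z ω, X ω)) ∂(P[|t]) :=
            (integral_sub hmid0_int hb0_int).symm
        _ = ∫ ω, phi0 ω ∂(P[|t]) := integral_congr_ae (ae_of_all _ fun ω => by
            simp only [hphi0_def, hG6_def]; ring)
    -- back to P
    have hback1 : qr * ∫ ω, phi1 ω ∂(P[|s])
        = ∫ ω, phi1 ω * (if R ω then (1:ℝ) else 0) ∂P := by
      rw [hI1, ← mul_assoc, mul_inv_cancel₀ hqr_pos.ne', one_mul, ← integral_indicator hs]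
      refine integral_congr_ae (ae_of_all _ fun ω => ?_)
      by_cases h : R ω = true
      · simp only [Set.indicator_apply]
        rw [if_pos (show ω ∈ s from h)]
        simp [h]
      · simp only [Set.indicator_apply]
        rw [if_neg (show ω ∉ s from h)]
        simp [h]
    have hback0 : tr * ∫ ω, phi0 ω ∂(P[|t])
        = ∫ ω, phi0 ω * (if R ω then (0:ℝ) else 1) ∂P := by
      rw [hI0, ← mul_assoc, mul_inv_cancel₀ htr_pos.ne', one_mul, ← integral_indicator ht]
      refine integral_congr_ae (ae_of_all _ fun ω => ?_)
      by_cases h : R ω = true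
      · have hω : ω ∉ t := by simp [ht_def, h]
        simp only [Set.indicator_apply]
        rw [if_neg hω]
        simp [h]
      · have hω : ω ∈ t := by
          have : R ω = false := Bool.eq_false_iff.mpr h
          simpa [ht_def] using this
        simp only [Set.indicator_apply]
        rw [if_pos hω]
        simp [h]
    -- a.e. bounds for phi1, phi0 under P
    have hphi1_bd : ∀ᵐ ω ∂P, |phi1 ω| ≤ (n:ℝ) * 1 + n := by
      filter_upwards [htau_bddP] with ω hτ
      have heq : phi1 ω = (G2 (Z ω, X ω) * chi n (Z ω, X ω)) * tau (Z ω) (X ω)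
          - G3 (Z ω, X ω) * chi n (Z ω, X ω) := by
        simp only [hphi1_def, hG3_def]; ring
      rw [heq, sub_eq_add_neg]
      refine (abs_add_le _ _).trans (add_le_add ?_ ?_)
      · rw [abs_mul]
        exact mul_le_mul (hmul_le n G2 hG2le _) hτ (abs_nonneg _) (Nat.cast_nonneg n)
      · rw [abs_neg]; exact hmul_le n G3 hG3le _
    have hphi0_bd : ∀ᵐ ω ∂P, |phi0 ω| ≤ (n:ℝ) * 1 + n := by
      filter_upwards [htau_bddP] with ω hτ
      have heq : phi0 ω = (G5 (Z ω, X ω) * chi n (Z ω, X ω)) * tau (Z ω) (X ω)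
          - G6 (Z ω, X ω) * chi n (Z ω, X ω) := by
        simp only [hphi0_def, hG6_def]; ring
      rw [heq, sub_eq_add_neg]
      refine (abs_add_le _ _).trans (add_le_add ?_ ?_)
      · rw [abs_mul]
        exact mul_le_mul (hmul_le n G5 hG5le _) hτ (abs_nonneg _) (Nat.cast_nonneg n)
      · rw [abs_neg]; exact hmul_le n G6 hG6le _
    have hphi1_meas : Measurable phi1 := by
      rw [hphi1_def]
      exact (hGchi_meas G2 hG2m).mul (h_tauZX.sub h_tbZX)
    have hphi0_meas : Measurable phi0 := by
      rw [hphi0_def]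
      exact (hGchi_meas G5 hG5m).mul (h_tauZX.sub h_tbZX)
    -- pull out the conditional expectations of the R indicators
    have hpullA : ∫ ω, phi1 ω * (if R ω then (1:ℝ) else 0) ∂P
        = ∫ ω, phi1 ω * pi (Z ω) (X ω) ∂P := by
      refine aux_pullout hm ?_ hRind_int ?_ hpi_ver.symm
      · exact hmm (fun p => G2 p * chi n p * (tau p.1 p.2 - taubar p.1 p.2))
          ((hG2m.mul (hchim n)).mul (htau_meas.sub htaubar_meas))
      · refine aux_int_of_bdd (hphi1_meas.mul hRind_meas).aestronglyMeasurable
          (C := ((n:ℝ) * 1 + n) * 1) ?_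
        filter_upwards [hphi1_bd] with ω hb
        rw [abs_mul]
        refine mul_le_mul hb ?_ (abs_nonneg _) (by positivity)
        by_cases h : R ω = true <;> simp [h]
    have hpullB : ∫ ω, phi0 ω * (if R ω then (0:ℝ) else 1) ∂P
        = ∫ ω, phi0 ω * (1 - pi (Z ω) (X ω)) ∂P := by
      refine aux_pullout hm ?_ hRcind_int ?_ hRc_ver
      · exact hmm (fun p => G5 p * chi n p * (tau p.1 p.2 - taubar p.1 p.2))
          ((hG5m.mul (hchim n)).mul (htau_meas.sub htaubar_meas))
      · refine aux_int_of_bdd (hphi0_meas.mul hRcind_meas).aestronglyMeasurable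
          (C := ((n:ℝ) * 1 + n) * 1) ?_
        filter_upwards [hphi0_bd] with ω hb
        rw [abs_mul]
        refine mul_le_mul hb ?_ (abs_nonneg _) (by positivity)
        by_cases h : R ω = true <;> simp [h]
    -- the two conditional integrals agree
    have hfinal : ∫ ω, phi1 ω * pi (Z ω) (X ω) ∂P
        = ∫ ω, phi0 ω * (1 - pi (Z ω) (X ω)) ∂P := by
      refine integral_congr_ae ?_
      filter_upwards [hpi_pos] with ω hω
      have hne : 1 - pi (Z ω) (X ω) ≠ 0 := (sub_pos.mpr hω.2).ne'
      simp only [hphi0_def, hphi1_def, hG5_def]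
      field_simp
    rw [hstep, hi1, hi2, hP1, hP0', hback1, hback0, hpullA, hpullB, hfinal, sub_self]
  -- dominated convergence
  have hFmeas : ∀ n : ℕ, AEStronglyMeasurable (fun ω => A ω * chi n (Z ω, X ω)) P :=
    fun n => (hA_meas.mul ((hchim n).comp hZX)).aestronglyMeasurable
  have hkey : Filter.Tendsto (fun n => ∫ ω, A ω * chi n (Z ω, X ω) ∂P)
      Filter.atTop (nhds (∫ ω, A ω ∂P)) := by
    refine tendsto_integral_of_dominated_convergence (fun ω => |A ω|) hFmeas hA_int.abs
      (fun n => ae_of_all _ fun ω => ?_) (ae_of_all _ fun ω => ?_)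
    · rw [Real.norm_eq_abs, abs_mul]
      exact mul_le_of_le_one_right (abs_nonneg _) (hchi_le n _)
    · refine Filter.Tendsto.congr' ?_ tendsto_const_nhds
      filter_upwards [Filter.eventually_ge_atTop ⌈Bnd (Z ω, X ω)⌉₊] with n hn
      have hle : Bnd (Z ω, X ω) ≤ (n:ℝ) := le_trans (Nat.le_ceil _) (by exact_mod_cast hn)
      rw [hchi_def]
      simp [hle]
  rw [show (fun n : ℕ => ∫ ω, A ω * chi n (Z ω, X ω) ∂P) = fun _ : ℕ => (0:ℝ) from
    funext hFn0] at hkey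
  exact tendsto_nhds_unique hkey tendsto_const_nhds
end

section
/- (Unbiasedness of the 𝓜₂ estimating function at the truth.) Suppose E(Y | Z, X, R=1) = 𝓗(X)·τ(Z,X) + ω(X) a.s. for measurable functions 𝓗, ω, and P(D=1 | Z,X,R=0) = τ(Z,X) a.s. (propensity score equality). Then for every measurable function G : 𝒳×{0,1} → ℝ^k such that the integrand is integrable, E[ G(X,Z) · { R·[Y − 𝓗(X)·τ(Z,X) − ω(X)] − (1−R)·𝓗(X)·[D − τ(Z,X)] } ] = 0. -/
open MeasureTheory ProbabilityTheory

lemma aux_smul_int {Ω : Type*} {m m0 : MeasurableSpace Ω} (hm : m ≤ m0)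
    (μ : Measure Ω) [IsProbabilityMeasure μ] {k : ℕ}
    (f : Ω → ℝ) (hf : Integrable f μ) (hcond : (μ[f|m]) =ᵐ[μ] 0)
    (G : Ω → EuclideanSpace ℝ (Fin k)) (hG : StronglyMeasurable[m] G)
    (hfG : Integrable (fun ω => f ω • G ω) μ) :
    ∫ ω, f ω • G ω ∂μ = 0 := by
  haveI : SigmaFinite (μ.trim hm) := by infer_instance
  ext i
  have hLi : (∫ ω, f ω • G ω ∂μ) i = ∫ ω, (EuclideanSpace.proj (𝕜 := ℝ) i) (f ω • G ω) ∂μ := by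
    rw [ContinuousLinearMap.integral_comp_comm _ hfG]; rfl
  have hg : StronglyMeasurable[m] (fun ω => (EuclideanSpace.proj (𝕜 := ℝ) i) (G ω)) :=
    (EuclideanSpace.proj (𝕜 := ℝ) i).continuous.comp_stronglyMeasurable hG
  have hgf : Integrable ((fun ω => (EuclideanSpace.proj (𝕜 := ℝ) i) (G ω)) * f) μ := by
    have := ((EuclideanSpace.proj (𝕜 := ℝ) i)).integrable_comp hfG
    refine this.congr (Filter.Eventually.of_forall fun ω => ?_)
    simp [mul_comm]
  have h1 : (μ[(fun ω => (EuclideanSpace.proj (𝕜 := ℝ) i) (G ω)) * f|m]) =ᵐ[μ]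
      (fun ω => (EuclideanSpace.proj (𝕜 := ℝ) i) (G ω)) * (μ[f|m]) :=
    condExp_mul_of_stronglyMeasurable_left hg hgf hf
  have h1' : (μ[(fun ω => (EuclideanSpace.proj (𝕜 := ℝ) i) (G ω)) * f|m]) =ᵐ[μ]
      (0 : Ω → ℝ) := by
    filter_upwards [h1, hcond] with ω hω hω0
    simp only [Pi.mul_apply, Pi.zero_apply] at *
    rw [hω, hω0, mul_zero]
  have h2 : ∫ ω, ((fun ω => (EuclideanSpace.proj (𝕜 := ℝ) i) (G ω)) * f) ω ∂μ = 0 := by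
    rw [← integral_condExp hm, integral_congr_ae h1']
    simp
  rw [hLi]
  have : ∀ ω, (EuclideanSpace.proj (𝕜 := ℝ) i) (f ω • G ω)
      = ((fun ω => (EuclideanSpace.proj (𝕜 := ℝ) i) (G ω)) * f) ω := by
    intro ω; simp [mul_comm]
  rw [integral_congr_ae (Filter.Eventually.of_forall this), h2]
  rfl

lemma aux3 {Ω : Type*} {m m0 : MeasurableSpace Ω} (hm : m ≤ m0)
    (μ : Measure Ω) [IsProbabilityMeasure μ] {k : ℕ}
    (f e : Ω → ℝ) (hfint : Integrable f μ) (heint : Integrable e μ)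
    (hem : StronglyMeasurable[m] e) (heq : (μ[f|m]) =ᵐ[μ] e)
    (G : Ω → EuclideanSpace ℝ (Fin k)) (hGm : StronglyMeasurable[m] G)
    (hintG : Integrable (fun ω => (f ω - e ω) • G ω) μ) :
    ∫ ω, (f ω - e ω) • G ω ∂μ = 0 := by
  haveI : SigmaFinite (μ.trim hm) := by infer_instance
  refine aux_smul_int hm μ (fun ω => f ω - e ω) (hfint.sub heint) ?_ G hGm hintG
  have hsub : (μ[f - e|m]) =ᵐ[μ] (μ[f|m]) - (μ[e|m]) := condExp_sub hfint heint m
  have heeq : μ[e|m] = e := condExp_of_stronglyMeasurable hm hem heint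
  have : (fun ω => f ω - e ω) = f - e := rfl
  rw [this]
  filter_upwards [hsub, heq] with ω h1 h2
  rw [h1]
  simp only [Pi.sub_apply, heeq, Pi.zero_apply, h2, sub_self]

lemma aux_set {Ω E : Type*} [MeasurableSpace Ω] [NormedAddCommGroup E] [NormedSpace ℝ E]
    (P : Measure Ω) [IsProbabilityMeasure P] {s : Set Ω}
    (h : Ω → E)
    (hzero : P s ≠ 0 → ∫ ω, h ω ∂(P[|s]) = 0) :
    ∫ ω in s, h ω ∂P = 0 := by
  by_cases hps : P s = 0
  · rw [Measure.restrict_eq_zero.mpr hps, integral_zero_measure]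
  · have h1 : ∫ ω, h ω ∂(P[|s]) = ((P s)⁻¹).toReal • ∫ ω in s, h ω ∂P := by
      rw [ProbabilityTheory.cond, integral_smul_measure]
    have h2 := hzero hps
    rw [h1] at h2
    have hne : ((P s)⁻¹).toReal ≠ 0 := by
      rw [ENNReal.toReal_inv]
      exact inv_ne_zero (ENNReal.toReal_ne_zero.mpr ⟨hps, measure_ne_top P s⟩)
    rcases smul_eq_zero.mp h2 with h | h
    · exact absurd h hne
    · exact h

/-- Unbiasedness of the 𝓜₂ estimating function at the truth:
If `E(Y | Z, X, R=1) = 𝓗(X)·τ(Z,X) + ω(X)` a.s. and `P(D=1 | Z,X,R=0) = τ(Z,X)` a.s., then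
for every measurable `G : 𝒳×{0,1} → ℝ^k` with integrable integrand,
`E[ G(X,Z)·{ R·[Y − 𝓗(X)τ(Z,X) − ω(X)] − (1−R)·𝓗(X)·[D − τ(Z,X)] } ] = 0`. -/
theorem stmt_11
    {Ω 𝒳 : Type*} [MeasurableSpace Ω] [MeasurableSpace 𝒳] [StandardBorelSpace 𝒳]
    (P : Measure Ω) [IsProbabilityMeasure P]
    (R Z D : Ω → Bool) (X : Ω → 𝒳) (Y : Ω → ℝ)
    (hR : Measurable R) (hZ : Measurable Z) (hD : Measurable D)
    (hX : Measurable X) (hY : Measurable Y) (hYint : Integrable Y P)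
    -- τ(z,x) := P(D=1 | Z=z, X=x, R=1)
    (tau : Bool → 𝒳 → ℝ) (htau_meas : Measurable fun p : Bool × 𝒳 => tau p.1 p.2)
    (htau_ver : (fun ω => tau (Z ω) (X ω)) =ᵐ[P[|{ω | R ω = true}]]
      (P[|{ω | R ω = true}])[(fun ω => if D ω then (1:ℝ) else 0) |
        MeasurableSpace.comap (fun ω => (Z ω, X ω)) inferInstance])
    -- outcome decomposition: E(Y | Z, X, R=1) = 𝓗(X)·τ(Z,X) + ω(X) a.s.
    (Hfun wfun : 𝒳 → ℝ) (hHfun_meas : Measurable Hfun) (hwfun_meas : Measurable wfun)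
    (hout : (P[|{ω | R ω = true}])[Y |
        MeasurableSpace.comap (fun ω => (Z ω, X ω)) inferInstance]
      =ᵐ[P[|{ω | R ω = true}]]
        fun ω => Hfun (X ω) * tau (Z ω) (X ω) + wfun (X ω))
    -- propensity score equality: P(D=1 | Z, X, R=0) = τ(Z,X) a.s.
    (hpse : (fun ω => tau (Z ω) (X ω)) =ᵐ[P[|{ω | R ω = false}]]
      (P[|{ω | R ω = false}])[(fun ω => if D ω then (1:ℝ) else 0) |
        MeasurableSpace.comap (fun ω => (Z ω, X ω)) inferInstance])
    -- arbitrary measurable G : 𝒳×{0,1} → ℝ^k with integrable integrand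
    (k : ℕ) (G : 𝒳 × Bool → EuclideanSpace ℝ (Fin k)) (hG : Measurable G)
    (hint : Integrable (fun ω =>
        ((if R ω then (1:ℝ) else 0) *
            (Y ω - Hfun (X ω) * tau (Z ω) (X ω) - wfun (X ω)) -
          (if R ω then (0:ℝ) else 1) * Hfun (X ω) *
            ((if D ω then (1:ℝ) else 0) - tau (Z ω) (X ω))) • G (X ω, Z ω)) P) :
    ∫ ω, ((if R ω then (1:ℝ) else 0) *
            (Y ω - Hfun (X ω) * tau (Z ω) (X ω) - wfun (X ω)) -
          (if R ω then (0:ℝ) else 1) * Hfun (X ω) *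
            ((if D ω then (1:ℝ) else 0) - tau (Z ω) (X ω))) • G (X ω, Z ω) ∂P = 0 := by
  classical
  have hZXm : @Measurable Ω (Bool × 𝒳)
      (MeasurableSpace.comap (fun ω => (Z ω, X ω)) inferInstance) _
      (fun ω => (Z ω, X ω)) := fun t ht => ⟨t, ht, rfl⟩
  have hm : MeasurableSpace.comap (fun ω : Ω => (Z ω, X ω)) inferInstance
      ≤ ‹MeasurableSpace Ω› := (hZ.prodMk hX).comap_le
  have hs : MeasurableSet {ω | R ω = true} := hR (measurableSet_singleton true)
  have hsc : {ω | R ω = true}ᶜ = {ω | R ω = false} := by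
    ext ω; simp [Bool.not_eq_true]
  rw [← integral_add_compl hs hint]
  have part1 : ∫ ω in {ω | R ω = true},
      ((if R ω then (1:ℝ) else 0) *
            (Y ω - Hfun (X ω) * tau (Z ω) (X ω) - wfun (X ω)) -
          (if R ω then (0:ℝ) else 1) * Hfun (X ω) *
            ((if D ω then (1:ℝ) else 0) - tau (Z ω) (X ω))) • G (X ω, Z ω) ∂P = 0 := by
    apply aux_set
    intro hps
    haveI : IsProbabilityMeasure (P[|{ω | R ω = true}]) :=
      cond_isProbabilityMeasure hps
    have hmem : ∀ᵐ ω ∂(P[|{ω | R ω = true}]), ω ∈ {ω | R ω = true} := by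
      rw [ProbabilityTheory.cond]
      exact Measure.ae_smul_measure (ae_restrict_mem hs) _
    have hcongr : (fun ω => ((if R ω then (1:ℝ) else 0) *
            (Y ω - Hfun (X ω) * tau (Z ω) (X ω) - wfun (X ω)) -
          (if R ω then (0:ℝ) else 1) * Hfun (X ω) *
            ((if D ω then (1:ℝ) else 0) - tau (Z ω) (X ω))) • G (X ω, Z ω))
        =ᵐ[P[|{ω | R ω = true}]]
        fun ω => (Y ω - (Hfun (X ω) * tau (Z ω) (X ω) + wfun (X ω))) • G (X ω, Z ω) := by
      filter_upwards [hmem] with ω hω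
      replace hω : R ω = true := hω
      rw [hω]
      norm_num [sub_sub]
    rw [integral_congr_ae hcongr]
    have hYμ : Integrable Y (P[|{ω | R ω = true}]) := by
      rw [ProbabilityTheory.cond]
      exact (hYint.restrict).smul_measure (ENNReal.inv_ne_top.mpr hps)
    have hφμ : Integrable (fun ω => Hfun (X ω) * tau (Z ω) (X ω) + wfun (X ω))
        (P[|{ω | R ω = true}]) := integrable_condExp.congr hout
    have hfG : Integrable
        (fun ω => (Y ω - (Hfun (X ω) * tau (Z ω) (X ω) + wfun (X ω))) • G (X ω, Z ω))
        (P[|{ω | R ω = true}]) := by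
      rw [ProbabilityTheory.cond]
      refine Integrable.smul_measure ?_ (ENNReal.inv_ne_top.mpr hps)
      refine (hint.restrict (s := {ω | R ω = true})).congr ?_
      filter_upwards [ae_restrict_mem hs] with ω hω
      replace hω : R ω = true := hω
      rw [hω]
      norm_num [sub_sub]
    refine aux3 hm _ Y _ hYμ hφμ ?_ hout _ ?_ hfG
    · exact ((((hHfun_meas.comp measurable_snd).mul htau_meas).add
        (hwfun_meas.comp measurable_snd)).comp hZXm).stronglyMeasurable
    · exact ((hG.comp measurable_swap).comp hZXm).stronglyMeasurable
  have part2 : ∫ ω in {ω | R ω = true}ᶜ,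
      ((if R ω then (1:ℝ) else 0) *
            (Y ω - Hfun (X ω) * tau (Z ω) (X ω) - wfun (X ω)) -
          (if R ω then (0:ℝ) else 1) * Hfun (X ω) *
            ((if D ω then (1:ℝ) else 0) - tau (Z ω) (X ω))) • G (X ω, Z ω) ∂P = 0 := by
    rw [hsc]
    apply aux_set
    intro hps
    haveI : IsProbabilityMeasure (P[|{ω | R ω = false}]) :=
      cond_isProbabilityMeasure hps
    have hs' : MeasurableSet {ω | R ω = false} := hR (measurableSet_singleton false)
    have hmem : ∀ᵐ ω ∂(P[|{ω | R ω = false}]), ω ∈ {ω | R ω = false} := by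
      rw [ProbabilityTheory.cond]
      exact Measure.ae_smul_measure (ae_restrict_mem hs') _
    have hcongr : (fun ω => ((if R ω then (1:ℝ) else 0) *
            (Y ω - Hfun (X ω) * tau (Z ω) (X ω) - wfun (X ω)) -
          (if R ω then (0:ℝ) else 1) * Hfun (X ω) *
            ((if D ω then (1:ℝ) else 0) - tau (Z ω) (X ω))) • G (X ω, Z ω))
        =ᵐ[P[|{ω | R ω = false}]]
        fun ω => ((if D ω then (1:ℝ) else 0) - tau (Z ω) (X ω)) •
          ((-(Hfun (X ω))) • G (X ω, Z ω)) := by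
      filter_upwards [hmem] with ω hω
      replace hω : R ω = false := hω
      rw [hω, smul_smul]
      norm_num
      congr 1
      ring
    rw [integral_congr_ae hcongr]
    have hDμ : Integrable (fun ω => if D ω then (1:ℝ) else 0) (P[|{ω | R ω = false}]) := by
      have hmeas : Measurable (fun ω => if D ω then (1:ℝ) else 0) :=
        Measurable.ite (hD (measurableSet_singleton true)) measurable_const measurable_const
      refine (integrable_const (1:ℝ)).mono' hmeas.aestronglyMeasurable ?_
      filter_upwards with ω
      by_cases hω : D ω <;> simp [hω]
    have hτμ : Integrable (fun ω => tau (Z ω) (X ω)) (P[|{ω | R ω = false}]) :=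
      integrable_condExp.congr hpse.symm
    have hfG₂ : Integrable
        (fun ω => ((if D ω then (1:ℝ) else 0) - tau (Z ω) (X ω)) •
          ((-(Hfun (X ω))) • G (X ω, Z ω))) (P[|{ω | R ω = false}]) := by
      rw [ProbabilityTheory.cond]
      refine Integrable.smul_measure ?_ (ENNReal.inv_ne_top.mpr hps)
      refine (hint.restrict (s := {ω | R ω = false})).congr ?_
      filter_upwards [ae_restrict_mem hs'] with ω hω
      replace hω : R ω = false := hω
      rw [hω, smul_smul]
      norm_num
      congr 1
      ring
    refine aux3 hm _ _ _ hDμ hτμ ?_ hpse.symm _ ?_ hfG₂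
    · exact (htau_meas.comp hZXm).stronglyMeasurable
    · exact (((hHfun_meas.comp measurable_snd).comp hZXm).neg).stronglyMeasurable.smul
        ((hG.comp measurable_swap).comp hZXm).stronglyMeasurable
  rw [part1, part2, add_zero]
end

section
/- (Unbiasedness of the 𝓜₃ estimating function at the truth.) Suppose E(Y | Z, X, R=1) = 𝓗(X)·τ(Z,X) + ω(X) a.s. for measurable functions 𝓗, ω, and P(D=1 | Z,X,R=0) = τ(Z,X) a.s. (propensity score equality). Then for every measurable function G : 𝒳×{0,1} → ℝ^k such that the integrand is integrable, E[ G(X,Z) · { R·[Y − ω(X)] − ((1−R)·π(Z,X)/(1−π(Z,X)))·𝓗(X)·D } ] = 0. -/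
open MeasureTheory ProbabilityTheory

section Helpers

variable {Ω : Type*} {m0 : MeasurableSpace Ω} {μ : Measure Ω}

lemma aux_integral_mul_condexp [IsFiniteMeasure μ] {m : MeasurableSpace Ω} (hm : m ≤ m0)
    {f b : Ω → ℝ} (hf : Integrable f μ) (hb : StronglyMeasurable[m] b)
    {c : ℝ} (hbb : ∀ ω, ‖b ω‖ ≤ c) :
    ∫ ω, f ω * b ω ∂μ = ∫ ω, (μ[f|m]) ω * b ω ∂μ := by
  haveI : SigmaFinite (μ.trim hm) := by infer_instance
  have h1 : μ[b * f|m] =ᵐ[μ] b * μ[f|m] :=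
    condExp_stronglyMeasurable_mul_of_bound hm hb hf c (Filter.Eventually.of_forall hbb)
  calc ∫ ω, f ω * b ω ∂μ = ∫ ω, (b * f) ω ∂μ := by
        simp only [Pi.mul_apply, mul_comm]
    _ = ∫ ω, (μ[b * f|m]) ω ∂μ := (integral_condExp hm).symm
    _ = ∫ ω, (b * μ[f|m]) ω ∂μ := integral_congr_ae h1
    _ = ∫ ω, (μ[f|m]) ω * b ω ∂μ := by
        simp only [Pi.mul_apply, mul_comm]

lemma aux_setIntegral_cond [IsFiniteMeasure μ] {s : Set Ω} (hs0 : μ s ≠ 0) (f : Ω → ℝ) :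
    ∫ ω in s, f ω ∂μ = (μ s).toReal * ∫ ω, f ω ∂(μ[|s]) := by
  rw [ProbabilityTheory.cond, integral_smul_measure, ENNReal.toReal_inv, smul_eq_mul,
    ← mul_assoc, mul_inv_cancel₀ (ENNReal.toReal_ne_zero.mpr ⟨hs0, measure_ne_top μ s⟩), one_mul]

lemma aux_integrable_cond {s : Set Ω} (hs0 : μ s ≠ 0) {f : Ω → ℝ} (hf : Integrable f μ) :
    Integrable f (μ[|s]) := by
  rw [ProbabilityTheory.cond]
  exact (hf.restrict).smul_measure (ENNReal.inv_ne_top.mpr hs0)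

lemma aux_integrable_bdd [IsFiniteMeasure μ] {u : Ω → ℝ} (hu : Measurable u) {c : ℝ}
    (hc : ∀ ω, ‖u ω‖ ≤ c) : Integrable u μ :=
  (integrable_const c).mono' hu.aestronglyMeasurable (Filter.Eventually.of_forall hc)

end Helpers

/-- Core real-valued unbiasedness computation. -/
lemma aux_key {Ω : Type*} {m : MeasurableSpace Ω} [m0 : MeasurableSpace Ω] (hm : m ≤ m0)
    (P : Measure Ω) [IsProbabilityMeasure P]
    (R D : Ω → Bool) (hD : Measurable D) (Y : Ω → ℝ) (hY : Measurable Y) (hYint : Integrable Y P)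
    (T PP HH WW h : Ω → ℝ)
    (hT : Measurable[m] T) (hPP : Measurable[m] PP) (hHH : Measurable[m] HH)
    (hWW : Measurable[m] WW) (hh : Measurable[m] h)
    (s : Set Ω) (hs_eq : s = {ω | R ω = true}) (hs : MeasurableSet s)
    (hPs_ne : P s ≠ 0) (hPsc_ne : P sᶜ ≠ 0)
    (hiR_int : Integrable (fun ω => if R ω then (1:ℝ) else 0) P)
    (hiD_int : Integrable (fun ω => if D ω then (1:ℝ) else 0) P)
    (hpi_ver : PP =ᵐ[P] P[(fun ω => if R ω then (1:ℝ) else 0)|m])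
    (hpi_pos : ∀ᵐ ω ∂P, 0 < PP ω ∧ PP ω < 1)
    (hout : (P[|s])[Y|m] =ᵐ[P[|s]] fun ω => HH ω * T ω + WW ω)
    (hpse : T =ᵐ[P[|sᶜ]] (P[|sᶜ])[(fun ω => if D ω then (1:ℝ) else 0)|m])
    (hFh_int : Integrable (fun ω => ((if R ω then (1:ℝ) else 0) * (Y ω - WW ω) -
        (if R ω then (0:ℝ) else 1) * (PP ω / (1 - PP ω)) * HH ω *
          (if D ω then (1:ℝ) else 0)) * h ω) P) :
    ∫ ω, ((if R ω then (1:ℝ) else 0) * (Y ω - WW ω) -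
        (if R ω then (0:ℝ) else 1) * (PP ω / (1 - PP ω)) * HH ω *
          (if D ω then (1:ℝ) else 0)) * h ω ∂P = 0 := by
  classical
  subst hs_eq
  set s : Set Ω := {ω | R ω = true} with hs_def
  haveI hμ1P : IsProbabilityMeasure (P[|s]) := cond_isProbabilityMeasure hPs_ne
  haveI hμ0P : IsProbabilityMeasure (P[|sᶜ]) := cond_isProbabilityMeasure hPsc_ne
  have hiD_meas' : Measurable (fun ω => if D ω then (1:ℝ) else 0) :=
    Measurable.ite (hD (measurableSet_singleton true)) measurable_const measurable_const
  -- global measurability of the `m`-measurable data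
  have hT0 : Measurable T := hT.mono hm le_rfl
  have hPP0 : Measurable PP := hPP.mono hm le_rfl
  have hHH0 : Measurable HH := hHH.mono hm le_rfl
  have hWW0 : Measurable WW := hWW.mono hm le_rfl
  have hh0 : Measurable h := hh.mono hm le_rfl
  -- truncation sets
  set q : Ω → ℝ := fun ω => |HH ω| + |WW ω| + |T ω| + |h ω| + |PP ω| + |(1 - PP ω)⁻¹|
    with hq_def
  have habs : Measurable (fun x : ℝ => |x|) := continuous_abs.measurable
  have hq_m : Measurable[m] q :=
    (((((habs.comp hHH).add (habs.comp hWW)).add (habs.comp hT)).add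
      (habs.comp hh)).add (habs.comp hPP)).add (habs.comp ((hPP.const_sub 1).inv))
  set A : ℕ → Set Ω := fun n => q ⁻¹' Set.Iic (n:ℝ) with hA_def
  have hA_m : ∀ n, MeasurableSet[m] (A n) := fun n => hq_m measurableSet_Iic
  have hA_m0 : ∀ n, MeasurableSet (A n) := fun n => hm _ (hA_m n)
  have hA_mono : Monotone A := by
    intro a b hab ω hω
    have h1 : q ω ≤ (a:ℝ) := hω
    exact le_trans h1 (by exact_mod_cast hab)
  have hA_cover : ∀ ω : Ω, ∃ n : ℕ, ω ∈ A n := fun ω => exists_nat_ge (q ω)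
  set bn : ℕ → Ω → ℝ := fun n => (A n).indicator h with hbn_def
  have hbn_m : ∀ n, Measurable[m] (bn n) := fun n => hh.indicator (hA_m n)
  have hbn_m0 : ∀ n, Measurable (bn n) := fun n => hh0.indicator (hA_m0 n)
  have hbn_sm : ∀ n, StronglyMeasurable[m] (bn n) := fun n =>
    (hh.stronglyMeasurable).indicator (hA_m n)
  have hcomp : ∀ (n : ℕ) (ω : Ω), ω ∈ A n → |HH ω| ≤ n ∧ |WW ω| ≤ n ∧ |T ω| ≤ n ∧
      |h ω| ≤ n ∧ |PP ω| ≤ n ∧ |(1 - PP ω)⁻¹| ≤ n := by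
    intro n ω hω
    have hq : q ω ≤ n := hω
    simp only [hq_def] at hq
    have a1 := abs_nonneg (HH ω); have a2 := abs_nonneg (WW ω); have a3 := abs_nonneg (T ω)
    have a4 := abs_nonneg (h ω); have a5 := abs_nonneg (PP ω)
    have a6 := abs_nonneg ((1 - PP ω)⁻¹)
    exact ⟨by linarith, by linarith, by linarith, by linarith, by linarith, by linarith⟩
  have hbn_zero : ∀ (n : ℕ) (ω : Ω), ω ∉ A n → bn n ω = 0 := fun n ω hω => by
    simp [hbn_def, Set.indicator_of_notMem hω]
  have hbn_bdd : ∀ (n : ℕ) (ω : Ω), ‖bn n ω‖ ≤ (n:ℝ) := by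
    intro n ω
    by_cases hω : ω ∈ A n
    · have := (hcomp n ω hω).2.2.2.1
      simpa [hbn_def, Set.indicator_of_mem hω] using this
    · simp [hbn_zero n ω hω]
  have hbn_le_h : ∀ (n : ℕ) (ω : Ω), |bn n ω| ≤ |h ω| := by
    intro n ω
    by_cases hω : ω ∈ A n
    · simp [hbn_def, Set.indicator_of_mem hω]
    · simp [hbn_zero n ω hω]
  -- bounds for products
  have hb3 : ∀ (n : ℕ) (ω : Ω), ‖HH ω * T ω * bn n ω‖ ≤ (n:ℝ) * n * n := by
    intro n ω
    by_cases hω : ω ∈ A n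
    · obtain ⟨c1, _, c3, c4, _, _⟩ := hcomp n ω hω
      have hb : |bn n ω| ≤ (n:ℝ) := hbn_bdd n ω
      have hn : (0:ℝ) ≤ n := Nat.cast_nonneg n
      calc ‖HH ω * T ω * bn n ω‖ = |HH ω| * |T ω| * |bn n ω| := by
            rw [Real.norm_eq_abs, abs_mul, abs_mul]
        _ ≤ (n:ℝ) * n * n := by
            apply mul_le_mul (mul_le_mul c1 c3 (abs_nonneg _) hn) hb (abs_nonneg _)
            positivity
    · simp [hbn_zero n ω hω]; positivity
  have hb4 : ∀ (n : ℕ) (ω : Ω), ‖PP ω / (1 - PP ω) * HH ω * bn n ω‖ ≤ ((n:ℝ) * n) * n * n := by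
    intro n ω
    by_cases hω : ω ∈ A n
    · obtain ⟨c1, _, _, _, c5, c6⟩ := hcomp n ω hω
      have hb : |bn n ω| ≤ (n:ℝ) := hbn_bdd n ω
      have hn : (0:ℝ) ≤ n := Nat.cast_nonneg n
      have hdiv : |PP ω / (1 - PP ω)| ≤ (n:ℝ) * n := by
        rw [div_eq_mul_inv, abs_mul]
        exact mul_le_mul c5 c6 (abs_nonneg _) hn
      calc ‖PP ω / (1 - PP ω) * HH ω * bn n ω‖
          = |PP ω / (1 - PP ω)| * |HH ω| * |bn n ω| := by
            rw [Real.norm_eq_abs, abs_mul, abs_mul]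
        _ ≤ ((n:ℝ) * n) * n * n := by
            apply mul_le_mul (mul_le_mul hdiv c1 (abs_nonneg _) (by positivity)) hb
              (abs_nonneg _) (by positivity)
    · simp [hbn_zero n ω hω]; positivity
  have hb5 : ∀ (n : ℕ) (ω : Ω), ‖T ω * (PP ω / (1 - PP ω) * HH ω * bn n ω)‖ ≤
      (n:ℝ) * (((n:ℝ) * n) * n * n) := by
    intro n ω
    by_cases hω : ω ∈ A n
    · obtain ⟨_, _, c3, _, _, _⟩ := hcomp n ω hω
      calc ‖T ω * (PP ω / (1 - PP ω) * HH ω * bn n ω)‖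
          = |T ω| * ‖PP ω / (1 - PP ω) * HH ω * bn n ω‖ := by
            rw [Real.norm_eq_abs, abs_mul]; rfl
        _ ≤ (n:ℝ) * (((n:ℝ) * n) * n * n) :=
            mul_le_mul c3 (hb4 n ω) (norm_nonneg _) (Nat.cast_nonneg n)
    · simp [hbn_zero n ω hω]; positivity
  -- per-n identity
  have hEn : ∀ n : ℕ, ∫ ω in s, (Y ω - WW ω) * bn n ω ∂P
      = ∫ ω in sᶜ, PP ω / (1 - PP ω) * HH ω * (if D ω then (1:ℝ) else 0) * bn n ω ∂P := by
    intro n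
    -- LHS chain
    have hYμ1 : Integrable Y (P[|s]) := aux_integrable_cond hPs_ne hYint
    have hbnY : Integrable (fun ω => Y ω * bn n ω) (P[|s]) :=
      (hYμ1.bdd_mul ((hbn_m n).mono hm le_rfl).aestronglyMeasurable
        (Filter.Eventually.of_forall (hbn_bdd n))).congr
        (Filter.Eventually.of_forall fun ω => mul_comm _ _)
    have hbnW : Integrable (fun ω => WW ω * bn n ω) (P[|s]) :=
      aux_integrable_bdd (hWW0.mul (hbn_m0 n)) (c := (n:ℝ) * n) (fun ω => by
        by_cases hω : ω ∈ A n
        · obtain ⟨_, c2, _, _, _, _⟩ := hcomp n ω hω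
          calc ‖WW ω * bn n ω‖ = |WW ω| * |bn n ω| := by rw [Real.norm_eq_abs, abs_mul]
            _ ≤ (n:ℝ) * n := mul_le_mul c2 (hbn_bdd n ω) (abs_nonneg _) (Nat.cast_nonneg n)
        · simp [hbn_zero n ω hω]; positivity)
    have hHTbn_int : Integrable (fun ω => HH ω * T ω * bn n ω) (P[|s]) :=
      aux_integrable_bdd ((hHH0.mul hT0).mul (hbn_m0 n)) (hb3 n)
    have hL : ∫ ω in s, (Y ω - WW ω) * bn n ω ∂P
        = (P s).toReal * ∫ ω, HH ω * T ω * bn n ω ∂(P[|s]) := by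
      rw [aux_setIntegral_cond hPs_ne]
      congr 1
      have e2 : ∫ ω, (Y ω - WW ω) * bn n ω ∂(P[|s])
          = (∫ ω, Y ω * bn n ω ∂(P[|s])) - ∫ ω, WW ω * bn n ω ∂(P[|s]) := by
        simp_rw [sub_mul]; exact integral_sub hbnY hbnW
      have e3 : ∫ ω, Y ω * bn n ω ∂(P[|s])
          = ∫ ω, ((P[|s])[Y|m]) ω * bn n ω ∂(P[|s]) :=
        aux_integral_mul_condexp hm hYμ1 (hbn_sm n) (hbn_bdd n)
      have e4 : ∫ ω, ((P[|s])[Y|m]) ω * bn n ω ∂(P[|s])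
          = ∫ ω, (HH ω * T ω + WW ω) * bn n ω ∂(P[|s]) :=
        integral_congr_ae (by filter_upwards [hout] with ω hω; rw [hω])
      have e5 : ∫ ω, (HH ω * T ω + WW ω) * bn n ω ∂(P[|s])
          = (∫ ω, HH ω * T ω * bn n ω ∂(P[|s])) + ∫ ω, WW ω * bn n ω ∂(P[|s]) := by
        simp_rw [add_mul]; exact integral_add hHTbn_int hbnW
      rw [e2, e3, e4, e5]; ring
    have hL2 : (P s).toReal * ∫ ω, HH ω * T ω * bn n ω ∂(P[|s])
        = ∫ ω in s, HH ω * T ω * bn n ω ∂P := (aux_setIntegral_cond hPs_ne _).symm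
    have hL3 : ∫ ω in s, HH ω * T ω * bn n ω ∂P
        = ∫ ω, (if R ω then (1:ℝ) else 0) * (HH ω * T ω * bn n ω) ∂P := by
      rw [← integral_indicator hs]
      refine integral_congr_ae (Filter.Eventually.of_forall fun ω => ?_)
      by_cases hω : ω ∈ s
      · have hR1 : R ω = true := hω
        simp [Set.indicator_of_mem hω, hR1]
      · have hR0 : ¬ (R ω = true) := hω
        simp [Set.indicator_of_notMem hω, hR0]
    have hL4 : ∫ ω, (if R ω then (1:ℝ) else 0) * (HH ω * T ω * bn n ω) ∂P
        = ∫ ω, (P[(fun ω => if R ω then (1:ℝ) else 0)|m]) ω * (HH ω * T ω * bn n ω) ∂P :=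
      aux_integral_mul_condexp hm hiR_int ((hHH.mul hT).mul (hbn_m n)).stronglyMeasurable (hb3 n)
    have hL5 : ∫ ω, (P[(fun ω => if R ω then (1:ℝ) else 0)|m]) ω * (HH ω * T ω * bn n ω) ∂P
        = ∫ ω, PP ω * (HH ω * T ω * bn n ω) ∂P :=
      integral_congr_ae (by filter_upwards [hpi_ver] with ω hω; rw [← hω])
    -- RHS chain
    have hiDμ0 : Integrable (fun ω => if D ω then (1:ℝ) else 0) (P[|sᶜ]) :=
      aux_integrable_cond hPsc_ne hiD_int
    have hR1 : ∫ ω in sᶜ, PP ω / (1 - PP ω) * HH ω * (if D ω then (1:ℝ) else 0) * bn n ω ∂P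
        = ∫ ω in sᶜ, (if D ω then (1:ℝ) else 0) * (PP ω / (1 - PP ω) * HH ω * bn n ω) ∂P :=
      integral_congr_ae (Filter.Eventually.of_forall fun ω => by ring)
    have hR2 : ∫ ω in sᶜ, (if D ω then (1:ℝ) else 0) * (PP ω / (1 - PP ω) * HH ω * bn n ω) ∂P
        = (P sᶜ).toReal *
          ∫ ω, (if D ω then (1:ℝ) else 0) * (PP ω / (1 - PP ω) * HH ω * bn n ω) ∂(P[|sᶜ]) :=
      aux_setIntegral_cond hPsc_ne _
    have hcn_m : Measurable[m] (fun ω => PP ω / (1 - PP ω) * HH ω * bn n ω) :=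
      ((hPP.div (hPP.const_sub 1)).mul hHH).mul (hbn_m n)
    have hR3 : ∫ ω, (if D ω then (1:ℝ) else 0) * (PP ω / (1 - PP ω) * HH ω * bn n ω) ∂(P[|sᶜ])
        = ∫ ω, ((P[|sᶜ])[(fun ω => if D ω then (1:ℝ) else 0)|m]) ω *
            (PP ω / (1 - PP ω) * HH ω * bn n ω) ∂(P[|sᶜ]) :=
      aux_integral_mul_condexp hm hiDμ0 hcn_m.stronglyMeasurable (hb4 n)
    have hR4 : ∫ ω, ((P[|sᶜ])[(fun ω => if D ω then (1:ℝ) else 0)|m]) ω *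
            (PP ω / (1 - PP ω) * HH ω * bn n ω) ∂(P[|sᶜ])
        = ∫ ω, T ω * (PP ω / (1 - PP ω) * HH ω * bn n ω) ∂(P[|sᶜ]) :=
      integral_congr_ae (by filter_upwards [hpse] with ω hω; rw [← hω])
    have hR5 : (P sᶜ).toReal * ∫ ω, T ω * (PP ω / (1 - PP ω) * HH ω * bn n ω) ∂(P[|sᶜ])
        = ∫ ω in sᶜ, T ω * (PP ω / (1 - PP ω) * HH ω * bn n ω) ∂P :=
      (aux_setIntegral_cond hPsc_ne _).symm
    have hR6 : ∫ ω in sᶜ, T ω * (PP ω / (1 - PP ω) * HH ω * bn n ω) ∂P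
        = ∫ ω, (if R ω then (0:ℝ) else 1) *
            (T ω * (PP ω / (1 - PP ω) * HH ω * bn n ω)) ∂P := by
      rw [← integral_indicator hs.compl]
      refine integral_congr_ae (Filter.Eventually.of_forall fun ω => ?_)
      by_cases hω : ω ∈ sᶜ
      · have hR0 : ¬ (R ω = true) := hω
        simp [Set.indicator_of_mem hω, hR0]
      · have hR1 : R ω = true := by
          by_contra hcon
          exact hω (by exact hcon)
        simp [Set.indicator_of_notMem hω, hR1]
    have hiRc_int : Integrable (fun ω => if R ω then (0:ℝ) else 1) P := by
      refine ((integrable_const (1:ℝ)).sub hiR_int).congr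
        (Filter.Eventually.of_forall fun ω => ?_)
      by_cases hω : R ω <;> simp [hω]
    have hR7 : ∫ ω, (if R ω then (0:ℝ) else 1) *
            (T ω * (PP ω / (1 - PP ω) * HH ω * bn n ω)) ∂P
        = ∫ ω, (P[(fun ω => if R ω then (0:ℝ) else 1)|m]) ω *
            (T ω * (PP ω / (1 - PP ω) * HH ω * bn n ω)) ∂P :=
      aux_integral_mul_condexp hm hiRc_int (hT.mul hcn_m).stronglyMeasurable (hb5 n)
    have hcondc : P[(fun ω => if R ω then (0:ℝ) else 1)|m] =ᵐ[P] fun ω => 1 - PP ω := by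
      have he : (fun ω => if R ω then (0:ℝ) else 1)
          = (fun _ => (1:ℝ)) - (fun ω => if R ω then (1:ℝ) else 0) := by
        funext ω; by_cases hω : R ω <;> simp [hω]
      rw [he]
      have h1 := condExp_sub (μ := P) (m := m) (integrable_const (1:ℝ)) hiR_int
      have h2 : P[(fun _ => (1:ℝ))|m] = fun _ => (1:ℝ) := condExp_const hm 1
      filter_upwards [h1, hpi_ver] with ω hω hπ
      simp only [Pi.sub_apply] at hω ⊢
      rw [hω, h2, ← hπ]
    have hR8 : ∫ ω, (P[(fun ω => if R ω then (0:ℝ) else 1)|m]) ω *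
            (T ω * (PP ω / (1 - PP ω) * HH ω * bn n ω)) ∂P
        = ∫ ω, (1 - PP ω) * (T ω * (PP ω / (1 - PP ω) * HH ω * bn n ω)) ∂P :=
      integral_congr_ae (by filter_upwards [hcondc] with ω hω; rw [hω])
    have hfinal : ∫ ω, (1 - PP ω) * (T ω * (PP ω / (1 - PP ω) * HH ω * bn n ω)) ∂P
        = ∫ ω, PP ω * (HH ω * T ω * bn n ω) ∂P := by
      refine integral_congr_ae ?_
      filter_upwards [hpi_pos] with ω hω
      have h1 : (1:ℝ) - PP ω ≠ 0 := by linarith [hω.2]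
      field_simp
    rw [hL, hL2, hL3, hL4, hL5, hR1, hR2, hR3, hR4, hR5, hR6, hR7, hR8, hfinal]
  -- pass to the limit
  set f1 : Ω → ℝ := fun ω => (Y ω - WW ω) * h ω with hf1_def
  set f2 : Ω → ℝ := fun ω => PP ω / (1 - PP ω) * HH ω * (if D ω then (1:ℝ) else 0) * h ω
    with hf2_def
  set F : Ω → ℝ := fun ω => (if R ω then (1:ℝ) else 0) * (Y ω - WW ω) -
      (if R ω then (0:ℝ) else 1) * (PP ω / (1 - PP ω)) * HH ω * (if D ω then (1:ℝ) else 0)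
    with hF_def
  have hind1 : Integrable (s.indicator f1) P := by
    refine (hFh_int.indicator hs).congr (Filter.Eventually.of_forall fun ω => ?_)
    by_cases hω : ω ∈ s
    · have hR1 : R ω = true := hω
      simp [Set.indicator_of_mem hω, hf1_def, hR1]
    · simp [Set.indicator_of_notMem hω]
  have hind2 : Integrable (sᶜ.indicator f2) P := by
    refine ((hFh_int.indicator hs.compl).neg).congr (Filter.Eventually.of_forall fun ω => ?_)
    by_cases hω : ω ∈ sᶜ
    · have hR0 : ¬ (R ω = true) := hω
      have e1 : (if R ω then (1:ℝ) else 0) = 0 := if_neg hR0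
      have e2 : (if R ω then (0:ℝ) else 1) = 1 := if_neg hR0
      simp only [Pi.neg_apply, Set.indicator_of_mem hω, hf2_def, e1, e2]
      ring
    · simp [Set.indicator_of_notMem hω]
  have hf1_on : IntegrableOn f1 s P := (integrable_indicator_iff hs).mp hind1
  have hf2_on : IntegrableOn f2 sᶜ P := (integrable_indicator_iff hs.compl).mp hind2
  have hconv : ∀ (g : Ω → ℝ) (ω : Ω), Filter.Tendsto (fun n => g ω * bn n ω)
      Filter.atTop (nhds (g ω * h ω)) := by
    intro g ω
    obtain ⟨N, hN⟩ := hA_cover ω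
    refine Filter.Tendsto.congr' ?_ tendsto_const_nhds
    filter_upwards [Filter.eventually_ge_atTop N] with n hn
    have hω : ω ∈ A n := hA_mono hn hN
    simp [hbn_def, Set.indicator_of_mem hω]
  have hdom : ∀ (g : Ω → ℝ) (n : ℕ) (ω : Ω), ‖g ω * bn n ω‖ ≤ ‖g ω * h ω‖ := by
    intro g n ω
    rw [Real.norm_eq_abs, Real.norm_eq_abs, abs_mul, abs_mul]
    exact mul_le_mul_of_nonneg_left (hbn_le_h n ω) (abs_nonneg _)
  have hlim1 : Filter.Tendsto (fun n => ∫ ω in s, (Y ω - WW ω) * bn n ω ∂P)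
      Filter.atTop (nhds (∫ ω in s, f1 ω ∂P)) := by
    refine tendsto_integral_of_dominated_convergence (fun ω => ‖f1 ω‖) ?_ hf1_on.norm ?_ ?_
    · exact fun n => (((hY.sub hWW0).mul (hbn_m0 n)).aestronglyMeasurable).restrict
    · exact fun n => Filter.Eventually.of_forall fun ω => hdom (fun ω => Y ω - WW ω) n ω
    · exact Filter.Eventually.of_forall fun ω => hconv (fun ω => Y ω - WW ω) ω
  have hlim2 : Filter.Tendsto
      (fun n => ∫ ω in sᶜ, PP ω / (1 - PP ω) * HH ω * (if D ω then (1:ℝ) else 0) * bn n ω ∂P)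
      Filter.atTop (nhds (∫ ω in sᶜ, f2 ω ∂P)) := by
    refine tendsto_integral_of_dominated_convergence (fun ω => ‖f2 ω‖) ?_ hf2_on.norm ?_ ?_
    · intro n
      exact ((((hPP0.div (hPP0.const_sub 1)).mul hHH0).mul hiD_meas').mul
        (hbn_m0 n)).aestronglyMeasurable.restrict
    · exact fun n => Filter.Eventually.of_forall fun ω =>
        hdom (fun ω => PP ω / (1 - PP ω) * HH ω * (if D ω then (1:ℝ) else 0)) n ω
    · exact Filter.Eventually.of_forall fun ω =>
        hconv (fun ω => PP ω / (1 - PP ω) * HH ω * (if D ω then (1:ℝ) else 0)) ω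
  have heq : ∫ ω in s, f1 ω ∂P = ∫ ω in sᶜ, f2 ω ∂P :=
    tendsto_nhds_unique (Filter.Tendsto.congr (fun n => hEn n) hlim1) hlim2
  calc ∫ ω, F ω * h ω ∂P
      = ∫ ω, (s.indicator f1 ω - sᶜ.indicator f2 ω) ∂P := by
        refine integral_congr_ae (Filter.Eventually.of_forall fun ω => ?_)
        by_cases hω : R ω
        · have h1 : ω ∈ s := hω
          have h2 : ω ∉ sᶜ := fun hc => hc h1
          simp only [Set.indicator_of_mem h1, Set.indicator_of_notMem h2, hF_def, hf1_def,
            if_pos hω, sub_zero]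
          ring
        · have h2 : ω ∈ sᶜ := fun hc => hω hc
          have h1 : ω ∉ s := fun hc => hω hc
          simp only [Set.indicator_of_notMem h1, Set.indicator_of_mem h2, hF_def, hf2_def,
            if_neg hω, zero_sub]
          ring
    _ = (∫ ω in s, f1 ω ∂P) - ∫ ω in sᶜ, f2 ω ∂P := by
        rw [integral_sub hind1 hind2, integral_indicator hs, integral_indicator hs.compl]
    _ = 0 := by rw [heq]; ring

/-- Unbiasedness of the 𝓜₃ estimating function at the truth:
If `E(Y | Z, X, R=1) = 𝓗(X)·τ(Z,X) + ω(X)` a.s. and `P(D=1 | Z,X,R=0) = τ(Z,X)` a.s., then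
for every measurable `G : 𝒳×{0,1} → ℝ^k` with integrable integrand,
`E[ G(X,Z)·{ R·[Y − ω(X)] − ((1−R)·π(Z,X)/(1−π(Z,X)))·𝓗(X)·D } ] = 0`. -/
theorem stmt_12
    {Ω 𝒳 : Type*} [MeasurableSpace Ω] [MeasurableSpace 𝒳] [StandardBorelSpace 𝒳]
    (P : Measure Ω) [IsProbabilityMeasure P]
    (R Z D : Ω → Bool) (X : Ω → 𝒳) (Y : Ω → ℝ)
    (hR : Measurable R) (hZ : Measurable Z) (hD : Measurable D)
    (hX : Measurable X) (hY : Measurable Y) (hYint : Integrable Y P)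
    -- τ(z,x) := P(D=1 | Z=z, X=x, R=1)
    (tau : Bool → 𝒳 → ℝ) (htau_meas : Measurable fun p : Bool × 𝒳 => tau p.1 p.2)
    (htau_ver : (fun ω => tau (Z ω) (X ω)) =ᵐ[P[|{ω | R ω = true}]]
      (P[|{ω | R ω = true}])[(fun ω => if D ω then (1:ℝ) else 0) |
        MeasurableSpace.comap (fun ω => (Z ω, X ω)) inferInstance])
    -- π(z,x) := P(R=1 | Z=z, X=x), with 0 < π(Z,X) < 1 a.s.
    (pi : Bool → 𝒳 → ℝ) (hpi_meas : Measurable fun p : Bool × 𝒳 => pi p.1 p.2)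
    (hpi_ver : (fun ω => pi (Z ω) (X ω)) =ᵐ[P]
      P[(fun ω => if R ω then (1:ℝ) else 0) |
        MeasurableSpace.comap (fun ω => (Z ω, X ω)) inferInstance])
    (hpi_pos : ∀ᵐ ω ∂P, 0 < pi (Z ω) (X ω) ∧ pi (Z ω) (X ω) < 1)
    -- outcome decomposition: E(Y | Z, X, R=1) = 𝓗(X)·τ(Z,X) + ω(X) a.s.
    (Hfun wfun : 𝒳 → ℝ) (hHfun_meas : Measurable Hfun) (hwfun_meas : Measurable wfun)
    (hout : (P[|{ω | R ω = true}])[Y |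
        MeasurableSpace.comap (fun ω => (Z ω, X ω)) inferInstance]
      =ᵐ[P[|{ω | R ω = true}]]
        fun ω => Hfun (X ω) * tau (Z ω) (X ω) + wfun (X ω))
    -- propensity score equality: P(D=1 | Z, X, R=0) = τ(Z,X) a.s.
    (hpse : (fun ω => tau (Z ω) (X ω)) =ᵐ[P[|{ω | R ω = false}]]
      (P[|{ω | R ω = false}])[(fun ω => if D ω then (1:ℝ) else 0) |
        MeasurableSpace.comap (fun ω => (Z ω, X ω)) inferInstance])
    -- arbitrary measurable G : 𝒳×{0,1} → ℝ^k with integrable integrand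
    (k : ℕ) (G : 𝒳 × Bool → EuclideanSpace ℝ (Fin k)) (hG : Measurable G)
    (hint : Integrable (fun ω =>
        ((if R ω then (1:ℝ) else 0) * (Y ω - wfun (X ω)) -
          (if R ω then (0:ℝ) else 1) * (pi (Z ω) (X ω) / (1 - pi (Z ω) (X ω))) *
            Hfun (X ω) * (if D ω then (1:ℝ) else 0)) • G (X ω, Z ω)) P) :
    ∫ ω, ((if R ω then (1:ℝ) else 0) * (Y ω - wfun (X ω)) -
          (if R ω then (0:ℝ) else 1) * (pi (Z ω) (X ω) / (1 - pi (Z ω) (X ω))) *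
            Hfun (X ω) * (if D ω then (1:ℝ) else 0)) • G (X ω, Z ω) ∂P = 0 := by
  classical
  have hWm : Measurable (fun ω => (Z ω, X ω)) := hZ.prodMk hX
  have hm : MeasurableSpace.comap (fun ω : Ω => (Z ω, X ω)) inferInstance ≤
      ‹MeasurableSpace Ω› := hWm.comap_le
  have hWmm : Measurable[MeasurableSpace.comap (fun ω : Ω => (Z ω, X ω)) inferInstance]
      (fun ω => (Z ω, X ω)) := comap_measurable _
  have hs : MeasurableSet {ω | R ω = true} := hR (measurableSet_singleton true)
  have hsc_eq : {ω | R ω = false} = {ω | R ω = true}ᶜ := by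
    ext ω; simp
  rw [hsc_eq] at hpse
  -- indicator integrability
  have hiR_meas : Measurable (fun ω => if R ω then (1:ℝ) else 0) :=
    Measurable.ite hs measurable_const measurable_const
  have hiR_int : Integrable (fun ω => if R ω then (1:ℝ) else 0) P :=
    aux_integrable_bdd hiR_meas (c := 1) (fun ω => by by_cases h : R ω <;> simp [h])
  have hiD_meas : Measurable (fun ω => if D ω then (1:ℝ) else 0) :=
    Measurable.ite (hD (measurableSet_singleton true)) measurable_const measurable_const
  have hiD_int : Integrable (fun ω => if D ω then (1:ℝ) else 0) P :=
    aux_integrable_bdd hiD_meas (c := 1) (fun ω => by by_cases h : D ω <;> simp [h])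
  -- positivity of the two slices
  haveI : (MeasureTheory.ae P).NeBot := ae_neBot.2 (IsProbabilityMeasure.ne_zero P)
  have hPs_ne : P {ω | R ω = true} ≠ 0 := by
    intro h0
    have h2 : ∀ᵐ ω ∂P, ω ∉ {ω | R ω = true} := measure_eq_zero_iff_ae_notMem.mp h0
    have h1 : (fun ω => if R ω then (1:ℝ) else 0) =ᵐ[P] (0 : Ω → ℝ) := by
      filter_upwards [h2] with ω hω
      have hne : ¬ (R ω = true) := hω
      simp [hne]
    have h3 : (fun ω => pi (Z ω) (X ω)) =ᵐ[P] (0 : Ω → ℝ) :=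
      hpi_ver.trans ((condExp_congr_ae h1).trans (by rw [condExp_zero]))
    have h4 : ∀ᵐ ω ∂P, False := by
      filter_upwards [h3, hpi_pos] with ω hω ha
      have hx : pi (Z ω) (X ω) = 0 := hω
      exact lt_irrefl (0:ℝ) (by simpa [hx] using ha.1)
    obtain ⟨_, hh⟩ := h4.exists; exact hh
  have hPsc_ne : P {ω | R ω = true}ᶜ ≠ 0 := by
    intro h0
    have h2 : ∀ᵐ ω ∂P, ω ∈ {ω | R ω = true} := by
      have h5 := measure_eq_zero_iff_ae_notMem.mp h0
      filter_upwards [h5] with ω hω; simpa using hω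
    have h1 : (fun ω => if R ω then (1:ℝ) else 0) =ᵐ[P] (fun _ => (1:ℝ)) := by
      filter_upwards [h2] with ω hω
      have hx : R ω = true := hω
      simp [hx]
    have h3 : (fun ω => pi (Z ω) (X ω)) =ᵐ[P] (fun _ => (1:ℝ)) :=
      hpi_ver.trans ((condExp_congr_ae h1).trans (by rw [condExp_const hm]))
    have h4 : ∀ᵐ ω ∂P, False := by
      filter_upwards [h3, hpi_pos] with ω hω ha
      have hx : pi (Z ω) (X ω) = 1 := hω
      exact lt_irrefl (1:ℝ) (by simpa [hx] using ha.2)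
    obtain ⟨_, hh⟩ := h4.exists; exact hh
  -- coordinatewise result via `aux_key`
  have key : ∀ i : Fin k, ∫ ω, ((if R ω then (1:ℝ) else 0) * (Y ω - wfun (X ω)) -
          (if R ω then (0:ℝ) else 1) * (pi (Z ω) (X ω) / (1 - pi (Z ω) (X ω))) *
            Hfun (X ω) * (if D ω then (1:ℝ) else 0)) * G (X ω, Z ω) i ∂P = 0 := by
    intro i
    have hswap : Measurable (fun p : Bool × 𝒳 => (p.2, p.1)) :=
      measurable_snd.prodMk measurable_fst
    have hgi : Measurable (fun p : 𝒳 × Bool => G p i) :=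
      (EuclideanSpace.proj (𝕜 := ℝ) i).continuous.measurable.comp hG
    have hh_m : Measurable[MeasurableSpace.comap (fun ω : Ω => (Z ω, X ω)) inferInstance]
        (fun ω => G (X ω, Z ω) i) := (hgi.comp hswap).comp hWmm
    have hT_m : Measurable[MeasurableSpace.comap (fun ω : Ω => (Z ω, X ω)) inferInstance]
        (fun ω => tau (Z ω) (X ω)) := htau_meas.comp hWmm
    have hPi_m : Measurable[MeasurableSpace.comap (fun ω : Ω => (Z ω, X ω)) inferInstance]
        (fun ω => pi (Z ω) (X ω)) := hpi_meas.comp hWmm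
    have hHH_m : Measurable[MeasurableSpace.comap (fun ω : Ω => (Z ω, X ω)) inferInstance]
        (fun ω => Hfun (X ω)) := (hHfun_meas.comp measurable_snd).comp hWmm
    have hWW_m : Measurable[MeasurableSpace.comap (fun ω : Ω => (Z ω, X ω)) inferInstance]
        (fun ω => wfun (X ω)) := (hwfun_meas.comp measurable_snd).comp hWmm
    have hFh_int : Integrable (fun ω =>
        ((if R ω then (1:ℝ) else 0) * (Y ω - wfun (X ω)) -
          (if R ω then (0:ℝ) else 1) * (pi (Z ω) (X ω) / (1 - pi (Z ω) (X ω))) *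
            Hfun (X ω) * (if D ω then (1:ℝ) else 0)) * G (X ω, Z ω) i) P :=
      (EuclideanSpace.proj (𝕜 := ℝ) i).integrable_comp hint
    exact aux_key hm P R D hD Y hY hYint
      (fun ω => tau (Z ω) (X ω)) (fun ω => pi (Z ω) (X ω))
      (fun ω => Hfun (X ω)) (fun ω => wfun (X ω)) (fun ω => G (X ω, Z ω) i)
      hT_m hPi_m hHH_m hWW_m hh_m
      {ω | R ω = true} rfl hs hPs_ne hPsc_ne hiR_int hiD_int
      hpi_ver hpi_pos hout hpse hFh_int
  -- assemble the vector statement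
  refine PiLp.ext fun i => ?_
  have h2 := (ContinuousLinearMap.integral_comp_comm (EuclideanSpace.proj (𝕜 := ℝ) i) hint).symm
  calc (∫ ω, ((if R ω then (1:ℝ) else 0) * (Y ω - wfun (X ω)) -
          (if R ω then (0:ℝ) else 1) * (pi (Z ω) (X ω) / (1 - pi (Z ω) (X ω))) *
            Hfun (X ω) * (if D ω then (1:ℝ) else 0)) • G (X ω, Z ω) ∂P) i
      = (EuclideanSpace.proj (𝕜 := ℝ) i) (∫ ω, ((if R ω then (1:ℝ) else 0) * (Y ω - wfun (X ω)) -
          (if R ω then (0:ℝ) else 1) * (pi (Z ω) (X ω) / (1 - pi (Z ω) (X ω))) *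
            Hfun (X ω) * (if D ω then (1:ℝ) else 0)) • G (X ω, Z ω) ∂P) := rfl
    _ = ∫ ω, (EuclideanSpace.proj (𝕜 := ℝ) i)
          (((if R ω then (1:ℝ) else 0) * (Y ω - wfun (X ω)) -
          (if R ω then (0:ℝ) else 1) * (pi (Z ω) (X ω) / (1 - pi (Z ω) (X ω))) *
            Hfun (X ω) * (if D ω then (1:ℝ) else 0)) • G (X ω, Z ω)) ∂P := h2
    _ = ∫ ω, ((if R ω then (1:ℝ) else 0) * (Y ω - wfun (X ω)) -
          (if R ω then (0:ℝ) else 1) * (pi (Z ω) (X ω) / (1 - pi (Z ω) (X ω))) *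
            Hfun (X ω) * (if D ω then (1:ℝ) else 0)) * G (X ω, Z ω) i ∂P := rfl
    _ = 0 := key i
end

section
/- (Double robustness of the estimating function for (γ,η), case 𝓜₂: correct propensity score, arbitrary data-source model.) Suppose E(Y | Z, X, R=1) = 𝓗(X)·τ(Z,X) + ω(X) a.s. for measurable functions 𝓗, ω, and P(D=1 | Z,X,R=0) = τ(Z,X) a.s. (propensity score equality). Let π̄ : {0,1}×𝒳 → (0,1) be an arbitrary measurable function. Then for every measurable function G : 𝒳×{0,1} → ℝ^k such that the integrand is integrable, E[ G(X,Z) · { R·[Y − 𝓗(X)·τ(Z,X) − ω(X)] − (1−R)·(π̄(Z,X)/(1−π̄(Z,X)))·𝓗(X)·[D − τ(Z,X)] } ] = 0. -/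
open MeasureTheory ProbabilityTheory Filter Topology

lemma aux_orth {Ω : Type*} {m m0 : MeasurableSpace Ω} (hm : m ≤ m0) (μ : Measure Ω)
    [IsFiniteMeasure μ]
    {Y φ g : Ω → ℝ} (hφ : StronglyMeasurable[m] φ) (hg : StronglyMeasurable[m] g)
    (hY : Integrable Y μ) (hce : μ[Y|m] =ᵐ[μ] φ)
    (hI : Integrable (fun ω => (Y ω - φ ω) * g ω) μ) :
    ∫ ω, (Y ω - φ ω) * g ω ∂μ = 0 := by
  set F := fun ω => (Y ω - φ ω) * g ω with hF
  set A := fun N : ℕ => {ω | ‖g ω‖ ≤ (N : ℝ)} with hA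
  have hA_meas : ∀ N, MeasurableSet[m] (A N) := fun N =>
    hg.norm.measurable measurableSet_Iic
  have hmono : Monotone A := by
    intro N M hNM ω hω
    simp only [hA, Set.mem_setOf_eq] at *
    exact le_trans hω (Nat.cast_le.mpr hNM)
  have hunion : (⋃ N, A N) = Set.univ := by
    ext ω
    simp only [Set.mem_iUnion, Set.mem_univ, iff_true]
    obtain ⟨N, hN⟩ := exists_nat_ge ‖g ω‖
    exact ⟨N, hN⟩
  have htend : Tendsto (fun N => ∫ ω in A N, F ω ∂μ) atTop (𝓝 (∫ ω, F ω ∂μ)) := by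
    have := tendsto_setIntegral_of_monotone (fun N => hm _ (hA_meas N)) hmono
      (by rw [hunion]; exact hI.integrableOn)
    rwa [hunion, setIntegral_univ] at this
  have hzero : ∀ N, ∫ ω in A N, F ω ∂μ = 0 := by
    intro N
    set h := (A N).indicator g with hh
    have hh_sm : StronglyMeasurable[m] h := hg.indicator (hA_meas N)
    have hh_bdd : ∀ ω, ‖h ω‖ ≤ (N : ℝ) := by
      intro ω
      rw [hh]
      by_cases hω : ω ∈ A N
      · rw [Set.indicator_of_mem hω]; exact hω
      · rw [Set.indicator_of_notMem hω]; simp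
    have hYh : Integrable (fun ω => h ω * Y ω) μ :=
      hY.bdd_mul (hh_sm.mono hm).aestronglyMeasurable (Eventually.of_forall hh_bdd)
    have hind_eq : ∀ ω, (A N).indicator F ω = h ω * (Y ω - φ ω) := by
      intro ω
      by_cases hω : ω ∈ A N
      · rw [Set.indicator_of_mem hω, hh, Set.indicator_of_mem hω, hF]; ring
      · rw [Set.indicator_of_notMem hω, hh, Set.indicator_of_notMem hω]; ring
    have hindI : Integrable (fun ω => h ω * (Y ω - φ ω)) μ := by
      have := hI.indicator (hm _ (hA_meas N))
      exact this.congr (Filter.Eventually.of_forall hind_eq)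
    have hφh : Integrable (fun ω => h ω * φ ω) μ := by
      have : (fun ω => h ω * φ ω) = fun ω => h ω * Y ω - h ω * (Y ω - φ ω) := by
        funext ω; ring
      rw [this]
      exact hYh.sub hindI
    have hpull : μ[fun ω => h ω * Y ω|m] =ᵐ[μ] fun ω => h ω * (μ[Y|m]) ω := by
      have := condExp_mul_of_stronglyMeasurable_left hh_sm hYh hY
      exact this
    have key : ∫ ω, h ω * Y ω ∂μ = ∫ ω, h ω * φ ω ∂μ := by
      rw [← integral_condExp hm (f := fun ω => h ω * Y ω)]
      rw [integral_congr_ae hpull]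
      refine integral_congr_ae ?_
      filter_upwards [hce] with ω hω
      rw [hω]
    calc ∫ ω in A N, F ω ∂μ = ∫ ω, (A N).indicator F ω ∂μ := by
          rw [integral_indicator (hm _ (hA_meas N))]
      _ = ∫ ω, (h ω * Y ω - h ω * φ ω) ∂μ := by
          refine integral_congr_ae (Filter.Eventually.of_forall fun ω => ?_)
          rw [hind_eq ω]; ring
      _ = ∫ ω, h ω * Y ω ∂μ - ∫ ω, h ω * φ ω ∂μ := integral_sub hYh hφh
      _ = 0 := by rw [key, sub_self]
  have : Tendsto (fun _ : ℕ => (0 : ℝ)) atTop (𝓝 (∫ ω, F ω ∂μ)) := by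
    simpa [hzero] using htend
  exact tendsto_nhds_unique this tendsto_const_nhds

lemma cond_piece {Ω : Type*} [m0 : MeasurableSpace Ω] (P : Measure Ω) [IsProbabilityMeasure P]
    (s : Set Ω) (hs : MeasurableSet s) {m : MeasurableSpace Ω} (hm : m ≤ m0)
    {Y φ g : Ω → ℝ} (hφ : StronglyMeasurable[m] φ) (hg : StronglyMeasurable[m] g)
    (hY : Integrable Y P) (hce : (P[|s])[Y|m] =ᵐ[P[|s]] φ)
    (hI : Integrable (fun ω => (Y ω - φ ω) * g ω) (P.restrict s)) :
    ∫ ω in s, (Y ω - φ ω) * g ω ∂P = 0 := by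
  by_cases hps : P s = 0
  · exact setIntegral_measure_zero _ hps
  · haveI : IsProbabilityMeasure (P[|s]) := cond_isProbabilityMeasure hps
    have hinv_ne_top : (P s)⁻¹ ≠ ⊤ := by simp [hps]
    have hY' : Integrable Y (P[|s]) := by
      rw [ProbabilityTheory.cond]
      exact (hY.restrict).smul_measure hinv_ne_top
    have hI' : Integrable (fun ω => (Y ω - φ ω) * g ω) (P[|s]) := by
      rw [ProbabilityTheory.cond]
      exact hI.smul_measure hinv_ne_top
    have h0 : ∫ ω, (Y ω - φ ω) * g ω ∂(P[|s]) = 0 :=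
      aux_orth hm (P[|s]) hφ hg hY' hce hI'
    rw [ProbabilityTheory.cond, integral_smul_measure] at h0
    have htoReal : ((P s)⁻¹).toReal ≠ 0 := by
      simp only [ne_eq, ENNReal.toReal_eq_zero_iff]
      push_neg
      exact ⟨ENNReal.inv_ne_zero.mpr (measure_ne_top P s), hinv_ne_top⟩
    rcases smul_eq_zero.mp h0 with h | h
    · exact absurd h htoReal
    · exact h


/-- Double robustness of the (γ,η) estimating function, case 𝓜₂:
correct treatment propensity score `τ` and outcome decomposition, arbitrary data-source
working model `π̄ : {0,1}×𝒳 → (0,1)`. Then for every measurable `G : 𝒳×{0,1} → ℝ^k` with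
integrable integrand,
`E[ G(X,Z)·{ R·[Y − 𝓗(X)τ(Z,X) − ω(X)] − (1−R)·(π̄(Z,X)/(1−π̄(Z,X)))·𝓗(X)·[D − τ(Z,X)] } ] = 0`. -/
theorem stmt_13
    {Ω 𝒳 : Type*} [MeasurableSpace Ω] [MeasurableSpace 𝒳] [StandardBorelSpace 𝒳]
    (P : Measure Ω) [IsProbabilityMeasure P]
    (R Z D : Ω → Bool) (X : Ω → 𝒳) (Y : Ω → ℝ)
    (hR : Measurable R) (hZ : Measurable Z) (hD : Measurable D)
    (hX : Measurable X) (hY : Measurable Y) (hYint : Integrable Y P)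
    -- τ(z,x) := P(D=1 | Z=z, X=x, R=1)
    (tau : Bool → 𝒳 → ℝ) (htau_meas : Measurable fun p : Bool × 𝒳 => tau p.1 p.2)
    (htau_ver : (fun ω => tau (Z ω) (X ω)) =ᵐ[P[|{ω | R ω = true}]]
      (P[|{ω | R ω = true}])[(fun ω => if D ω then (1:ℝ) else 0) |
        MeasurableSpace.comap (fun ω => (Z ω, X ω)) inferInstance])
    -- outcome decomposition: E(Y | Z, X, R=1) = 𝓗(X)·τ(Z,X) + ω(X) a.s.
    (Hfun wfun : 𝒳 → ℝ) (hHfun_meas : Measurable Hfun) (hwfun_meas : Measurable wfun)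
    (hout : (P[|{ω | R ω = true}])[Y |
        MeasurableSpace.comap (fun ω => (Z ω, X ω)) inferInstance]
      =ᵐ[P[|{ω | R ω = true}]]
        fun ω => Hfun (X ω) * tau (Z ω) (X ω) + wfun (X ω))
    -- propensity score equality: P(D=1 | Z, X, R=0) = τ(Z,X) a.s.
    (hpse : (fun ω => tau (Z ω) (X ω)) =ᵐ[P[|{ω | R ω = false}]]
      (P[|{ω | R ω = false}])[(fun ω => if D ω then (1:ℝ) else 0) |
        MeasurableSpace.comap (fun ω => (Z ω, X ω)) inferInstance])
    -- arbitrary measurable working model π̄ : {0,1}×𝒳 → (0,1)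
    (pibar : Bool → 𝒳 → ℝ) (hpibar_meas : Measurable fun p : Bool × 𝒳 => pibar p.1 p.2)
    (hpibar_range : ∀ z x, 0 < pibar z x ∧ pibar z x < 1)
    -- arbitrary measurable G : 𝒳×{0,1} → ℝ^k with integrable integrand
    (k : ℕ) (G : 𝒳 × Bool → EuclideanSpace ℝ (Fin k)) (hG : Measurable G)
    (hint : Integrable (fun ω =>
        ((if R ω then (1:ℝ) else 0) *
            (Y ω - Hfun (X ω) * tau (Z ω) (X ω) - wfun (X ω)) -
          (if R ω then (0:ℝ) else 1) * (pibar (Z ω) (X ω) / (1 - pibar (Z ω) (X ω))) *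
            Hfun (X ω) * ((if D ω then (1:ℝ) else 0) - tau (Z ω) (X ω))) • G (X ω, Z ω)) P) :
    ∫ ω, ((if R ω then (1:ℝ) else 0) *
            (Y ω - Hfun (X ω) * tau (Z ω) (X ω) - wfun (X ω)) -
          (if R ω then (0:ℝ) else 1) * (pibar (Z ω) (X ω) / (1 - pibar (Z ω) (X ω))) *
            Hfun (X ω) * ((if D ω then (1:ℝ) else 0) - tau (Z ω) (X ω))) • G (X ω, Z ω) ∂P
      = 0 := by
  -- notation
  set c : Ω → ℝ := fun ω =>
      (if R ω then (1:ℝ) else 0) * (Y ω - Hfun (X ω) * tau (Z ω) (X ω) - wfun (X ω)) -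
        (if R ω then (0:ℝ) else 1) * (pibar (Z ω) (X ω) / (1 - pibar (Z ω) (X ω))) *
          Hfun (X ω) * ((if D ω then (1:ℝ) else 0) - tau (Z ω) (X ω)) with hc
  -- measurable structure on (Z, X)
  have hm : MeasurableSpace.comap (fun ω => (Z ω, X ω)) inferInstance ≤
      (inferInstance : MeasurableSpace Ω) := (hZ.prodMk hX).comap_le
  have hpair : Measurable[MeasurableSpace.comap (fun ω => (Z ω, X ω)) inferInstance]
      (fun ω => (Z ω, X ω)) := Measurable.of_comap_le le_rfl
  -- the sets
  set s : Set Ω := {ω | R ω = true} with hs_def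
  have hs : MeasurableSet s := hR (measurableSet_singleton true)
  have hsc : sᶜ = {ω | R ω = false} := by
    ext ω; simp [hs_def, Bool.not_eq_true]
  -- coordinatewise
  have key : ∀ i : Fin k, ∫ ω, c ω * G (X ω, Z ω) i ∂P = 0 := by
    intro i
    have hGi : Measurable (fun p : 𝒳 × Bool => G p i) :=
      ((EuclideanSpace.proj i :
        EuclideanSpace ℝ (Fin k) →L[ℝ] ℝ).continuous.measurable).comp hG
    have hFi_int : Integrable (fun ω => c ω * G (X ω, Z ω) i) P := by
      have := ((EuclideanSpace.proj i :
        EuclideanSpace ℝ (Fin k) →L[ℝ] ℝ)).integrable_comp hint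
      exact this
    rw [← integral_add_compl hs hFi_int]
    -- first piece
    have hφ1 : StronglyMeasurable[MeasurableSpace.comap (fun ω => (Z ω, X ω)) inferInstance]
        (fun ω => Hfun (X ω) * tau (Z ω) (X ω) + wfun (X ω)) := by
      have hψ : Measurable (fun p : Bool × 𝒳 =>
          Hfun p.2 * tau p.1 p.2 + wfun p.2) :=
        ((hHfun_meas.comp measurable_snd).mul htau_meas).add
          (hwfun_meas.comp measurable_snd)
      exact (hψ.comp hpair).stronglyMeasurable
    have hg1 : StronglyMeasurable[MeasurableSpace.comap (fun ω => (Z ω, X ω)) inferInstance] (fun ω => G (X ω, Z ω) i) := by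
      have hψ : Measurable (fun p : Bool × 𝒳 => G (p.2, p.1) i) :=
        hGi.comp (measurable_snd.prodMk measurable_fst)
      exact (hψ.comp hpair).stronglyMeasurable
    have h1 : ∫ ω in s, c ω * G (X ω, Z ω) i ∂P = 0 := by
      rw [setIntegral_congr_fun hs (g := fun ω =>
          (Y ω - (Hfun (X ω) * tau (Z ω) (X ω) + wfun (X ω))) * G (X ω, Z ω) i)
        (fun ω hω => by
          have hRω : R ω = true := hω
          simp only [hc, hRω, if_true]
          ring)]
      refine cond_piece P s hs hm hφ1 hg1 hYint hout ?_
      refine (hFi_int.integrableOn).congr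
        ((ae_restrict_iff' hs).mpr (Eventually.of_forall fun ω hω => ?_))
      have hRω : R ω = true := hω
      simp only [hc, hRω, if_true]
      ring
    -- second piece
    have hφ2 : StronglyMeasurable[MeasurableSpace.comap (fun ω => (Z ω, X ω)) inferInstance] (fun ω => tau (Z ω) (X ω)) :=
      (htau_meas.comp hpair).stronglyMeasurable
    have hg2 : StronglyMeasurable[MeasurableSpace.comap (fun ω => (Z ω, X ω)) inferInstance] (fun ω =>
        -(pibar (Z ω) (X ω) / (1 - pibar (Z ω) (X ω)) * Hfun (X ω) *
          G (X ω, Z ω) i)) := by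
      have hψ : Measurable (fun p : Bool × 𝒳 =>
          -(pibar p.1 p.2 / (1 - pibar p.1 p.2) * Hfun p.2 * G (p.2, p.1) i)) := by
        exact ((hpibar_meas.div (measurable_const.sub hpibar_meas)).mul
          (hHfun_meas.comp measurable_snd)).mul
          (hGi.comp (measurable_snd.prodMk measurable_fst)) |>.neg
      exact (hψ.comp hpair).stronglyMeasurable
    have hD_int : Integrable (fun ω => if D ω then (1:ℝ) else 0) P := by
      refine Integrable.mono' (integrable_const 1)
        (Measurable.ite (hD (measurableSet_singleton true)) measurable_const
          measurable_const).aestronglyMeasurable ?_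
      refine Eventually.of_forall fun ω => ?_
      by_cases h : D ω <;> simp [h]
    have h2 : ∫ ω in sᶜ, c ω * G (X ω, Z ω) i ∂P = 0 := by
      rw [setIntegral_congr_fun hs.compl (g := fun ω =>
          ((if D ω then (1:ℝ) else 0) - tau (Z ω) (X ω)) *
            (-(pibar (Z ω) (X ω) / (1 - pibar (Z ω) (X ω)) * Hfun (X ω) *
              G (X ω, Z ω) i)))
        (fun ω hω => by
          have hRω : R ω = false := by
            have : ¬ (R ω = true) := hω
            simpa using this
          simp only [hc, hRω, if_neg (by simp : ¬(false = true))]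
          ring)]
      rw [hsc]
      refine cond_piece P _ (hsc ▸ hs.compl) hm hφ2 hg2 hD_int hpse.symm ?_
      refine (hFi_int.integrableOn).congr
        ((ae_restrict_iff' (hsc ▸ hs.compl)).mpr (Eventually.of_forall fun ω hω => ?_))
      have hRω : R ω = false := hω
      simp only [hc, hRω, if_neg (by simp : ¬(false = true))]
      ring
    rw [h1, h2, add_zero]
  -- assemble the vector statement
  refine PiLp.ext fun i => ?_
  have hcomm := ((EuclideanSpace.proj i :
      EuclideanSpace ℝ (Fin k) →L[ℝ] ℝ)).integral_comp_comm hint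
  show (EuclideanSpace.proj i) (∫ ω, c ω • G (X ω, Z ω) ∂P) = 0
  rw [← hcomm]
  exact key i
end
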